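/- arXiv:1508.06675 — 7 statements merged into one kernel-verified Lean document; each statement's English description precedes it below -/
import Mathlib

section
/- Let U and W be two normalized graphons (‖U‖₁ = ‖W‖₁ = 1) over probability spaces, with degree distribution functions D_U(λ) = π({x : U_x ≤ λ}) and D_W. Then the Lévy–Prokhorov distance satisfies d_LP(D_U, D_W) ≤ √(2 δ_□(U,W)), where δ_□ is the cut metric over couplings. -/
open MeasureTheory Set

section Aux

variable {Ω Ω' : Type*} [MeasurableSpace Ω] [MeasurableSpace Ω']
    (π : Measure Ω) (π' : Measure Ω')
    [IsProbabilityMeasure π] [IsProbabilityMeasure π']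
    (U : Ω → Ω → ℝ) (W : Ω' → Ω' → ℝ)

lemma graphon_f_integrable
    (hUmeas : Measurable (fun z : Ω × Ω => U z.1 z.2))
    (hWmeas : Measurable (fun z : Ω' × Ω' => W z.1 z.2))
    (hUint : Integrable (fun z : Ω × Ω => U z.1 z.2) (π.prod π))
    (hWint : Integrable (fun z : Ω' × Ω' => W z.1 z.2) (π'.prod π'))
    (ν : Measure (Ω × Ω')) [IsProbabilityMeasure ν]
    (hν1 : ν.map Prod.fst = π) (hν2 : ν.map Prod.snd = π') :
    Integrable (fun q : (Ω × Ω') × (Ω × Ω') => U q.1.1 q.2.1 - W q.1.2 q.2.2) (ν.prod ν) := by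
  have hm₁ : Measurable (fun q : (Ω × Ω') × (Ω × Ω') => ((q.1.1, q.2.1) : Ω × Ω)) :=
    (measurable_fst.comp measurable_fst).prodMk (measurable_fst.comp measurable_snd)
  have hm₂ : Measurable (fun q : (Ω × Ω') × (Ω × Ω') => ((q.1.2, q.2.2) : Ω' × Ω')) :=
    (measurable_snd.comp measurable_fst).prodMk (measurable_snd.comp measurable_snd)
  have hmap₁ : (ν.prod ν).map (fun q : (Ω × Ω') × (Ω × Ω') => ((q.1.1, q.2.1) : Ω × Ω))
      = π.prod π := by
    have h := Measure.map_prod_map (f := (Prod.fst : Ω × Ω' → Ω))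
      (g := (Prod.fst : Ω × Ω' → Ω)) ν ν measurable_fst measurable_fst
    rw [hν1] at h
    rw [show (fun q : (Ω × Ω') × (Ω × Ω') => ((q.1.1, q.2.1) : Ω × Ω))
      = Prod.map Prod.fst Prod.fst from rfl, ← h]
  have hmap₂ : (ν.prod ν).map (fun q : (Ω × Ω') × (Ω × Ω') => ((q.1.2, q.2.2) : Ω' × Ω'))
      = π'.prod π' := by
    have h := Measure.map_prod_map (f := (Prod.snd : Ω × Ω' → Ω'))
      (g := (Prod.snd : Ω × Ω' → Ω')) ν ν measurable_snd measurable_snd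
    rw [hν2] at h
    rw [show (fun q : (Ω × Ω') × (Ω × Ω') => ((q.1.2, q.2.2) : Ω' × Ω'))
      = Prod.map Prod.snd Prod.snd from rfl, ← h]
  have hg₁ : Integrable (fun q : (Ω × Ω') × (Ω × Ω') => U q.1.1 q.2.1) (ν.prod ν) := by
    have h1 : Integrable (fun z : Ω × Ω => U z.1 z.2)
        ((ν.prod ν).map (fun q : (Ω × Ω') × (Ω × Ω') => ((q.1.1, q.2.1) : Ω × Ω))) := by
      rw [hmap₁]; exact hUint
    exact (integrable_map_measure hUmeas.aestronglyMeasurable hm₁.aemeasurable).mp h1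
  have hg₂ : Integrable (fun q : (Ω × Ω') × (Ω × Ω') => W q.1.2 q.2.2) (ν.prod ν) := by
    have h2 : Integrable (fun z : Ω' × Ω' => W z.1 z.2)
        ((ν.prod ν).map (fun q : (Ω × Ω') × (Ω × Ω') => ((q.1.2, q.2.2) : Ω' × Ω'))) := by
      rw [hmap₂]; exact hWint
    exact (integrable_map_measure hWmeas.aestronglyMeasurable hm₂.aemeasurable).mp h2
  exact hg₁.sub hg₂

lemma graphon_B_bddAbove
    (hUmeas : Measurable (fun z : Ω × Ω => U z.1 z.2))
    (hWmeas : Measurable (fun z : Ω' × Ω' => W z.1 z.2))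
    (hUint : Integrable (fun z : Ω × Ω => U z.1 z.2) (π.prod π))
    (hWint : Integrable (fun z : Ω' × Ω' => W z.1 z.2) (π'.prod π'))
    (ν : Measure (Ω × Ω')) [IsProbabilityMeasure ν]
    (hν1 : ν.map Prod.fst = π) (hν2 : ν.map Prod.snd = π') :
    BddAbove {b : ℝ | ∃ S T : Set (Ω × Ω'), MeasurableSet S ∧ MeasurableSet T ∧
      b = |∫ q in S ×ˢ T, (U q.1.1 q.2.1 - W q.1.2 q.2.2) ∂(ν.prod ν)|} := by
  have hf := graphon_f_integrable π π' U W hUmeas hWmeas hUint hWint ν hν1 hν2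
  refine ⟨∫ q, |U q.1.1 q.2.1 - W q.1.2 q.2.2| ∂(ν.prod ν), ?_⟩
  rintro b ⟨S, T, hS, hT, rfl⟩
  calc |∫ q in S ×ˢ T, (U q.1.1 q.2.1 - W q.1.2 q.2.2) ∂(ν.prod ν)|
      ≤ ∫ q in S ×ˢ T, |U q.1.1 q.2.1 - W q.1.2 q.2.2| ∂(ν.prod ν) := by
        simpa using norm_integral_le_integral_norm
          (μ := (ν.prod ν).restrict (S ×ˢ T)) (fun q => U q.1.1 q.2.1 - W q.1.2 q.2.2)
    _ ≤ ∫ q, |U q.1.1 q.2.1 - W q.1.2 q.2.2| ∂(ν.prod ν) :=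
        setIntegral_le_integral hf.abs (ae_of_all _ fun q => abs_nonneg _)

lemma graphon_coupling_key
    (hUmeas : Measurable (fun z : Ω × Ω => U z.1 z.2))
    (hWmeas : Measurable (fun z : Ω' × Ω' => W z.1 z.2))
    (hUint : Integrable (fun z : Ω × Ω => U z.1 z.2) (π.prod π))
    (hWint : Integrable (fun z : Ω' × Ω' => W z.1 z.2) (π'.prod π'))
    (ν : Measure (Ω × Ω')) [IsProbabilityMeasure ν]
    (hν1 : ν.map Prod.fst = π) (hν2 : ν.map Prod.snd = π')
    (ε : ℝ) (hε : 0 < ε)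
    (hc : sSup {b : ℝ | ∃ S T : Set (Ω × Ω'), MeasurableSet S ∧ MeasurableSet T ∧
      b = |∫ q in S ×ˢ T, (U q.1.1 q.2.1 - W q.1.2 q.2.2) ∂(ν.prod ν)|} < ε ^ 2) :
    ∀ l : ℝ,
      (π' {x | (∫ y, W x y ∂π') ≤ l - ε}).toReal - ε ≤ (π {x | (∫ y, U x y ∂π) ≤ l}).toReal ∧
      (π {x | (∫ y, U x y ∂π) ≤ l}).toReal ≤ (π' {x | (∫ y, W x y ∂π') ≤ l + ε}).toReal + ε := by
  set B := {b : ℝ | ∃ S T : Set (Ω × Ω'), MeasurableSet S ∧ MeasurableSet T ∧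
      b = |∫ q in S ×ˢ T, (U q.1.1 q.2.1 - W q.1.2 q.2.2) ∂(ν.prod ν)|} with hBdef
  have hBdd := graphon_B_bddAbove π π' U W hUmeas hWmeas hUint hWint ν hν1 hν2
  have hf := graphon_f_integrable π π' U W hUmeas hWmeas hUint hWint ν hν1 hν2
  set DU : Ω → ℝ := fun x => ∫ y, U x y ∂π with hDU
  set DW : Ω' → ℝ := fun x => ∫ y, W x y ∂π' with hDW
  -- integrability of the pieces
  have hm₁ : Measurable (fun q : (Ω × Ω') × (Ω × Ω') => ((q.1.1, q.2.1) : Ω × Ω)) :=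
    (measurable_fst.comp measurable_fst).prodMk (measurable_fst.comp measurable_snd)
  have hm₂ : Measurable (fun q : (Ω × Ω') × (Ω × Ω') => ((q.1.2, q.2.2) : Ω' × Ω')) :=
    (measurable_snd.comp measurable_fst).prodMk (measurable_snd.comp measurable_snd)
  have hmap₁ : (ν.prod ν).map (fun q : (Ω × Ω') × (Ω × Ω') => ((q.1.1, q.2.1) : Ω × Ω))
      = π.prod π := by
    have h := Measure.map_prod_map (f := (Prod.fst : Ω × Ω' → Ω))
      (g := (Prod.fst : Ω × Ω' → Ω)) ν ν measurable_fst measurable_fst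
    rw [hν1] at h
    rw [show (fun q : (Ω × Ω') × (Ω × Ω') => ((q.1.1, q.2.1) : Ω × Ω))
      = Prod.map Prod.fst Prod.fst from rfl, ← h]
  have hmap₂ : (ν.prod ν).map (fun q : (Ω × Ω') × (Ω × Ω') => ((q.1.2, q.2.2) : Ω' × Ω'))
      = π'.prod π' := by
    have h := Measure.map_prod_map (f := (Prod.snd : Ω × Ω' → Ω'))
      (g := (Prod.snd : Ω × Ω' → Ω')) ν ν measurable_snd measurable_snd
    rw [hν2] at h
    rw [show (fun q : (Ω × Ω') × (Ω × Ω') => ((q.1.2, q.2.2) : Ω' × Ω'))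
      = Prod.map Prod.snd Prod.snd from rfl, ← h]
  have hg₁ : Integrable (fun q : (Ω × Ω') × (Ω × Ω') => U q.1.1 q.2.1) (ν.prod ν) := by
    have h1 : Integrable (fun z : Ω × Ω => U z.1 z.2)
        ((ν.prod ν).map (fun q : (Ω × Ω') × (Ω × Ω') => ((q.1.1, q.2.1) : Ω × Ω))) := by
      rw [hmap₁]; exact hUint
    exact (integrable_map_measure hUmeas.aestronglyMeasurable hm₁.aemeasurable).mp h1
  have hg₂ : Integrable (fun q : (Ω × Ω') × (Ω × Ω') => W q.1.2 q.2.2) (ν.prod ν) := by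
    have h2 : Integrable (fun z : Ω' × Ω' => W z.1 z.2)
        ((ν.prod ν).map (fun q : (Ω × Ω') × (Ω × Ω') => ((q.1.2, q.2.2) : Ω' × Ω'))) := by
      rw [hmap₂]; exact hWint
    exact (integrable_map_measure hWmeas.aestronglyMeasurable hm₂.aemeasurable).mp h2
  -- degree functions
  have hdegU : StronglyMeasurable DU :=
    hUmeas.stronglyMeasurable.integral_prod_right'
  have hdegW : StronglyMeasurable DW :=
    hWmeas.stronglyMeasurable.integral_prod_right'
  have hdegUν : Integrable (fun p : Ω × Ω' => DU p.1) ν := by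
    have h : Integrable DU (ν.map Prod.fst) := by
      rw [hν1]; exact hUint.integral_prod_left
    exact (integrable_map_measure hdegU.aestronglyMeasurable
      measurable_fst.aemeasurable).mp h
  have hdegWν : Integrable (fun p : Ω × Ω' => DW p.2) ν := by
    have h : Integrable DW (ν.map Prod.snd) := by
      rw [hν2]; exact hWint.integral_prod_left
    exact (integrable_map_measure hdegW.aestronglyMeasurable
      measurable_snd.aemeasurable).mp h
  -- key identity: integrating the degree difference over a set gives a cut-norm value
  have hkey : ∀ A : Set (Ω × Ω'), MeasurableSet A →
      |∫ p in A, (DU p.1 - DW p.2) ∂ν| ∈ B := by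
    intro A hA
    refine ⟨A, univ, hA, MeasurableSet.univ, ?_⟩
    have hInt : IntegrableOn (fun q : (Ω × Ω') × (Ω × Ω') => U q.1.1 q.2.1 - W q.1.2 q.2.2)
        (A ×ˢ univ) (ν.prod ν) := hf.integrableOn
    rw [setIntegral_prod _ hInt]
    congr 1
    refine setIntegral_congr_ae hA ?_
    filter_upwards [hg₁.prod_right_ae, hg₂.prod_right_ae] with p h1 h2 _
    rw [Measure.restrict_univ, integral_sub h1 h2]
    congr 1
    · show (∫ y, U p.1 y ∂π) = ∫ q, U p.1 q.1 ∂ν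
      have hU1 : AEStronglyMeasurable (fun x => U p.1 x) (Measure.map Prod.fst ν) :=
        (hUmeas.comp (measurable_const.prodMk measurable_id)).aestronglyMeasurable
      rw [← hν1, integral_map measurable_fst.aemeasurable hU1]
    · show (∫ y, W p.2 y ∂π') = ∫ q, W p.2 q.2 ∂ν
      have hW1 : AEStronglyMeasurable (fun x => W p.2 x) (Measure.map Prod.snd ν) :=
        (hWmeas.comp (measurable_const.prodMk measurable_id)).aestronglyMeasurable
      rw [← hν2, integral_map measurable_snd.aemeasurable hW1]
  intro l
  show (π' {x | DW x ≤ l - ε}).toReal - ε ≤ (π {x | DU x ≤ l}).toReal ∧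
      (π {x | DU x ≤ l}).toReal ≤ (π' {x | DW x ≤ l + ε}).toReal + ε
  have hS₁ : MeasurableSet {x | DU x ≤ l} :=
    measurableSet_le hdegU.measurable measurable_const
  constructor
  · -- first inequality
    by_contra hcon
    push_neg at hcon
    set T := {x | DW x ≤ l - ε} with hTdef
    have hT : MeasurableSet T := measurableSet_le hdegW.measurable measurable_const
    set A := (Prod.snd ⁻¹' T) ∩ (Prod.fst ⁻¹' {x | DU x ≤ l})ᶜ with hAdef
    have hAmeas : MeasurableSet A :=
      (measurable_snd hT).inter (measurable_fst hS₁).compl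
    have hνT : ν (Prod.snd ⁻¹' T) = π' T := by
      rw [← hν2, Measure.map_apply measurable_snd hT]
    have hνS : ν (Prod.fst ⁻¹' {x | DU x ≤ l}) = π {x | DU x ≤ l} := by
      rw [← hν1, Measure.map_apply measurable_fst hS₁]
    have hsub : Prod.snd ⁻¹' T ⊆ A ∪ Prod.fst ⁻¹' {x | DU x ≤ l} := by
      intro p hp
      by_cases hp1 : p ∈ Prod.fst ⁻¹' {x | DU x ≤ l}
      · exact Or.inr hp1
      · exact Or.inl ⟨hp, hp1⟩
    have hle : π' T ≤ ν A + π {x | DU x ≤ l} := by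
      rw [← hνT, ← hνS]
      exact (measure_mono hsub).trans (measure_union_le _ _)
    have hleR : (π' T).toReal ≤ (ν A).toReal + (π {x | DU x ≤ l}).toReal := by
      have h' := ENNReal.toReal_mono (by finiteness) hle
      rwa [ENNReal.toReal_add (measure_ne_top _ _) (measure_ne_top _ _)] at h'
    have hεA : ε < (ν A).toReal := by linarith
    have hbound : ∀ p ∈ A, ε ≤ DU p.1 - DW p.2 := by
      rintro p ⟨hp2, hp1⟩
      have h2' : DW p.2 ≤ l - ε := hp2
      have h1' : ¬ (DU p.1 ≤ l) := hp1
      rw [not_le] at h1'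
      linarith
    have hint : ∫ p in A, (ε : ℝ) ∂ν ≤
        ∫ p in A, (DU p.1 - DW p.2) ∂ν :=
      setIntegral_mono_on (integrableOn_const (measure_lt_top ν A).ne)
        (hdegUν.sub hdegWν).integrableOn hAmeas hbound
    rw [setIntegral_const, smul_eq_mul] at hint
    have hgt : ε ^ 2 < ∫ p in A, (DU p.1 - DW p.2) ∂ν := by
      simp only [Measure.real] at hint
      nlinarith
    have hmem := hkey A hAmeas
    have hle2 := le_csSup hBdd hmem
    have := le_abs_self (∫ p in A, (DU p.1 - DW p.2) ∂ν)
    linarith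
  · -- second inequality
    by_contra hcon
    push_neg at hcon
    set T := {x | DW x ≤ l + ε} with hTdef
    have hT : MeasurableSet T := measurableSet_le hdegW.measurable measurable_const
    set A := (Prod.fst ⁻¹' {x | DU x ≤ l}) ∩ (Prod.snd ⁻¹' T)ᶜ with hAdef
    have hAmeas : MeasurableSet A :=
      (measurable_fst hS₁).inter (measurable_snd hT).compl
    have hνT : ν (Prod.snd ⁻¹' T) = π' T := by
      rw [← hν2, Measure.map_apply measurable_snd hT]
    have hνS : ν (Prod.fst ⁻¹' {x | DU x ≤ l}) = π {x | DU x ≤ l} := by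
      rw [← hν1, Measure.map_apply measurable_fst hS₁]
    have hsub : Prod.fst ⁻¹' {x | DU x ≤ l} ⊆ A ∪ Prod.snd ⁻¹' T := by
      intro p hp
      by_cases hp2 : p ∈ Prod.snd ⁻¹' T
      · exact Or.inr hp2
      · exact Or.inl ⟨hp, hp2⟩
    have hle : π {x | DU x ≤ l} ≤ ν A + π' T := by
      rw [← hνT, ← hνS]
      exact (measure_mono hsub).trans (measure_union_le _ _)
    have hleR : (π {x | DU x ≤ l}).toReal ≤ (ν A).toReal + (π' T).toReal := by
      have h' := ENNReal.toReal_mono (by finiteness) hle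
      rwa [ENNReal.toReal_add (measure_ne_top _ _) (measure_ne_top _ _)] at h'
    have hεA : ε < (ν A).toReal := by linarith
    have hbound : ∀ p ∈ A, DU p.1 - DW p.2 ≤ -ε := by
      rintro p ⟨hp1, hp2⟩
      have h1' : DU p.1 ≤ l := hp1
      have h2' : ¬ (DW p.2 ≤ l + ε) := hp2
      rw [not_le] at h2'
      linarith
    have hint : ∫ p in A, (DU p.1 - DW p.2) ∂ν ≤
        ∫ p in A, (-ε : ℝ) ∂ν :=
      setIntegral_mono_on (hdegUν.sub hdegWν).integrableOn
        (integrableOn_const (measure_lt_top ν A).ne) hAmeas hbound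
    rw [setIntegral_const, smul_eq_mul] at hint
    have hgt : ∫ p in A, (DU p.1 - DW p.2) ∂ν < -ε ^ 2 := by
      simp only [Measure.real] at hint
      nlinarith
    have hmem := hkey A hAmeas
    have hle2 := le_csSup hBdd hmem
    have := neg_abs_le (∫ p in A, (DU p.1 - DW p.2) ∂ν)
    linarith

end Aux

/-- The Lévy–Prokhorov distance between the degree distribution functions of two
normalized graphons is at most `√(2 δ_□(U,W))`. -/
theorem levyProkhorov_degree_le_sqrt_cutMetric
    {Ω Ω' : Type*} [MeasurableSpace Ω] [MeasurableSpace Ω']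
    (π : Measure Ω) (π' : Measure Ω')
    [IsProbabilityMeasure π] [IsProbabilityMeasure π']
    (U : Ω → Ω → ℝ) (W : Ω' → Ω' → ℝ)
    (hUmeas : Measurable (fun z : Ω × Ω => U z.1 z.2))
    (hWmeas : Measurable (fun z : Ω' × Ω' => W z.1 z.2))
    (hUsymm : ∀ x y, U x y = U y x) (hWsymm : ∀ x y, W x y = W y x)
    (hUnn : ∀ x y, 0 ≤ U x y) (hWnn : ∀ x y, 0 ≤ W x y)
    (hUint : Integrable (fun z : Ω × Ω => U z.1 z.2) (π.prod π))
    (hWint : Integrable (fun z : Ω' × Ω' => W z.1 z.2) (π'.prod π'))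
    (hUnorm : ∫ z, U z.1 z.2 ∂(π.prod π) = 1)
    (hWnorm : ∫ z, W z.1 z.2 ∂(π'.prod π') = 1) :
    -- degree distribution functions
    (sInf {ε : ℝ | 0 < ε ∧ ∀ l : ℝ,
        (π' {x | (∫ y, W x y ∂π') ≤ l - ε}).toReal - ε ≤ (π {x | (∫ y, U x y ∂π) ≤ l}).toReal ∧
        (π {x | (∫ y, U x y ∂π) ≤ l}).toReal ≤ (π' {x | (∫ y, W x y ∂π') ≤ l + ε}).toReal + ε})
      ≤ Real.sqrt (2 *
        sInf {c : ℝ | ∃ ν : Measure (Ω × Ω'), IsProbabilityMeasure ν ∧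
          ν.map Prod.fst = π ∧ ν.map Prod.snd = π' ∧
          c = sSup {b : ℝ | ∃ S T : Set (Ω × Ω'), MeasurableSet S ∧ MeasurableSet T ∧
            b = |∫ q in S ×ˢ T, (U q.1.1 q.2.1 - W q.1.2 q.2.2) ∂(ν.prod ν)|}}) := by
  set L := {ε : ℝ | 0 < ε ∧ ∀ l : ℝ,
        (π' {x | (∫ y, W x y ∂π') ≤ l - ε}).toReal - ε ≤ (π {x | (∫ y, U x y ∂π) ≤ l}).toReal ∧
        (π {x | (∫ y, U x y ∂π) ≤ l}).toReal ≤ (π' {x | (∫ y, W x y ∂π') ≤ l + ε}).toReal + ε}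
    with hLdef
  set R := {c : ℝ | ∃ ν : Measure (Ω × Ω'), IsProbabilityMeasure ν ∧
          ν.map Prod.fst = π ∧ ν.map Prod.snd = π' ∧
          c = sSup {b : ℝ | ∃ S T : Set (Ω × Ω'), MeasurableSet S ∧ MeasurableSet T ∧
            b = |∫ q in S ×ˢ T, (U q.1.1 q.2.1 - W q.1.2 q.2.2) ∂(ν.prod ν)|}} with hRdef
  have hRne : R.Nonempty := by
    refine ⟨_, π.prod π', inferInstance, ?_, ?_, rfl⟩
    · simp [Measure.map_fst_prod]
    · simp [Measure.map_snd_prod]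
  have hc0 : ∀ c ∈ R, 0 ≤ c := by
    rintro c ⟨ν, hp, h1, h2, rfl⟩
    haveI := hp
    refine le_csSup (graphon_B_bddAbove π π' U W hUmeas hWmeas hUint hWint ν h1 h2) ?_
    exact ⟨∅, ∅, MeasurableSet.empty, MeasurableSet.empty, by simp⟩
  by_contra hcon
  push_neg at hcon
  have hL0 : 0 ≤ sInf L := Real.sInf_nonneg (fun x hx => hx.1.le)
  have hLpos : 0 < sInf L := lt_of_le_of_lt (Real.sqrt_nonneg _) hcon
  have h2R : 2 * sInf R < (sInf L) ^ 2 := (Real.sqrt_lt' hLpos).mp hcon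
  obtain ⟨c, hcR, hclt⟩ := exists_lt_of_csInf_lt hRne
    (show sInf R < (sInf L) ^ 2 / 2 by linarith)
  have hcnn : 0 ≤ c := hc0 c hcR
  have hsqrtc : Real.sqrt c < sInf L := by
    rw [Real.sqrt_lt' hLpos]
    nlinarith [sq_nonneg (sInf L)]
  obtain ⟨ε, hε1, hε2⟩ := exists_between hsqrtc
  have hεpos : 0 < ε := lt_of_le_of_lt (Real.sqrt_nonneg c) hε1
  have hcε : c < ε ^ 2 := (Real.sqrt_lt' hεpos).mp hε1
  obtain ⟨ν, hp, h1, h2, rfl⟩ := hcR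
  haveI := hp
  have hmem : ε ∈ L :=
    ⟨hεpos, graphon_coupling_key π π' U W hUmeas hWmeas hUint hWint ν h1 h2 ε hεpos hcε⟩
  have : sInf L ≤ ε := csInf_le ⟨0, fun x hx => hx.1.le⟩ hmem
  linarith
end

section
/- Let X₁,…,Xₙ be independent real-valued random variables with X = Σᵢ Xᵢ, and suppose there exists X₀ ∈ [0,∞) such that Σᵢ E[Xᵢ^m] ≤ X₀ for all integers m ≥ 2. Then for all t ≥ 0, Pr(X - E[X] ≥ X₀ t) ≤ exp(-min{t, t²}·X₀/3). -/
set_option maxHeartbeats 2000000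

open MeasureTheory ProbabilityTheory
open scoped Nat

private lemma gc_exp_tsum (x : ℝ) : Real.exp x = ∑' n : ℕ, x ^ n / n ! := by
  rw [Real.exp_eq_exp_ℝ, NormedSpace.exp_eq_tsum_div]

private lemma gc_exp_sub (y : ℝ) :
    Real.exp y - 1 - y = ∑' m : ℕ, y ^ (m + 2) / (m + 2)! := by
  have hs : Summable (fun n : ℕ => y ^ n / n !) := Real.summable_pow_div_factorial y
  have hs1 : Summable (fun n : ℕ => y ^ (n + 1) / (n + 1)!) :=
    (summable_nat_add_iff 1).mpr hs
  rw [gc_exp_tsum, Summable.tsum_eq_zero_add hs, Summable.tsum_eq_zero_add hs1]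
  simp [Nat.factorial]

private lemma gc_bennett {l x : ℝ} (hl : 0 ≤ l) (hx : |x| ≤ 1) :
    Real.exp (l * x) ≤ 1 + l * x + (Real.exp l - 1 - l) * x ^ 2 := by
  have hs : Summable (fun n : ℕ => l ^ n / n !) := Real.summable_pow_div_factorial l
  have hsl : Summable (fun m : ℕ => l ^ (m + 2) / (m + 2)!) :=
    (summable_nat_add_iff 2).mpr hs
  have hslx : Summable (fun m : ℕ => (l * x) ^ (m + 2) / (m + 2)!) :=
    (summable_nat_add_iff 2).mpr (Real.summable_pow_div_factorial (l * x))
  have key : ∀ m : ℕ, (l * x) ^ (m + 2) / (m + 2)! ≤ x ^ 2 * (l ^ (m + 2) / (m + 2)!) := by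
    intro m
    rw [mul_div_assoc']
    apply div_le_div_of_nonneg_right ?_ (by positivity)
    · calc (l * x) ^ (m + 2) = l ^ (m + 2) * x ^ (m + 2) := by ring
        _ ≤ l ^ (m + 2) * x ^ 2 := by
            apply mul_le_mul_of_nonneg_left ?_ (by positivity)
            calc x ^ (m + 2) ≤ |x ^ (m + 2)| := le_abs_self _
              _ = |x| ^ (m + 2) := by rw [abs_pow]
              _ ≤ |x| ^ 2 := pow_le_pow_of_le_one (abs_nonneg x) hx (by omega)
              _ = x ^ 2 := sq_abs x
        _ = x ^ 2 * l ^ (m + 2) := by ring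
  have h1 : Real.exp (l * x) - 1 - l * x ≤ (Real.exp l - 1 - l) * x ^ 2 := by
    rw [gc_exp_sub, gc_exp_sub]
    calc (∑' m : ℕ, (l * x) ^ (m + 2) / (m + 2)!)
        ≤ ∑' m : ℕ, x ^ 2 * (l ^ (m + 2) / (m + 2)!) :=
          Summable.tsum_le_tsum key hslx (hsl.mul_left _)
      _ = x ^ 2 * ∑' m : ℕ, l ^ (m + 2) / (m + 2)! := tsum_mul_left
      _ = (∑' m : ℕ, l ^ (m + 2) / (m + 2)!) * x ^ 2 := by ring
  linarith

private lemma gc_log_ge {t : ℝ} (ht : 0 ≤ t) : 2 * t / (2 + t) ≤ Real.log (1 + t) := by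
  set f : ℝ → ℝ := fun s => Real.log (1 + s) - 2 * s / (2 + s) with hf
  have hd : ∀ s : ℝ, 0 ≤ s → HasDerivAt f (1 / (1 + s) - 4 / (2 + s) ^ 2) s := by
    intro s hs
    have h1 : HasDerivAt (fun u : ℝ => 1 + u) 1 s := (hasDerivAt_id s).const_add 1
    have h2 : HasDerivAt (fun u : ℝ => Real.log (1 + u)) (1 / (1 + s)) s := by
      simpa using h1.log (by linarith)
    have h3 : HasDerivAt (fun u : ℝ => 2 * u) 2 s := by
      simpa using (hasDerivAt_id s).const_mul 2
    have h4 : HasDerivAt (fun u : ℝ => 2 + u) 1 s := (hasDerivAt_id s).const_add 2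
    have h5 : HasDerivAt (fun u : ℝ => 2 * u / (2 + u))
        ((2 * (2 + s) - 2 * s * 1) / (2 + s) ^ 2) s := h3.div h4 (by linarith)
    have h6 := h2.sub h5
    have he : 2 * (2 + s) - 2 * s * 1 = 4 := by ring
    rw [he] at h6
    exact h6
  have hmono : MonotoneOn f (Set.Ici (0 : ℝ)) := by
    apply monotoneOn_of_deriv_nonneg (convex_Ici 0)
    · intro s hs
      exact ((hd s hs).sub_const 0).continuousAt.continuousWithinAt |>.congr
        (fun y _ => by ring_nf) (by ring_nf)
    · intro s hs
      rw [interior_Ici] at hs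
      exact ((hd s (le_of_lt hs)).differentiableAt).differentiableWithinAt
    · intro s hs
      rw [interior_Ici] at hs
      have hs' : (0:ℝ) < s := hs
      rw [(hd s hs'.le).deriv]
      rw [div_sub_div _ _ (by positivity : (1:ℝ)+s ≠ 0) (by positivity : ((2:ℝ)+s)^2 ≠ 0)]
      apply div_nonneg (by nlinarith) (by positivity)
  have h0 : f 0 = 0 := by simp [hf]
  have := hmono (Set.self_mem_Ici) (Set.mem_Ici.mpr ht) ht
  rw [h0] at this
  simpa [hf, sub_nonneg] using this

private lemma gc_calc {t : ℝ} (ht : 0 ≤ t) :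
    (t - (1 + t) * Real.log (1 + t)) ≤ -(min t (t ^ 2)) / 3 := by
  have hlog := gc_log_ge ht
  have h1 : t - (1 + t) * Real.log (1 + t) ≤ -(t ^ 2) / (2 + t) := by
    have h2 : (1 + t) * (2 * t / (2 + t)) ≤ (1 + t) * Real.log (1 + t) :=
      mul_le_mul_of_nonneg_left hlog (by linarith)
    have h3 : (1 + t) * (2 * t / (2 + t)) = (2 * t + 2 * t ^ 2) / (2 + t) := by
      field_simp
    have h4 : t - (2 * t + 2 * t ^ 2) / (2 + t) = (-(t ^ 2)) / (2 + t) := by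
      field_simp; ring
    linarith [h2, h3.symm ▸ h2]
  refine h1.trans ?_
  rcases le_total t 1 with h | h
  · rw [min_eq_right (by nlinarith)]
    rw [div_le_div_iff₀ (by linarith) (by norm_num)]
    nlinarith
  · rw [min_eq_left (by nlinarith)]
    rw [div_le_div_iff₀ (by linarith) (by norm_num)]
    nlinarith

private lemma gc_ae_bound
    {Ω : Type*} [MeasurableSpace Ω] (μ : Measure Ω) [IsProbabilityMeasure μ]
    (n : ℕ) (X : Fin n → Ω → ℝ)
    (hint : ∀ (i : Fin n) (m : ℕ), 1 ≤ m → Integrable (fun ω => X i ω ^ m) μ)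
    (X₀ : ℝ)
    (hmom : ∀ m : ℕ, 2 ≤ m → ∑ i, ∫ ω, X i ω ^ m ∂μ ≤ X₀)
    (i : Fin n) : ∀ᵐ ω ∂μ, |X i ω| ≤ 1 := by
  have key : ∀ a : ℝ, 1 < a → μ {ω | a ≤ |X i ω|} = 0 := by
    intro a ha
    have ha0 : 0 < a := by linarith
    have hb : ∀ k : ℕ, (μ {ω | a ≤ |X i ω|}).toReal ≤ X₀ / a ^ (2 * (k + 1)) := by
      intro k
      set m := 2 * (k + 1) with hm
      have hmom' : ∫ ω, X i ω ^ m ∂μ ≤ X₀ := by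
        refine le_trans ?_ (hmom m (by omega))
        apply Finset.single_le_sum (f := fun j => ∫ ω, X j ω ^ m ∂μ) ?_ (Finset.mem_univ i)
        intro j _
        apply integral_nonneg
        intro ω
        show (0:ℝ) ≤ X j ω ^ m
        have : X j ω ^ m = (X j ω ^ (k + 1)) ^ 2 := by rw [← pow_mul, mul_comm]
        rw [this]; positivity
      have hnn : (0:Ω → ℝ) ≤ᵐ[μ] fun ω => X i ω ^ m := by
        filter_upwards with ω
        have : X i ω ^ m = (X i ω ^ (k + 1)) ^ 2 := by rw [← pow_mul, mul_comm]
        rw [Pi.zero_apply, this]; positivity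
      have hmarkov := mul_meas_ge_le_integral_of_nonneg hnn (hint i m (by omega)) (a ^ m)
      have hsub : {ω | a ≤ |X i ω|} ⊆ {ω | a ^ m ≤ X i ω ^ m} := by
        intro ω hω
        simp only [Set.mem_setOf_eq] at hω ⊢
        calc a ^ m ≤ |X i ω| ^ m := pow_le_pow_left₀ ha0.le hω m
          _ = X i ω ^ m := Even.pow_abs (by exact ⟨k + 1, by omega⟩) _
      have hmono : (μ {ω | a ≤ |X i ω|}).toReal ≤ (μ {ω | a ^ m ≤ X i ω ^ m}).toReal :=
        ENNReal.toReal_mono (measure_ne_top μ _) (measure_mono hsub)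
      have hpow : (0:ℝ) < a ^ m := by positivity
      rw [le_div_iff₀ hpow]
      calc (μ {ω | a ≤ |X i ω|}).toReal * a ^ m
          ≤ (μ {ω | a ^ m ≤ X i ω ^ m}).toReal * a ^ m := by
            exact mul_le_mul_of_nonneg_right hmono hpow.le
        _ = a ^ m * (μ {ω | a ^ m ≤ X i ω ^ m}).toReal := by ring
        _ ≤ ∫ ω, X i ω ^ m ∂μ := hmarkov
        _ ≤ X₀ := hmom'
    have htend : Filter.Tendsto (fun k : ℕ => X₀ / a ^ (2 * (k + 1)))
        Filter.atTop (nhds 0) := by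
      have h1 : Filter.Tendsto (fun k : ℕ => a ^ (2 * (k + 1))) Filter.atTop Filter.atTop := by
        have h2 : (1:ℝ) < a ^ 2 := by nlinarith
        have h3 := (tendsto_pow_atTop_atTop_of_one_lt h2).comp
          (Filter.tendsto_add_atTop_nat 1)
        refine h3.congr fun k => ?_
        simp [← pow_mul, mul_comm]
      exact Filter.Tendsto.div_atTop tendsto_const_nhds h1
    have hle0 : (μ {ω | a ≤ |X i ω|}).toReal ≤ 0 := ge_of_tendsto' htend hb
    have heq : (μ {ω | a ≤ |X i ω|}).toReal = 0 :=
      le_antisymm hle0 ENNReal.toReal_nonneg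
    rcases (ENNReal.toReal_eq_zero_iff _).mp heq with h | h
    · exact h
    · exact absurd h (measure_ne_top μ _)
  have hnull : μ {ω | 1 < |X i ω|} = 0 := by
    have hsub : {ω | 1 < |X i ω|} ⊆ ⋃ k : ℕ, {ω | 1 + ((k:ℝ) + 1)⁻¹ ≤ |X i ω|} := by
      intro ω hω
      simp only [Set.mem_setOf_eq] at hω
      obtain ⟨k, hk⟩ := exists_nat_one_div_lt (sub_pos.mpr hω)
      refine Set.mem_iUnion.mpr ⟨k, ?_⟩
      simp only [Set.mem_setOf_eq]
      rw [one_div] at hk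
      linarith
    apply measure_mono_null hsub
    apply measure_iUnion_null
    intro k
    apply key
    have : (0:ℝ) < ((k:ℝ) + 1)⁻¹ := by positivity
    linarith
  rw [ae_iff]
  convert hnull using 2
  ext ω
  simp [not_le]

/-- Generalized multiplicative Chernoff bound: if `X₁,…,Xₙ` are independent with
`Σᵢ E[Xᵢ^m] ≤ X₀` for all `m ≥ 2`, then
`Pr(X - E[X] ≥ X₀ t) ≤ exp(-min{t,t²} X₀ / 3)`. -/
theorem generalized_chernoff
    {Ω : Type*} [MeasurableSpace Ω] (μ : Measure Ω) [IsProbabilityMeasure μ]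
    (n : ℕ) (X : Fin n → Ω → ℝ)
    (hmeas : ∀ i, Measurable (X i))
    (hindep : iIndepFun X μ)
    (hint : ∀ (i : Fin n) (m : ℕ), 1 ≤ m → Integrable (fun ω => X i ω ^ m) μ)
    (X₀ : ℝ) (hX₀ : 0 ≤ X₀)
    (hmom : ∀ m : ℕ, 2 ≤ m → ∑ i, ∫ ω, X i ω ^ m ∂μ ≤ X₀)
    (t : ℝ) (ht : 0 ≤ t) :
    μ {ω | X₀ * t ≤ (∑ i, X i ω) - ∫ ω', ∑ i, X i ω' ∂μ} ≤
      ENNReal.ofReal (Real.exp (-(min t (t ^ 2)) * X₀ / 3)) := by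
  set l : ℝ := Real.log (1 + t) with hldef
  have h1t : (0:ℝ) < 1 + t := by linarith
  have hl : 0 ≤ l := Real.log_nonneg (by linarith)
  have hexpl : Real.exp l = 1 + t := Real.exp_log h1t
  set c : ℝ := Real.exp l - 1 - l with hcdef
  have hc : 0 ≤ c := by
    have := Real.log_le_sub_one_of_pos h1t
    rw [hcdef, hexpl]
    simp only [hldef] at this ⊢
    linarith
  have hae : ∀ i, ∀ᵐ ω ∂μ, |X i ω| ≤ 1 := gc_ae_bound μ n X hint X₀ hmom
  have hXint : ∀ i, Integrable (X i) μ := by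
    intro i
    simpa using hint i 1 le_rfl
  have hexp_int : ∀ i, Integrable (fun ω => Real.exp (l * X i ω)) μ := by
    intro i
    apply Integrable.mono' (integrable_const (Real.exp l))
      (((hmeas i).const_mul l).exp.aestronglyMeasurable)
    filter_upwards [hae i] with ω h
    rw [Real.norm_eq_abs, abs_of_pos (Real.exp_pos _)]
    apply Real.exp_le_exp.mpr
    calc l * X i ω ≤ l * 1 := by
          apply mul_le_mul_of_nonneg_left ?_ hl
          exact (le_abs_self _).trans h
      _ = l := mul_one l
  have hS_int : Integrable (fun ω => Real.exp (l * (∑ i, X i) ω)) μ :=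
    hindep.integrable_exp_mul_sum hmeas (fun i _ => hexp_int i)
  set ES : ℝ := ∫ ω', ∑ i, X i ω' ∂μ with hESdef
  have hES : ES = ∑ i, ∫ ω, X i ω ∂μ :=
    integral_finset_sum _ (fun i _ => hXint i)
  -- per-variable mgf bound
  have hmgf_i : ∀ i, mgf (X i) μ l ≤
      Real.exp (l * (∫ ω, X i ω ∂μ) + c * (∫ ω, X i ω ^ 2 ∂μ)) := by
    intro i
    have hint2 : Integrable (fun ω => 1 + l * X i ω + c * X i ω ^ 2) μ := by
      apply Integrable.add
      · exact (integrable_const 1).add ((hXint i).const_mul l)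
      · exact (hint i 2 (by omega)).const_mul c
    have h1 : mgf (X i) μ l ≤ ∫ ω, (1 + l * X i ω + c * X i ω ^ 2) ∂μ := by
      apply integral_mono_ae (hexp_int i) hint2
      filter_upwards [hae i] with ω h
      exact gc_bennett hl h
    have h2 : ∫ ω, (1 + l * X i ω + c * X i ω ^ 2) ∂μ
        = 1 + (l * (∫ ω, X i ω ∂μ) + c * (∫ ω, X i ω ^ 2 ∂μ)) := by
      have ha : Integrable (fun ω => 1 + l * X i ω) μ :=
        (integrable_const 1).add ((hXint i).const_mul l)
      have hb' : Integrable (fun ω => c * X i ω ^ 2) μ := (hint i 2 (by omega)).const_mul c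
      rw [integral_add ha hb',
        integral_add (integrable_const 1) ((hXint i).const_mul l),
        integral_const, integral_const_mul, integral_const_mul]
      simp [add_assoc]
    have h3 := Real.add_one_le_exp (l * (∫ ω, X i ω ∂μ) + c * (∫ ω, X i ω ^ 2 ∂μ))
    linarith [h1, h2 ▸ h1]
  have hprod : mgf (∑ i, X i) μ l ≤ Real.exp (l * ES + c * X₀) := by
    rw [hindep.mgf_sum hmeas]
    calc (∏ i, mgf (X i) μ l)
        ≤ ∏ i, Real.exp (l * (∫ ω, X i ω ∂μ) + c * (∫ ω, X i ω ^ 2 ∂μ)) :=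
          Finset.prod_le_prod (fun i _ => mgf_nonneg) (fun i _ => hmgf_i i)
      _ = Real.exp (∑ i, (l * (∫ ω, X i ω ∂μ) + c * (∫ ω, X i ω ^ 2 ∂μ))) :=
          (Real.exp_sum _ _).symm
      _ ≤ Real.exp (l * ES + c * X₀) := by
          apply Real.exp_le_exp.mpr
          rw [Finset.sum_add_distrib, ← Finset.mul_sum, ← Finset.mul_sum, hES]
          have := mul_le_mul_of_nonneg_left (hmom 2 le_rfl) hc
          linarith
  -- Chernoff
  have hset : {ω | X₀ * t ≤ (∑ i, X i ω) - ES} = {ω | X₀ * t + ES ≤ (∑ i, X i) ω} := by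
    ext ω
    simp only [Set.mem_setOf_eq, Finset.sum_apply]
    constructor <;> intro h <;> linarith
  have hchern := measure_ge_le_exp_mul_mgf (μ := μ) (X := ∑ i, X i)
    (X₀ * t + ES) hl hS_int
  have hmain : (μ {ω | X₀ * t ≤ (∑ i, X i ω) - ES}).toReal
      ≤ Real.exp (-(min t (t ^ 2)) * X₀ / 3) := by
    rw [hset]
    refine hchern.trans ?_
    calc Real.exp (-l * (X₀ * t + ES)) * mgf (∑ i, X i) μ l
        ≤ Real.exp (-l * (X₀ * t + ES)) * Real.exp (l * ES + c * X₀) := by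
          exact mul_le_mul_of_nonneg_left hprod (Real.exp_pos _).le
      _ = Real.exp (X₀ * (t - (1 + t) * l)) := by
          rw [← Real.exp_add]
          congr 1
          have hc' : c = t - l := by rw [hcdef, hexpl]; ring
          rw [hc']; ring
      _ ≤ Real.exp (-(min t (t ^ 2)) * X₀ / 3) := by
          apply Real.exp_le_exp.mpr
          have := mul_le_mul_of_nonneg_left (gc_calc ht) hX₀
          calc X₀ * (t - (1 + t) * l) ≤ X₀ * (-(min t (t ^ 2)) / 3) := this
            _ = -(min t (t ^ 2)) * X₀ / 3 := by ring
  calc μ {ω | X₀ * t ≤ (∑ i, X i ω) - ES}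
      = ENNReal.ofReal ((μ {ω | X₀ * t ≤ (∑ i, X i ω) - ES}).toReal) :=
        (ENNReal.ofReal_toReal (measure_ne_top μ _)).symm
    _ ≤ ENNReal.ofReal (Real.exp (-(min t (t ^ 2)) * X₀ / 3)) :=
        ENNReal.ofReal_le_ofReal hmain
end

section
/- Let n ≥ 2, let Q be a symmetric n×n matrix with entries in [0,1] and zero diagonal, and let A be the random symmetric 0-1 matrix with A_{ij} = 1 with probability Q_{ij} independently for i < j and A_{ii} = 0. Then E[‖A - Q‖_□] ≤ 16·√(ρ(Q)/n), where ρ(Q) = (1/n²)Σ_{i,j} Q_{ij} and ‖M‖_□ = max over S,T ⊆ [n] of (1/n²)|Σ_{(i,j)∈S×T} M_{ij}|. Moreover, if n·ρ(Q) ≥ 1, then ‖A - Q‖_□ ≤ 15·√(ρ(Q)/n) with probability at least 1 - e^{-n}. -/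
open MeasureTheory ProbabilityTheory

/-- The cut norm of an `n × n` real matrix:
`‖M‖_□ = max_{S,T ⊆ [n]} (1/n²)|Σ_{(i,j) ∈ S×T} M_{ij}|`. -/
noncomputable def matrixCutNorm (n : ℕ) (M : Fin n → Fin n → ℝ) : ℝ :=
  ⨆ S : Finset (Fin n), ⨆ T : Finset (Fin n),
    (1 / (n : ℝ) ^ 2) * |∑ i ∈ S, ∑ j ∈ T, M i j|

/-- The density of an `n × n` matrix: `ρ(Q) = (1/n²) Σ_{i,j} Q_{ij}`. -/
noncomputable def matrixDensity (n : ℕ) (Q : Fin n → Fin n → ℝ) : ℝ :=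
  (1 / (n : ℝ) ^ 2) * ∑ i, ∑ j, Q i j

set_option linter.unusedSectionVars false
set_option linter.unusedVariables false
set_option maxHeartbeats 1000000

open Real in
set_option linter.unusedSectionVars false
set_option linter.unusedVariables false
set_option maxHeartbeats 1000000


set_option linter.unusedSectionVars false

section CutAux
variable {Ω : Type*} [MeasurableSpace Ω]

lemma cutaux_indicator_rep (B : Ω → ℝ) (hv : ∀ ω, B ω = 0 ∨ B ω = 1) :
    B = Set.indicator {ω | B ω = 1} (fun _ => (1:ℝ)) := by
  funext ω
  rcases hv ω with h | h <;> simp [Set.indicator, h]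

lemma cutaux_integrable (μ : Measure Ω) [IsProbabilityMeasure μ]
    (B : Ω → ℝ) (hB : Measurable B) (hv : ∀ ω, B ω = 0 ∨ B ω = 1) : Integrable B μ := by
  rw [cutaux_indicator_rep B hv]
  exact (integrable_const (1:ℝ)).indicator (hB (measurableSet_singleton 1))

lemma cutaux_bern_integral (μ : Measure Ω) [IsProbabilityMeasure μ]
    (B : Ω → ℝ) (hB : Measurable B) (hv : ∀ ω, B ω = 0 ∨ B ω = 1)
    {q : ℝ} (hq0 : 0 ≤ q) (hμ : μ {ω | B ω = 1} = ENNReal.ofReal q) :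
    ∫ ω, B ω ∂μ = q := by
  have hset : MeasurableSet {ω | B ω = 1} := hB (measurableSet_singleton 1)
  calc ∫ ω, B ω ∂μ = ∫ ω, Set.indicator {ω | B ω = 1} (fun _ => (1:ℝ)) ω ∂μ := by
        rw [← cutaux_indicator_rep B hv]
      _ = (μ {ω | B ω = 1}).toReal := integral_indicator_one hset
      _ = q := by rw [hμ, ENNReal.toReal_ofReal hq0]

lemma cutaux_exp_le {x : ℝ} (hx : |x| ≤ 1) : Real.exp x ≤ 1 + x + x ^ 2 := by
  have h := Real.exp_bound hx (by norm_num : 0 < 2)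
  have h2 : ∑ m ∈ Finset.range 2, x ^ m / m.factorial = 1 + x := by
    simp [Finset.sum_range_succ]
  rw [h2] at h
  have h3 := (abs_sub_le_iff.1 h).1
  have h4 : |x| ^ 2 = x ^ 2 := sq_abs x
  have h5 : ((2:ℕ).succ : ℝ) / ((2:ℕ).factorial * 2) = 3 / 4 := by norm_num [Nat.factorial]
  nlinarith [sq_nonneg x]

lemma cutaux_bern_mgf (μ : Measure Ω) [IsProbabilityMeasure μ]
    (B : Ω → ℝ) (hB : Measurable B) (hv : ∀ ω, B ω = 0 ∨ B ω = 1)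
    {q : ℝ} (hq0 : 0 ≤ q) (hq1 : q ≤ 1) (hμ : μ {ω | B ω = 1} = ENNReal.ofReal q)
    {r : ℝ} (hr : |r| ≤ 1) :
    ∫ ω, Real.exp (r * (B ω - q)) ∂μ ≤ Real.exp (q * r ^ 2) := by
  have hpt : ∀ ω, Real.exp (r * (B ω - q)) =
      Real.exp (-(r * q)) + B ω * (Real.exp (-(r * q)) * (Real.exp r - 1)) := by
    intro ω
    rcases hv ω with h | h <;> rw [h]
    · ring_nf
    · rw [show r * (1 - q) = r + -(r*q) by ring, Real.exp_add]
      ring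
  have hint : Integrable B μ := cutaux_integrable μ B hB hv
  calc ∫ ω, Real.exp (r * (B ω - q)) ∂μ
      = ∫ ω, (Real.exp (-(r * q)) + B ω * (Real.exp (-(r * q)) * (Real.exp r - 1))) ∂μ := by
        simp_rw [hpt]
    _ = Real.exp (-(r * q)) + q * (Real.exp (-(r * q)) * (Real.exp r - 1)) := by
        rw [integral_add (integrable_const _) (hint.mul_const _), integral_const,
          integral_mul_const, cutaux_bern_integral μ B hB hv hq0 hμ]
        simp
    _ = Real.exp (-(r * q)) * (1 + q * (Real.exp r - 1)) := by ring
    _ ≤ Real.exp (-(r * q)) * Real.exp (q * (Real.exp r - 1)) := by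
        have h := Real.add_one_le_exp (q * (Real.exp r - 1))
        have := Real.exp_nonneg (-(r * q))
        nlinarith
    _ = Real.exp (q * (Real.exp r - 1 - r)) := by rw [← Real.exp_add]; ring_nf
    _ ≤ Real.exp (q * r ^ 2) := by
        apply Real.exp_le_exp.2
        have := cutaux_exp_le hr
        nlinarith




lemma cutaux_chernoff (μ : Measure Ω) [IsProbabilityMeasure μ]
    {ι : Type*} [Fintype ι] (B : ι → Ω → ℝ) (q : ι → ℝ) (d : ι → ℝ)
    (hB : ∀ i, Measurable (B i)) (hv : ∀ i ω, B i ω = 0 ∨ B i ω = 1)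
    (hq : ∀ i, q i ∈ Set.Icc (0:ℝ) 1)
    (hμp : ∀ i, μ {ω | B i ω = 1} = ENNReal.ofReal (q i))
    (hind : iIndepFun B μ)
    {lam : ℝ} (ε : ℝ) (hlam : 0 ≤ lam) (hld : ∀ i, |lam * d i| ≤ 1) :
    (μ {ω | ε ≤ ∑ i, d i * (B i ω - q i)}).toReal ≤
      Real.exp (-lam * ε + lam ^ 2 * ∑ i, q i * d i ^ 2) := by
  classical
  set X : ι → Ω → ℝ := fun i ω => d i * (B i ω - q i) with hX
  have hXmeas : ∀ i, Measurable (X i) := fun i => (((hB i).sub measurable_const).const_mul _)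
  have hXind : iIndepFun X μ := by
    have := hind.comp (fun i => fun x : ℝ => d i * (x - q i))
      (fun i => (measurable_id.sub measurable_const).const_mul _)
    exact this
  have hXsum : (fun ω => ∑ i, d i * (B i ω - q i)) = (∑ i, X i) := by
    funext ω; simp [hX]
  -- bound on |X i|
  have hXbd : ∀ i ω, |X i ω| ≤ |d i| := by
    intro i ω
    rw [hX, abs_mul]
    have h1 : |B i ω - q i| ≤ 1 := by
      rcases hv i ω with h | h <;> rw [h] <;>
        [skip; skip] <;> rw [abs_le] <;> constructor <;> nlinarith [(hq i).1, (hq i).2]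
    nlinarith [abs_nonneg (d i)]
  -- integrability of exp (lam * sum)
  have hint : ∀ (s : Finset ι), Integrable (fun ω => Real.exp (lam * ∑ i ∈ s, X i ω)) μ := by
    intro s
    have hmeas : Measurable fun ω => Real.exp (lam * ∑ i ∈ s, X i ω) :=
      ((Finset.measurable_sum s fun i _ => hXmeas i).const_mul _).exp
    refine (integrable_const (Real.exp (|lam| * ∑ i ∈ s, |d i|))).mono'
      hmeas.aestronglyMeasurable (ae_of_all _ fun ω => ?_)
    rw [Real.norm_eq_abs, abs_of_pos (Real.exp_pos _), Real.exp_le_exp]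
    calc lam * ∑ i ∈ s, X i ω ≤ |lam * ∑ i ∈ s, X i ω| := le_abs_self _
      _ = |lam| * |∑ i ∈ s, X i ω| := abs_mul _ _
      _ ≤ |lam| * ∑ i ∈ s, |d i| := by
          apply mul_le_mul_of_nonneg_left _ (abs_nonneg _)
          exact (Finset.abs_sum_le_sum_abs _ _).trans (Finset.sum_le_sum fun i _ => hXbd i ω)
  -- Chernoff
  have hch := measure_ge_le_exp_mul_mgf (X := ∑ i, X i) (μ := μ) (t := lam) ε hlam (by
    have := hint Finset.univ
    simpa using this)
  rw [← hXsum] at hch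
  refine hch.trans ?_
  rw [hXsum, hXind.mgf_sum hXmeas]
  have hmgf : ∀ i, mgf (X i) μ lam ≤ Real.exp (q i * (lam * d i) ^ 2) := by
    intro i
    have : mgf (X i) μ lam = ∫ ω, Real.exp ((lam * d i) * (B i ω - q i)) ∂μ := by
      unfold mgf
      congr 1; funext ω; rw [hX]; ring_nf
    rw [this]
    exact cutaux_bern_mgf μ (B i) (hB i) (hv i) (hq i).1 (hq i).2 (hμp i) (hld i)
  calc Real.exp (-lam * ε) * ∏ i, mgf (X i) μ lam
      ≤ Real.exp (-lam * ε) * ∏ i, Real.exp (q i * (lam * d i) ^ 2) := by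
        apply mul_le_mul_of_nonneg_left _ (Real.exp_nonneg _)
        exact Finset.prod_le_prod (fun i _ => mgf_nonneg) (fun i _ => hmgf i)
      _ = Real.exp (-lam * ε + lam ^ 2 * ∑ i, q i * d i ^ 2) := by
        rw [← Real.exp_sum, ← Real.exp_add]
        congr 1
        rw [Finset.mul_sum]
        congr 1
        exact Finset.sum_congr rfl fun i _ => by ring

end CutAux


lemma cutaux_sum_pairs {n : ℕ} (M : Fin n → Fin n → ℝ)
    (hsymm : ∀ i j, M i j = M j i) (hdiag : ∀ i, M i i = 0) (S T : Finset (Fin n)) :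
    ∑ i ∈ S, ∑ j ∈ T, M i j =
      ∑ p : {p : Fin n × Fin n // p.1 < p.2},
        (((if p.1.1 ∈ S ∧ p.1.2 ∈ T then (1:ℝ) else 0) +
          if p.1.2 ∈ S ∧ p.1.1 ∈ T then (1:ℝ) else 0)) * M p.1.1 p.1.2 := by
  classical
  set f : Fin n × Fin n → ℝ := fun p =>
    (if p.1 ∈ S ∧ p.2 ∈ T then (1:ℝ) else 0) * M p.1 p.2 with hf
  have h1 : ∑ i ∈ S, ∑ j ∈ T, M i j = ∑ p : Fin n × Fin n, f p := by
    rw [Fintype.sum_prod_type]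
    have hinner : ∀ i, ∑ j, f (i, j) = if i ∈ S then ∑ j ∈ T, M i j else 0 := by
      intro i
      by_cases hi : i ∈ S
      · simp only [hf, hi, true_and, if_true]
        rw [show (∑ x : Fin n, (if x ∈ T then (1:ℝ) else 0) * M i x)
            = ∑ x : Fin n, (if x ∈ T then M i x else 0) from
          Finset.sum_congr rfl fun j _ => by split_ifs <;> simp]
        rw [← Finset.sum_filter, Finset.filter_univ_mem]
      · simp [hf, hi]
    simp_rw [hinner]
    rw [← Finset.sum_filter, Finset.filter_univ_mem]
  set lt : Finset (Fin n × Fin n) := Finset.univ.filter (fun p => p.1 < p.2) with hlt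
  have h2 : ∑ p : Fin n × Fin n, f p = ∑ p ∈ lt, (f p + f p.swap) := by
    rw [Finset.sum_add_distrib]
    have hswap : ∑ p ∈ lt, f p.swap
        = ∑ p ∈ Finset.univ.filter (fun p : Fin n × Fin n => p.2 < p.1), f p := by
      refine Finset.sum_nbij' (fun p => Prod.swap p) (fun p => Prod.swap p) ?_ ?_ ?_ ?_ ?_ <;>
        simp [hlt]
    rw [hswap]
    rw [← Finset.sum_filter_add_sum_filter_not Finset.univ (fun p : Fin n × Fin n => p.1 < p.2) f]
    congr 1
    rw [← Finset.sum_filter_add_sum_filter_not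
      (Finset.univ.filter (fun p : Fin n × Fin n => ¬ p.1 < p.2))
      (fun p : Fin n × Fin n => p.2 < p.1) f]
    have hzero : ∑ p ∈ (Finset.univ.filter (fun p : Fin n × Fin n => ¬ p.1 < p.2)).filter
        (fun p : Fin n × Fin n => ¬ p.2 < p.1), f p = 0 := by
      apply Finset.sum_eq_zero
      intro p hp
      simp only [Finset.mem_filter] at hp
      have : p.1 = p.2 := le_antisymm (not_lt.1 hp.2) (not_lt.1 hp.1.2)
      simp [hf, ← this, hdiag]
    rw [hzero, add_zero]
    apply Finset.sum_congr _ (fun _ _ => rfl)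
    rw [Finset.filter_filter]
    apply Finset.filter_congr
    intro p _
    constructor
    · exact fun h => h.2
    · exact fun h => ⟨not_lt.2 h.le, h⟩
  rw [h1, h2]
  rw [Finset.sum_subtype (p := fun p : Fin n × Fin n => p.1 < p.2) (s := lt)
    (fun p => by simp [hlt]) (fun p => f p + f p.swap)]
  apply Finset.sum_congr rfl
  intro p _
  simp only [hf, Prod.fst_swap, Prod.snd_swap]
  rw [hsymm p.1.2 p.1.1]
  ring

lemma cutaux_two_four_le_seven {n : ℕ} (hn : 2 ≤ n) : 2 * (4:ℝ) ^ n ≤ 7 ^ n := by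
  induction n, hn using Nat.le_induction with
  | base => norm_num
  | succ m hm ih =>
    rw [pow_succ, pow_succ]
    nlinarith [pow_nonneg (by norm_num : (0:ℝ) ≤ 4) m]


/-- Concentration of the cut norm of `A - Q` for `A = Bern(Q)`:
`E[‖A-Q‖_□] ≤ 16 √(ρ(Q)/n)`, and if `nρ(Q) ≥ 1` then `‖A-Q‖_□ ≤ 15 √(ρ(Q)/n)`
with probability at least `1 - e^{-n}`. -/
theorem cutNorm_concentration
    {Ω : Type*} [MeasurableSpace Ω] (μ : Measure Ω) [IsProbabilityMeasure μ]
    (n : ℕ) (hn : 2 ≤ n)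
    (Q : Fin n → Fin n → ℝ)
    (hQsymm : ∀ i j, Q i j = Q j i)
    (hQmem : ∀ i j, Q i j ∈ Set.Icc (0 : ℝ) 1)
    (hQdiag : ∀ i, Q i i = 0)
    (A : Ω → Fin n → Fin n → ℝ)
    (hAmeas : ∀ i j, Measurable (fun ω => A ω i j))
    (hAval : ∀ ω i j, A ω i j = 0 ∨ A ω i j = 1)
    (hAsymm : ∀ ω i j, A ω i j = A ω j i)
    (hAdiag : ∀ ω i, A ω i i = 0)
    (hAindep : iIndepFun
      (fun p : {p : Fin n × Fin n // p.1 < p.2} => fun ω => A ω p.1.1 p.1.2) μ)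
    (hAprob : ∀ i j, i < j → μ {ω | A ω i j = 1} = ENNReal.ofReal (Q i j)) :
    (∫ ω, matrixCutNorm n (fun i j => A ω i j - Q i j) ∂μ ≤
        16 * Real.sqrt (matrixDensity n Q / n)) ∧
    (1 ≤ (n : ℝ) * matrixDensity n Q →
      ENNReal.ofReal (1 - Real.exp (-(n : ℝ))) ≤
        μ {ω | matrixCutNorm n (fun i j => A ω i j - Q i j) ≤
          15 * Real.sqrt (matrixDensity n Q / n)}) := by
  classical
  have hn0 : (0:ℝ) < n := by
    have : (0:ℕ) < n := by omega
    exact_mod_cast this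
  set N : ℝ := (n:ℝ) with hN
  set ρ : ℝ := matrixDensity n Q with hρdef
  have hρ0 : 0 ≤ ρ := by
    rw [hρdef, matrixDensity]
    apply mul_nonneg (by positivity)
    exact Finset.sum_nonneg fun i _ => Finset.sum_nonneg fun j _ => (hQmem i j).1
  have hsumQ : ∑ i, ∑ j, Q i j = N ^ 2 * ρ := by
    rw [hρdef, matrixDensity]
    field_simp
    rw [hN]
  set b : ℝ := 15 * Real.sqrt (ρ / N) with hb
  have hb0 : 0 ≤ b := by positivity
  set ε : ℝ := b * N ^ 2 with hε
  have hε0 : 0 ≤ ε := by positivity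
  -- the independent Bernoulli family
  set P := {p : Fin n × Fin n // p.1 < p.2} with hP
  set B : P → Ω → ℝ := fun p ω => A ω p.1.1 p.1.2 with hB
  set q : P → ℝ := fun p => Q p.1.1 p.1.2 with hq
  set c : Finset (Fin n) → Finset (Fin n) → P → ℝ := fun S T p =>
    (if p.1.1 ∈ S ∧ p.1.2 ∈ T then (1:ℝ) else 0) +
      (if p.1.2 ∈ S ∧ p.1.1 ∈ T then (1:ℝ) else 0) with hc
  have hc0 : ∀ S T p, 0 ≤ c S T p := by intro S T p; rw [hc]; dsimp only; split_ifs <;> norm_num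
  have hc2 : ∀ S T p, c S T p ≤ 2 := by intro S T p; rw [hc]; dsimp only; split_ifs <;> norm_num
  have hpair : ∀ (ω : Ω) S T, ∑ i ∈ S, ∑ j ∈ T, (A ω i j - Q i j)
      = ∑ p : P, c S T p * (B p ω - q p) := by
    intro ω S T
    exact cutaux_sum_pairs (fun i j => A ω i j - Q i j)
      (fun i j => by rw [hAsymm ω i j, hQsymm i j])
      (fun i => by rw [hAdiag ω i, hQdiag i]; ring) S T
  have hqsum : ∑ p : P, q p = N ^ 2 * ρ / 2 := by
    have h := cutaux_sum_pairs Q hQsymm hQdiag Finset.univ Finset.univ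
    simp only [Finset.mem_univ, and_self, if_true] at h
    rw [hsumQ] at h
    have h2 : ∑ p : P, ((1:ℝ) + 1) * Q p.1.1 p.1.2 = 2 * ∑ p : P, q p := by
      rw [Finset.mul_sum]; exact Finset.sum_congr rfl fun p _ => by rw [hq]; ring
    rw [h2] at h
    linarith
  have hvar : ∀ S T, ∑ p : P, q p * (c S T p) ^ 2 ≤ 2 * N ^ 2 * ρ := by
    intro S T
    calc ∑ p : P, q p * (c S T p) ^ 2 ≤ ∑ p : P, q p * 4 := by
          apply Finset.sum_le_sum
          intro p _
          have h1 : (0:ℝ) ≤ q p := (hQmem _ _).1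
          have hcc : (c S T p) ^ 2 ≤ 4 := by nlinarith [hc0 S T p, hc2 S T p]
          nlinarith
      _ = 4 * (N ^ 2 * ρ / 2) := by rw [← Finset.sum_mul, hqsum]; ring
      _ = 2 * N ^ 2 * ρ := by ring
  have hBmeas : ∀ p : P, Measurable (B p) := fun p => hAmeas p.1.1 p.1.2
  have hBval : ∀ (p : P) ω, B p ω = 0 ∨ B p ω = 1 := fun p ω => hAval ω p.1.1 p.1.2
  have hqmem : ∀ p : P, q p ∈ Set.Icc (0:ℝ) 1 := fun p => hQmem p.1.1 p.1.2
  have hμp : ∀ p : P, μ {ω | B p ω = 1} = ENNReal.ofReal (q p) := fun p =>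
    hAprob p.1.1 p.1.2 p.2
  -- root bound
  have hroot : 1 ≤ N * ρ → 1 / N ≤ Real.sqrt (ρ / N) := by
    intro hnρ
    have h1 : (1/N) ^ 2 ≤ ρ / N := by
      rw [div_pow, one_pow]
      rw [div_le_div_iff₀ (by positivity) hn0]
      nlinarith
    calc 1 / N = Real.sqrt ((1/N) ^ 2) := by
          rw [Real.sqrt_sq (by positivity)]
      _ ≤ Real.sqrt (ρ / N) := Real.sqrt_le_sqrt h1
  -- key tail bound for a single pair (S, T)
  have keyST : 1 ≤ N * ρ → ∀ S T : Finset (Fin n),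
      μ {ω | ε < |∑ i ∈ S, ∑ j ∈ T, (A ω i j - Q i j)|}
        ≤ ENNReal.ofReal (2 * Real.exp (-(3 * N))) := by
    intro hnρ S T
    have hρpos : 0 < ρ := by nlinarith
    set V : ℝ := 2 * N ^ 2 * ρ with hV
    have hVpos : 0 < V := by
      rw [hV]; exact mul_pos (mul_pos two_pos (pow_pos hn0 2)) hρpos
    set lam : ℝ := if ε ≤ V then ε / (2 * V) else 1 / 2 with hlam
    have hlam0 : 0 ≤ lam := by
      rw [hlam]; split_ifs
      · positivity
      · norm_num
    have hlamhalf : lam ≤ 1 / 2 := by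
      rw [hlam]; split_ifs with h
      · rw [div_le_div_iff₀ (by positivity) (by norm_num)]; linarith
      · exact le_rfl
    have hε2 : ε ^ 2 = 225 * N ^ 3 * ρ := by
      rw [hε, hb, mul_pow, mul_pow, Real.sq_sqrt (by positivity)]
      field_simp
      ring
    have hεN : 15 * N ≤ ε := by
      have h := hroot hnρ
      calc 15 * N = 15 * (1 / N) * N ^ 2 := by field_simp
        _ ≤ 15 * Real.sqrt (ρ / N) * N ^ 2 := by gcongr
        _ = ε := by rw [hε, hb]
    have hexp : -lam * ε + lam ^ 2 * V ≤ -(3 * N) := by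
      rw [hlam]; split_ifs with hcase
      · have heq : -(ε / (2 * V)) * ε + (ε / (2 * V)) ^ 2 * V = -(ε ^ 2 / (4 * V)) := by
          field_simp; ring
        rw [heq, hε2]
        have heq2 : 225 * N ^ 3 * ρ / (4 * V) = 225 / 8 * N := by
          rw [hV]; field_simp; ring
        rw [heq2]; linarith
      · push_neg at hcase
        nlinarith
    have hldpos : ∀ p : P, |lam * c S T p| ≤ 1 := by
      intro p
      rw [abs_mul, abs_of_nonneg hlam0, abs_of_nonneg (hc0 S T p)]
      nlinarith [hc2 S T p, hc0 S T p]
    have hldneg : ∀ p : P, |lam * (-(c S T p))| ≤ 1 := by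
      intro p
      rw [mul_neg, abs_neg]
      exact hldpos p
    have hup := cutaux_chernoff μ B q (c S T) hBmeas hBval hqmem hμp hAindep
      (lam := lam) ε hlam0 hldpos
    have hdn := cutaux_chernoff μ B q (fun p => -(c S T p)) hBmeas hBval hqmem hμp hAindep
      (lam := lam) ε hlam0 hldneg
    have hexp2 : -lam * ε + lam ^ 2 * ∑ p : P, q p * (c S T p) ^ 2 ≤ -(3 * N) := by
      nlinarith [hvar S T, sq_nonneg lam]
    have hupE : μ {ω | ε ≤ ∑ p : P, c S T p * (B p ω - q p)}
        ≤ ENNReal.ofReal (Real.exp (-(3 * N))) := by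
      have h1 := hup.trans (Real.exp_le_exp.2 hexp2)
      calc μ {ω | ε ≤ ∑ p : P, c S T p * (B p ω - q p)}
          = ENNReal.ofReal ((μ {ω | ε ≤ ∑ p : P, c S T p * (B p ω - q p)}).toReal) :=
            (ENNReal.ofReal_toReal (measure_ne_top _ _)).symm
        _ ≤ ENNReal.ofReal (Real.exp (-(3 * N))) := ENNReal.ofReal_le_ofReal h1
    have hexp3 : -lam * ε + lam ^ 2 * ∑ p : P, q p * (-(c S T p)) ^ 2 ≤ -(3 * N) := by
      have : ∑ p : P, q p * (-(c S T p)) ^ 2 = ∑ p : P, q p * (c S T p) ^ 2 := by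
        exact Finset.sum_congr rfl fun p _ => by ring
      rw [this]; exact hexp2
    have hdnE : μ {ω | ε ≤ ∑ p : P, -(c S T p) * (B p ω - q p)}
        ≤ ENNReal.ofReal (Real.exp (-(3 * N))) := by
      have h1 := hdn.trans (Real.exp_le_exp.2 hexp3)
      calc μ {ω | ε ≤ ∑ p : P, -(c S T p) * (B p ω - q p)}
          = ENNReal.ofReal ((μ {ω | ε ≤ ∑ p : P, -(c S T p) * (B p ω - q p)}).toReal) :=
            (ENNReal.ofReal_toReal (measure_ne_top _ _)).symm
        _ ≤ ENNReal.ofReal (Real.exp (-(3 * N))) := ENNReal.ofReal_le_ofReal h1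
    have hincl : {ω | ε < |∑ i ∈ S, ∑ j ∈ T, (A ω i j - Q i j)|}
        ⊆ {ω | ε ≤ ∑ p : P, c S T p * (B p ω - q p)}
          ∪ {ω | ε ≤ ∑ p : P, -(c S T p) * (B p ω - q p)} := by
      intro ω hω
      simp only [Set.mem_setOf_eq] at hω
      rw [hpair ω S T] at hω
      rcases le_abs.1 hω.le with h | h
      · exact Or.inl h
      · refine Or.inr ?_
        have heq : ∑ p : P, -(c S T p) * (B p ω - q p)
            = -∑ p : P, c S T p * (B p ω - q p) := by
          rw [← Finset.sum_neg_distrib]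
          exact Finset.sum_congr rfl fun p _ => by ring
        rw [Set.mem_setOf_eq, heq]
        exact h
    calc μ {ω | ε < |∑ i ∈ S, ∑ j ∈ T, (A ω i j - Q i j)|}
        ≤ μ ({ω | ε ≤ ∑ p : P, c S T p * (B p ω - q p)}
          ∪ {ω | ε ≤ ∑ p : P, -(c S T p) * (B p ω - q p)}) := measure_mono hincl
      _ ≤ μ {ω | ε ≤ ∑ p : P, c S T p * (B p ω - q p)}
          + μ {ω | ε ≤ ∑ p : P, -(c S T p) * (B p ω - q p)} := measure_union_le _ _
      _ ≤ ENNReal.ofReal (Real.exp (-(3 * N))) + ENNReal.ofReal (Real.exp (-(3 * N))) :=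
          add_le_add hupE hdnE
      _ = ENNReal.ofReal (2 * Real.exp (-(3 * N))) := by
          rw [← ENNReal.ofReal_add (Real.exp_nonneg _) (Real.exp_nonneg _)]
          ring_nf
  -- union of bad events
  set badAll : Set Ω := ⋃ ST : Finset (Fin n) × Finset (Fin n),
    {ω | ε < |∑ i ∈ ST.1, ∑ j ∈ ST.2, (A ω i j - Q i j)|} with hbadAll
  have hbadmeas : MeasurableSet badAll := by
    apply MeasurableSet.iUnion
    intro ST
    have hg : Measurable fun ω => |∑ i ∈ ST.1, ∑ j ∈ ST.2, (A ω i j - Q i j)| := by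
      apply Measurable.abs
      apply Finset.measurable_sum
      intro i _
      apply Finset.measurable_sum
      intro j _
      exact (hAmeas i j).sub measurable_const
    exact measurableSet_lt measurable_const hg
  have hbadle : 1 ≤ N * ρ → μ badAll ≤ ENNReal.ofReal (Real.exp (-N)) := by
    intro hnρ
    have h1 : μ badAll ≤ ∑' ST : Finset (Fin n) × Finset (Fin n),
        ENNReal.ofReal (2 * Real.exp (-(3 * N))) :=
      (measure_iUnion_le _).trans (ENNReal.tsum_le_tsum fun ST => keyST hnρ ST.1 ST.2)
    rw [tsum_fintype, Finset.sum_const, Finset.card_univ] at h1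
    have hcard : Fintype.card (Finset (Fin n) × Finset (Fin n)) = 2 ^ n * 2 ^ n := by
      simp
    rw [hcard] at h1
    have hnum : ((2 ^ n * 2 ^ n : ℕ) : ℝ) * (2 * Real.exp (-(3 * N))) ≤ Real.exp (-N) := by
      push_cast
      have h4 : (2:ℝ) ^ n * 2 ^ n = 4 ^ n := by rw [← mul_pow]; norm_num
      have h7 := cutaux_two_four_le_seven hn
      have he7 : (7:ℝ) ≤ Real.exp 1 * Real.exp 1 := by nlinarith [Real.exp_one_gt_d9]
      have h8 : (7:ℝ) ^ n ≤ (Real.exp 1 * Real.exp 1) ^ n :=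
        pow_le_pow_left₀ (by norm_num) he7 n
      have h9 : (Real.exp 1 * Real.exp 1) ^ n = Real.exp (2 * N) := by
        rw [← Real.exp_add]
        rw [show (1:ℝ) + 1 = 2 by norm_num]
        rw [← Real.exp_nat_mul]
        congr 1
        push_cast [hN]
        ring
      have h10 : 2 * (4:ℝ) ^ n ≤ Real.exp (2 * N) := by
        rw [← h9]; exact h7.trans h8
      have h11 : Real.exp (2 * N) * Real.exp (-(3 * N)) = Real.exp (-N) := by
        rw [← Real.exp_add]; congr 1; ring
      calc (2:ℝ) ^ n * 2 ^ n * (2 * Real.exp (-(3 * N)))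
          = (2 * 4 ^ n) * Real.exp (-(3 * N)) := by rw [h4]; ring
        _ ≤ Real.exp (2 * N) * Real.exp (-(3 * N)) := by
            apply mul_le_mul_of_nonneg_right h10 (Real.exp_nonneg _)
        _ = Real.exp (-N) := h11
    calc μ badAll ≤ (2 ^ n * 2 ^ n : ℕ) • ENNReal.ofReal (2 * Real.exp (-(3 * N))) := h1
      _ = ((2 ^ n * 2 ^ n : ℕ) : ENNReal) * ENNReal.ofReal (2 * Real.exp (-(3 * N))) := by
          rw [nsmul_eq_mul]
      _ = ENNReal.ofReal (((2 ^ n * 2 ^ n : ℕ) : ℝ) * (2 * Real.exp (-(3 * N)))) := by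
          rw [ENNReal.ofReal_mul (by positivity : (0:ℝ) ≤ ((2 ^ n * 2 ^ n : ℕ) : ℝ))]
          rw [ENNReal.ofReal_natCast]
      _ ≤ ENNReal.ofReal (Real.exp (-N)) := ENNReal.ofReal_le_ofReal hnum
  -- the good event
  have hsub : badAllᶜ ⊆ {ω | matrixCutNorm n (fun i j => A ω i j - Q i j) ≤ b} := by
    intro ω hω
    simp only [hbadAll, Set.compl_iUnion, Set.mem_iInter, Set.mem_compl_iff,
      Set.mem_setOf_eq, not_lt] at hω
    simp only [Set.mem_setOf_eq, matrixCutNorm]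
    apply ciSup_le
    intro S
    apply ciSup_le
    intro T
    have h := hω (S, T)
    have hNe : 1 / (n:ℝ) ^ 2 * ε = b := by
      rw [hε, ← hN]
      field_simp
    calc 1 / (n:ℝ) ^ 2 * |∑ i ∈ S, ∑ j ∈ T, (A ω i j - Q i j)|
        ≤ 1 / (n:ℝ) ^ 2 * ε := by gcongr
      _ = b := hNe
  have hpart2 : 1 ≤ N * ρ →
      ENNReal.ofReal (1 - Real.exp (-N)) ≤
        μ {ω | matrixCutNorm n (fun i j => A ω i j - Q i j) ≤ b} := by
    intro hnρ
    have h1 : μ badAllᶜ ≤ μ {ω | matrixCutNorm n (fun i j => A ω i j - Q i j) ≤ b} :=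
      measure_mono hsub
    have h2 : μ badAllᶜ = 1 - μ badAll := prob_compl_eq_one_sub hbadmeas
    have h3 : (1:ENNReal) - ENNReal.ofReal (Real.exp (-N)) ≤ 1 - μ badAll :=
      tsub_le_tsub_left (hbadle hnρ) 1
    have h4 : ENNReal.ofReal (1 - Real.exp (-N)) = 1 - ENNReal.ofReal (Real.exp (-N)) := by
      rw [ENNReal.ofReal_sub _ (Real.exp_nonneg _), ENNReal.ofReal_one]
    rw [h4]
    refine le_trans h3 (le_trans (le_of_eq h2.symm) h1)
  -- pointwise bounds on the cut norm
  have hent : ∀ ω i j, |A ω i j - Q i j| ≤ 1 := by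
    intro ω i j
    rcases hAval ω i j with h | h <;> rw [h, abs_le] <;>
      constructor <;> nlinarith [(hQmem i j).1, (hQmem i j).2]
  have hf0 : ∀ ω, 0 ≤ matrixCutNorm n (fun i j => A ω i j - Q i j) := by
    intro ω
    rw [matrixCutNorm]
    apply le_ciSup_of_le (Set.Finite.bddAbove (Set.finite_range _)) ∅
    apply le_ciSup_of_le (Set.Finite.bddAbove (Set.finite_range _)) ∅
    positivity
  have hf1 : ∀ ω, matrixCutNorm n (fun i j => A ω i j - Q i j) ≤ 1 := by
    intro ω
    rw [matrixCutNorm]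
    apply ciSup_le
    intro S
    apply ciSup_le
    intro T
    have habs : |∑ i ∈ S, ∑ j ∈ T, (A ω i j - Q i j)| ≤ (n:ℝ) ^ 2 := by
      calc |∑ i ∈ S, ∑ j ∈ T, (A ω i j - Q i j)|
          ≤ ∑ i ∈ S, |∑ j ∈ T, (A ω i j - Q i j)| := Finset.abs_sum_le_sum_abs _ _
        _ ≤ ∑ i ∈ S, ∑ j ∈ T, |A ω i j - Q i j| :=
            Finset.sum_le_sum fun i _ => Finset.abs_sum_le_sum_abs _ _
        _ ≤ ∑ i ∈ S, ∑ j ∈ T, (1:ℝ) :=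
            Finset.sum_le_sum fun i _ => Finset.sum_le_sum fun j _ => hent ω i j
        _ = (S.card : ℝ) * (T.card : ℝ) := by
            simp [Finset.sum_const, mul_comm]
        _ ≤ (n:ℝ) * (n:ℝ) := by
            have h1 : (S.card : ℝ) ≤ (n:ℝ) := by
              exact_mod_cast (Finset.card_le_univ S).trans_eq (by simp)
            have h2 : (T.card : ℝ) ≤ (n:ℝ) := by
              exact_mod_cast (Finset.card_le_univ T).trans_eq (by simp)
            have h3 : (0:ℝ) ≤ (S.card : ℝ) := by positivity
            nlinarith
        _ = (n:ℝ) ^ 2 := by ring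
    calc 1 / (n:ℝ) ^ 2 * |∑ i ∈ S, ∑ j ∈ T, (A ω i j - Q i j)|
        ≤ 1 / (n:ℝ) ^ 2 * (n:ℝ) ^ 2 := by gcongr
      _ = 1 := by field_simp
  -- expectation of single entries
  have hAint : ∀ i j, ∫ ω, A ω i j ∂μ = Q i j := by
    intro i j
    rcases lt_trichotomy i j with h | h | h
    · exact cutaux_bern_integral μ (fun ω => A ω i j) (hAmeas i j)
        (fun ω => hAval ω i j) (hQmem i j).1 (hAprob i j h)
    · subst h
      simp only [hAdiag, hQdiag]
      simp
    · have heq : (fun ω => A ω i j) = fun ω => A ω j i := funext fun ω => hAsymm ω i j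
      rw [show (∫ ω, A ω i j ∂μ) = ∫ ω, A ω j i ∂μ by rw [← heq]]
      rw [cutaux_bern_integral μ (fun ω => A ω j i) (hAmeas j i)
        (fun ω => hAval ω j i) (hQmem j i).1 (hAprob j i h)]
      exact (hQsymm i j).symm
  constructor
  · -- expectation bound
    rcases le_or_gt 1 (N * ρ) with hnρ | hnρ
    · -- high-density case: use the tail bound
      have hInd : Integrable (fun ω => b + Set.indicator badAll (fun _ => (1:ℝ)) ω) μ :=
        (integrable_const b).add ((integrable_const (1:ℝ)).indicator hbadmeas)
      have hmono : ∀ ω, matrixCutNorm n (fun i j => A ω i j - Q i j)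
          ≤ b + Set.indicator badAll (fun _ => (1:ℝ)) ω := by
        intro ω
        by_cases hω : ω ∈ badAll
        · rw [Set.indicator_of_mem hω]
          linarith [hf1 ω]
        · rw [Set.indicator_of_notMem hω]
          have hgood := hsub hω
          simp only [Set.mem_setOf_eq] at hgood
          linarith
      have hgle : ∫ ω, matrixCutNorm n (fun i j => A ω i j - Q i j) ∂μ
          ≤ b + (μ badAll).toReal := by
        calc ∫ ω, matrixCutNorm n (fun i j => A ω i j - Q i j) ∂μ
            ≤ ∫ ω, (b + Set.indicator badAll (fun _ => (1:ℝ)) ω) ∂μ :=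
              integral_mono_of_nonneg (Filter.Eventually.of_forall hf0) hInd
                (Filter.Eventually.of_forall hmono)
          _ = b + (μ badAll).toReal := by
              rw [integral_add (integrable_const b)
                ((integrable_const (1:ℝ)).indicator hbadmeas), integral_const]
              rw [probReal_univ]
              simp only [one_smul]
              congr 1
              exact integral_indicator_one hbadmeas
      have hμtr : (μ badAll).toReal ≤ Real.exp (-N) := by
        calc (μ badAll).toReal ≤ (ENNReal.ofReal (Real.exp (-N))).toReal :=
              ENNReal.toReal_mono ENNReal.ofReal_ne_top (hbadle hnρ)
          _ = Real.exp (-N) := ENNReal.toReal_ofReal (Real.exp_nonneg _)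
      have hexpN : Real.exp (-N) ≤ Real.sqrt (ρ / N) := by
        have hNle : N ≤ Real.exp N := by linarith [Real.add_one_le_exp N]
        have h1 : Real.exp (-N) ≤ 1 / N := by
          rw [Real.exp_neg, inv_eq_one_div]
          exact one_div_le_one_div_of_le hn0 hNle
        exact h1.trans (hroot hnρ)
      rw [hb] at hgle
      linarith
    · -- low-density case: crude bound by twice the density
      have hA0 : ∀ ω i j, 0 ≤ A ω i j := by
        intro ω i j; rcases hAval ω i j with h | h <;> rw [h] <;> norm_num
      set g : Ω → ℝ := fun ω => ρ + 1 / (n:ℝ) ^ 2 * ∑ i, ∑ j, A ω i j with hg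
      have hintA : Integrable (fun ω => ∑ i, ∑ j, A ω i j) μ :=
        integrable_finset_sum _ (fun i _ => integrable_finset_sum _ fun j _ =>
          cutaux_integrable μ _ (hAmeas i j) (fun ω => hAval ω i j))
      have hgint : Integrable g μ := (integrable_const ρ).add (hintA.const_mul _)
      have hfg : ∀ ω, matrixCutNorm n (fun i j => A ω i j - Q i j) ≤ g ω := by
        intro ω
        rw [matrixCutNorm]
        apply ciSup_le
        intro S
        apply ciSup_le
        intro T
        have hsplit : ∑ i ∈ S, ∑ j ∈ T, (A ω i j - Q i j)
            = (∑ i ∈ S, ∑ j ∈ T, A ω i j) - ∑ i ∈ S, ∑ j ∈ T, Q i j := by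
          rw [← Finset.sum_sub_distrib]
          exact Finset.sum_congr rfl fun i _ => Finset.sum_sub_distrib _ _
        have hAnn : (0:ℝ) ≤ ∑ i ∈ S, ∑ j ∈ T, A ω i j :=
          Finset.sum_nonneg fun i _ => Finset.sum_nonneg fun j _ => hA0 ω i j
        have hQnn : (0:ℝ) ≤ ∑ i ∈ S, ∑ j ∈ T, Q i j :=
          Finset.sum_nonneg fun i _ => Finset.sum_nonneg fun j _ => (hQmem i j).1
        have hAu : ∑ i ∈ S, ∑ j ∈ T, A ω i j ≤ ∑ i, ∑ j, A ω i j := by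
          calc ∑ i ∈ S, ∑ j ∈ T, A ω i j
              ≤ ∑ i ∈ S, ∑ j, A ω i j := Finset.sum_le_sum fun i _ =>
                Finset.sum_le_sum_of_subset_of_nonneg (Finset.subset_univ T)
                  (fun j _ _ => hA0 ω i j)
            _ ≤ ∑ i, ∑ j, A ω i j :=
                Finset.sum_le_sum_of_subset_of_nonneg (Finset.subset_univ S)
                  (fun i _ _ => Finset.sum_nonneg fun j _ => hA0 ω i j)
        have hQu : ∑ i ∈ S, ∑ j ∈ T, Q i j ≤ N ^ 2 * ρ := by
          rw [← hsumQ]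
          calc ∑ i ∈ S, ∑ j ∈ T, Q i j
              ≤ ∑ i ∈ S, ∑ j, Q i j := Finset.sum_le_sum fun i _ =>
                Finset.sum_le_sum_of_subset_of_nonneg (Finset.subset_univ T)
                  (fun j _ _ => (hQmem i j).1)
            _ ≤ ∑ i, ∑ j, Q i j :=
                Finset.sum_le_sum_of_subset_of_nonneg (Finset.subset_univ S)
                  (fun i _ _ => Finset.sum_nonneg fun j _ => (hQmem i j).1)
        have hAnn2 : (0:ℝ) ≤ ∑ i, ∑ j, A ω i j :=
          Finset.sum_nonneg fun i _ => Finset.sum_nonneg fun j _ => hA0 ω i j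
        have habs : |∑ i ∈ S, ∑ j ∈ T, (A ω i j - Q i j)|
            ≤ (∑ i, ∑ j, A ω i j) + N ^ 2 * ρ := by
          rw [hsplit, abs_le]
          constructor <;> linarith
        calc 1 / (n:ℝ) ^ 2 * |∑ i ∈ S, ∑ j ∈ T, (A ω i j - Q i j)|
            ≤ 1 / (n:ℝ) ^ 2 * ((∑ i, ∑ j, A ω i j) + N ^ 2 * ρ) := by gcongr
          _ = g ω := by
              rw [hg, ← hN]
              field_simp
              ring
      have hgval : ∫ ω, g ω ∂μ = 2 * ρ := by
        rw [hg]
        rw [integral_add (integrable_const ρ) (hintA.const_mul _), integral_const,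
          probReal_univ, one_smul, integral_const_mul]
        rw [integral_finset_sum _ (fun i _ => integrable_finset_sum _ fun j _ =>
          cutaux_integrable μ _ (hAmeas i j) (fun ω => hAval ω i j))]
        have hin : ∀ i, ∫ ω, ∑ j, A ω i j ∂μ = ∑ j, Q i j := by
          intro i
          rw [integral_finset_sum _ (fun j _ =>
            cutaux_integrable μ _ (hAmeas i j) (fun ω => hAval ω i j))]
          exact Finset.sum_congr rfl fun j _ => hAint i j
        rw [Finset.sum_congr rfl (fun i _ => hin i), hsumQ, ← hN]
        field_simp
        ring
      have hsq : ρ ≤ Real.sqrt (ρ / N) := by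
        have h1 : ρ ^ 2 ≤ ρ / N := by
          rw [le_div_iff₀ hn0]
          nlinarith
        calc ρ = Real.sqrt (ρ ^ 2) := (Real.sqrt_sq hρ0).symm
          _ ≤ Real.sqrt (ρ / N) := Real.sqrt_le_sqrt h1
      calc ∫ ω, matrixCutNorm n (fun i j => A ω i j - Q i j) ∂μ
          ≤ ∫ ω, g ω ∂μ := integral_mono_of_nonneg (Filter.Eventually.of_forall hf0)
            hgint (Filter.Eventually.of_forall hfg)
        _ = 2 * ρ := hgval
        _ ≤ 16 * Real.sqrt (ρ / N) := by nlinarith [Real.sqrt_nonneg (ρ / N)]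
  · intro hnρ
    exact hpart2 hnρ
end

section
/- Let 1 ≤ k ≤ n, let Q be a symmetric n×n matrix with entries in [0,1] and zero diagonal, and let A = Bern(Q) be the random graph with independent edges of probabilities Q_{ij}. Define ε = max over maps π : [n] → [k] of ‖A_π − Q_π‖₁, where M_π denotes the matrix obtained by replacing each entry by the average over its block V_{π(i)} × V_{π(j)}, and ‖M‖₁ = (1/n²)Σ|M_{ij}|. Then E[ε] ≤ 9·√(ρ(Q)·((1+log k)/n + k²/n²)), and if n·ρ(Q) ≥ 1, then ε ≤ 8·√(ρ(Q)·((1+log k)/n + k²/n²)) with probability at least 1 − e^{-n}. -/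
open MeasureTheory ProbabilityTheory

/-- The class of `i` under the partition map `p : [n] → [k]`. -/
def classOf {n k : ℕ} (p : Fin n → Fin k) (i : Fin k) : Finset (Fin n) :=
  Finset.univ.filter (fun u => p u = i)

/-- `M_π`: each entry of `M` is replaced by the average of `M` over its block
`V_{π(x)} × V_{π(y)}` (zero for empty blocks). -/
noncomputable def blockAvg {n k : ℕ} (p : Fin n → Fin k) (M : Fin n → Fin n → ℝ) :
    Fin n → Fin n → ℝ :=
  fun x y =>
    if (classOf p (p x)).card = 0 ∨ (classOf p (p y)).card = 0 then 0
    else (∑ u ∈ classOf p (p x), ∑ v ∈ classOf p (p y), M u v) /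
      (((classOf p (p x)).card : ℝ) * ((classOf p (p y)).card : ℝ))

/-- The normalized `L¹` norm of an `n × n` matrix. -/
noncomputable def matrixL1Norm (n : ℕ) (M : Fin n → Fin n → ℝ) : ℝ :=
  (1 / (n : ℝ) ^ 2) * ∑ i, ∑ j, |M i j|

section Aux
variable {n k : ℕ}

lemma mem_classOf_self (p : Fin n → Fin k) (x : Fin n) : x ∈ classOf p (p x) := by
  simp [classOf]

lemma classOf_card_ne (p : Fin n → Fin k) (x : Fin n) : (classOf p (p x)).card ≠ 0 :=
  Finset.card_ne_zero_of_mem (mem_classOf_self p x)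

lemma classOf_card_pos (p : Fin n → Fin k) (x : Fin n) : 0 < ((classOf p (p x)).card : ℝ) := by
  have := classOf_card_ne p x; positivity

lemma blockAvg_eq (p : Fin n → Fin k) (M : Fin n → Fin n → ℝ) (x y : Fin n) :
    blockAvg p M x y = (∑ u ∈ classOf p (p x), ∑ v ∈ classOf p (p y), M u v) /
      (((classOf p (p x)).card : ℝ) * ((classOf p (p y)).card : ℝ)) := by
  unfold blockAvg
  rw [if_neg]
  push_neg
  exact ⟨classOf_card_ne p x, classOf_card_ne p y⟩

lemma sum_classOf (p : Fin n → Fin k) (F : Fin n → ℝ) :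
    ∑ i, ∑ x ∈ classOf p i, F x = ∑ x, F x :=
  Finset.sum_fiberwise _ _ _

lemma sum_double_classOf (p : Fin n → Fin k) (H : Fin n → Fin n → ℝ) :
    ∑ x, ∑ y, H x y = ∑ i, ∑ j, ∑ x ∈ classOf p i, ∑ y ∈ classOf p j, H x y := by
  rw [← sum_classOf p (fun x => ∑ y, H x y)]
  refine Finset.sum_congr rfl fun i _ => ?_
  calc ∑ x ∈ classOf p i, ∑ y, H x y
      = ∑ x ∈ classOf p i, ∑ j, ∑ y ∈ classOf p j, H x y :=
        Finset.sum_congr rfl fun x _ => (sum_classOf p (fun y => H x y)).symm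
    _ = ∑ j, ∑ x ∈ classOf p i, ∑ y ∈ classOf p j, H x y := Finset.sum_comm

lemma sum_weighted_blockAvg (p : Fin n → Fin k) (w : Fin k → Fin k → ℝ)
    (M : Fin n → Fin n → ℝ) :
    ∑ x, ∑ y, w (p x) (p y) * blockAvg p M x y = ∑ x, ∑ y, w (p x) (p y) * M x y := by
  rw [sum_double_classOf p (fun x y => w (p x) (p y) * blockAvg p M x y),
    sum_double_classOf p (fun x y => w (p x) (p y) * M x y)]
  refine Finset.sum_congr rfl fun i _ => Finset.sum_congr rfl fun j _ => ?_
  have hterm : ∀ x ∈ classOf p i, ∀ y ∈ classOf p j,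
      w (p x) (p y) * blockAvg p M x y =
      w i j * ((∑ u ∈ classOf p i, ∑ v ∈ classOf p j, M u v) /
        (((classOf p i).card : ℝ) * ((classOf p j).card : ℝ))) := by
    intro x hx y hy
    have hpx : p x = i := by simpa [classOf] using hx
    have hpy : p y = j := by simpa [classOf] using hy
    rw [blockAvg_eq, hpx, hpy]
  have hterm2 : ∑ x ∈ classOf p i, ∑ y ∈ classOf p j, w (p x) (p y) * M x y
      = w i j * ∑ u ∈ classOf p i, ∑ v ∈ classOf p j, M u v := by
    rw [Finset.mul_sum]
    refine Finset.sum_congr rfl fun x hx => ?_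
    rw [Finset.mul_sum]
    refine Finset.sum_congr rfl fun y hy => ?_
    have hpx : p x = i := by simpa [classOf] using hx
    have hpy : p y = j := by simpa [classOf] using hy
    rw [hpx, hpy]
  rw [Finset.sum_congr rfl fun x hx => Finset.sum_congr rfl fun y hy => hterm x hx y hy, hterm2]
  rw [Finset.sum_const, Finset.sum_const, smul_smul, nsmul_eq_mul]
  rcases Nat.eq_zero_or_pos (classOf p i).card with h | h
  · rw [Finset.card_eq_zero] at h
    simp [h]
  rcases Nat.eq_zero_or_pos (classOf p j).card with h' | h'
  · rw [Finset.card_eq_zero] at h'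
    simp [h']
  have hci : ((classOf p i).card : ℝ) ≠ 0 := by positivity
  have hcj : ((classOf p j).card : ℝ) ≠ 0 := by positivity
  push_cast
  field_simp

lemma sum_pairs (D : Fin n → Fin n → ℝ) (hsymm : ∀ x y, D x y = D y x)
    (hdiag : ∀ x, D x x = 0) (w : Fin n → Fin n → ℝ) :
    ∑ x, ∑ y, w x y * D x y =
      ∑ q : {p : Fin n × Fin n // p.1 < p.2},
        (w q.1.1 q.1.2 + w q.1.2 q.1.1) * D q.1.1 q.1.2 := by
  classical
  have h1 : ∑ x, ∑ y, w x y * D x y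
      = ∑ q ∈ (Finset.univ : Finset (Fin n × Fin n)), w q.1 q.2 * D q.1 q.2 := by
    rw [← Finset.univ_product_univ, Finset.sum_product]
  have h2 := Finset.sum_filter_add_sum_filter_not (Finset.univ : Finset (Fin n × Fin n))
    (fun q => q.1 < q.2) (fun q => w q.1 q.2 * D q.1 q.2)
  have h3 : ∑ q ∈ Finset.univ.filter (fun q : Fin n × Fin n => ¬ q.1 < q.2),
      w q.1 q.2 * D q.1 q.2
      = ∑ q ∈ Finset.univ.filter (fun q : Fin n × Fin n => q.2 < q.1),
      w q.1 q.2 * D q.1 q.2 := by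
    refine (Finset.sum_subset ?_ ?_).symm
    · intro q hq
      simp only [Finset.mem_filter, Finset.mem_univ, true_and] at *
      exact not_lt_of_gt hq
    · intro q hq hq'
      simp only [Finset.mem_filter, Finset.mem_univ, true_and, not_lt] at *
      have : q.1 = q.2 := le_antisymm hq' hq
      rw [this, hdiag, mul_zero]
  have h4 : ∑ q ∈ Finset.univ.filter (fun q : Fin n × Fin n => q.2 < q.1),
      w q.1 q.2 * D q.1 q.2
      = ∑ q ∈ Finset.univ.filter (fun q : Fin n × Fin n => q.1 < q.2),
      w q.2 q.1 * D q.2 q.1 := by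
    refine Finset.sum_nbij' (fun q => Prod.swap q) (fun q => Prod.swap q) ?_ ?_ ?_ ?_ ?_
    · intro q hq; simp only [Finset.mem_filter, Finset.mem_univ, true_and] at *; exact hq
    · intro q hq; simp only [Finset.mem_filter, Finset.mem_univ, true_and] at *; exact hq
    · intro q _; simp
    · intro q _; simp
    · intro q _; simp
  have h5 : ∑ q ∈ Finset.univ.filter (fun q : Fin n × Fin n => q.1 < q.2),
      (w q.1 q.2 * D q.1 q.2 + w q.2 q.1 * D q.2 q.1)
      = ∑ q : {p : Fin n × Fin n // p.1 < p.2},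
        (w q.1.1 q.1.2 + w q.1.2 q.1.1) * D q.1.1 q.1.2 := by
    have hst : ∑ q ∈ Finset.univ.filter (fun q : Fin n × Fin n => q.1 < q.2),
        (w q.1 q.2 + w q.2 q.1) * D q.1 q.2
        = ∑ q : {p : Fin n × Fin n // p.1 < p.2},
          (w q.1.1 q.1.2 + w q.1.2 q.1.1) * D q.1.1 q.1.2 :=
      Finset.sum_subtype _ (fun q => by simp) _
    rw [← hst]
    refine Finset.sum_congr rfl fun q _ => ?_
    rw [hsymm q.2 q.1]
    ring
  rw [h1, ← h2, h3, h4, ← Finset.sum_add_distrib]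
  exact h5

lemma blockAvg_sub (p : Fin n → Fin k) (M N : Fin n → Fin n → ℝ) (x y : Fin n) :
    blockAvg p M x y - blockAvg p N x y = blockAvg p (fun u v => M u v - N u v) x y := by
  rw [blockAvg_eq, blockAvg_eq, blockAvg_eq, div_sub_div_same]
  congr 1
  rw [← Finset.sum_sub_distrib]
  exact Finset.sum_congr rfl fun u _ => (Finset.sum_sub_distrib _ _).symm

lemma blockAvg_nonneg (p : Fin n → Fin k) (M : Fin n → Fin n → ℝ)
    (hM : ∀ u v, 0 ≤ M u v) (x y : Fin n) : 0 ≤ blockAvg p M x y := by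
  rw [blockAvg_eq]
  apply div_nonneg
  · exact Finset.sum_nonneg fun u _ => Finset.sum_nonneg fun v _ => hM u v
  · positivity

/-- sign decomposition of the L1 norm of a blockwise-constant matrix -/
lemma exists_sign (p : Fin n → Fin k) (M N : Fin n → Fin n → ℝ) :
    ∃ S : Fin k → Fin k → Bool,
      matrixL1Norm n (fun x y => blockAvg p M x y - blockAvg p N x y) =
      (1 / (n : ℝ) ^ 2) * ∑ x, ∑ y,
        (if S (p x) (p y) then (1 : ℝ) else -1) * (M x y - N x y) := by
  set D : Fin n → Fin n → ℝ := fun u v => M u v - N u v with hD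
  refine ⟨fun i j => decide (0 ≤ ∑ u ∈ classOf p i, ∑ v ∈ classOf p j, D u v), ?_⟩
  unfold matrixL1Norm
  have key : ∀ x y : Fin n, |blockAvg p M x y - blockAvg p N x y| =
      (if decide (0 ≤ ∑ u ∈ classOf p (p x), ∑ v ∈ classOf p (p y), D u v)
        then (1:ℝ) else -1) * blockAvg p D x y := by
    intro x y
    rw [blockAvg_sub, ← hD]
    rw [blockAvg_eq]
    have hd : 0 < ((classOf p (p x)).card : ℝ) * ((classOf p (p y)).card : ℝ) :=
      mul_pos (classOf_card_pos p x) (classOf_card_pos p y)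
    simp only [decide_eq_true_eq]
    by_cases h : 0 ≤ ∑ u ∈ classOf p (p x), ∑ v ∈ classOf p (p y), D u v
    · rw [if_pos h, one_mul]
      exact abs_of_nonneg (div_nonneg h hd.le)
    · rw [if_neg h]
      push_neg at h
      rw [abs_of_neg (div_neg_of_neg_of_pos h hd)]
      ring
  rw [Finset.sum_congr rfl fun x _ => Finset.sum_congr rfl fun y _ => key x y]
  congr 1
  exact sum_weighted_blockAvg p
    (fun i j => if decide (0 ≤ ∑ u ∈ classOf p i, ∑ v ∈ classOf p j, D u v)
      then (1:ℝ) else -1) D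

/-- crude deterministic bound -/
lemma l1_le_sums (p : Fin n → Fin k) (M N : Fin n → Fin n → ℝ)
    (hM : ∀ u v, 0 ≤ M u v) (hN : ∀ u v, 0 ≤ N u v) :
    matrixL1Norm n (fun x y => blockAvg p M x y - blockAvg p N x y) ≤
      (1 / (n : ℝ) ^ 2) * ((∑ x, ∑ y, M x y) + ∑ x, ∑ y, N x y) := by
  unfold matrixL1Norm
  have h1 : ∀ x y : Fin n, |blockAvg p M x y - blockAvg p N x y| ≤
      blockAvg p M x y + blockAvg p N x y := by
    intro x y
    have := abs_sub (blockAvg p M x y) (blockAvg p N x y)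
    calc |blockAvg p M x y - blockAvg p N x y| ≤ |blockAvg p M x y| + |blockAvg p N x y| :=
          abs_sub _ _
      _ = blockAvg p M x y + blockAvg p N x y := by
          rw [abs_of_nonneg (blockAvg_nonneg p M hM x y),
            abs_of_nonneg (blockAvg_nonneg p N hN x y)]
  have h2 : ∑ x, ∑ y, |blockAvg p M x y - blockAvg p N x y| ≤
      ∑ x, ∑ y, (blockAvg p M x y + blockAvg p N x y) :=
    Finset.sum_le_sum fun x _ => Finset.sum_le_sum fun y _ => h1 x y
  have h3 : ∑ x, ∑ y, (blockAvg p M x y + blockAvg p N x y)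
      = (∑ x, ∑ y, M x y) + ∑ x, ∑ y, N x y := by
    have hM' := sum_weighted_blockAvg p (fun _ _ => (1:ℝ)) M
    have hN' := sum_weighted_blockAvg p (fun _ _ => (1:ℝ)) N
    simp only [one_mul] at hM' hN'
    rw [← hM', ← hN', ← Finset.sum_add_distrib]
    exact Finset.sum_congr rfl fun x _ => Finset.sum_add_distrib
  have hpos : (0:ℝ) ≤ 1 / (n : ℝ) ^ 2 := by positivity
  exact mul_le_mul_of_nonneg_left (h2.trans (le_of_eq h3)) hpos

end Aux

section Prob
variable {Ω : Type*} [MeasurableSpace Ω] {μ : Measure Ω}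

lemma integrable_bdd [IsFiniteMeasure μ] {f : Ω → ℝ} (hf : Measurable f) (C : ℝ)
    (h : ∀ ω, |f ω| ≤ C) : Integrable f μ := by
  refine Integrable.mono' (integrable_const C) hf.aestronglyMeasurable ?_
  exact Filter.Eventually.of_forall fun ω => by simpa [Real.norm_eq_abs] using h ω

lemma bern_integral [IsProbabilityMeasure μ] {X : Ω → ℝ} (hX : Measurable X)
    (hX01 : ∀ ω, X ω = 0 ∨ X ω = 1) {q : ℝ} (hq0 : 0 ≤ q)
    (hprob : μ {ω | X ω = 1} = ENNReal.ofReal q) :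
    ∫ ω, X ω ∂μ = q := by
  have hs : MeasurableSet {ω | X ω = 1} := hX (measurableSet_singleton 1)
  have hXi : X = Set.indicator {ω | X ω = 1} (fun _ => (1:ℝ)) := by
    funext ω
    rcases hX01 ω with h | h
    · rw [h, Set.indicator_of_notMem]
      simp [Set.mem_setOf_eq, h]
    · rw [h, Set.indicator_of_mem]
      exact h
  rw [hXi]
  rw [MeasureTheory.integral_indicator_const (1:ℝ) hs, measureReal_def, hprob]
  simp [ENNReal.toReal_ofReal hq0]

/-- mgf bound for a scaled centered Bernoulli -/
lemma bern_mgf [IsProbabilityMeasure μ] {X : Ω → ℝ} (hX : Measurable X)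
    (hX01 : ∀ ω, X ω = 0 ∨ X ω = 1) {q : ℝ} (hq0 : 0 ≤ q) (hq1 : q ≤ 1)
    (hprob : μ {ω | X ω = 1} = ENNReal.ofReal q)
    {c l : ℝ} (hc : |c| ≤ 2) (hl0 : 0 ≤ l) (hl : l ≤ 1/2) :
    ∫ ω, Real.exp (l * (c * (X ω - q))) ∂μ ≤ Real.exp (3 * l^2 * q) := by
  set v := l * c with hv
  have hvabs : |v| ≤ 1 := by
    rw [hv, abs_mul, abs_of_nonneg hl0]
    nlinarith [abs_nonneg c]
  -- pointwise identity
  have hpt : ∀ ω, Real.exp (l * (c * (X ω - q)))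
      = Real.exp (-(v*q)) * (1 + (Real.exp v - 1) * X ω) := by
    intro ω
    rcases hX01 ω with h | h
    · rw [h]; rw [show l * (c * (0 - q)) = -(v*q) by rw [hv]; ring]; ring
    · rw [h]; rw [show l * (c * (1 - q)) = v + -(v*q) by rw [hv]; ring]
      rw [Real.exp_add]; ring
  have hXint : Integrable X μ := by
    refine integrable_bdd hX 1 fun ω => ?_
    rcases hX01 ω with h | h <;> rw [h] <;> norm_num
  have hint : ∫ ω, Real.exp (l * (c * (X ω - q))) ∂μ
      = Real.exp (-(v*q)) * (1 + (Real.exp v - 1) * q) := by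
    rw [MeasureTheory.integral_congr_ae (Filter.Eventually.of_forall hpt)]
    rw [MeasureTheory.integral_const_mul]
    congr 1
    rw [MeasureTheory.integral_add (integrable_const 1) (hXint.const_mul _)]
    rw [MeasureTheory.integral_const, MeasureTheory.integral_const_mul]
    rw [bern_integral hX hX01 hq0 hprob]
    simp
  rw [hint]
  -- 1 + (e^v - 1) q ≤ exp ((e^v - 1) q)
  have h1 : 1 + (Real.exp v - 1) * q ≤ Real.exp ((Real.exp v - 1) * q) := by
    have := Real.add_one_le_exp ((Real.exp v - 1) * q)
    linarith
  have h2 : Real.exp (-(v*q)) * (1 + (Real.exp v - 1) * q)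
      ≤ Real.exp (q * (Real.exp v - 1 - v)) := by
    calc Real.exp (-(v*q)) * (1 + (Real.exp v - 1) * q)
        ≤ Real.exp (-(v*q)) * Real.exp ((Real.exp v - 1) * q) := by
          refine mul_le_mul_of_nonneg_left h1 (Real.exp_nonneg _)
      _ = Real.exp (q * (Real.exp v - 1 - v)) := by
          rw [← Real.exp_add]; congr 1; ring
  refine h2.trans (Real.exp_le_exp.mpr ?_)
  -- e^v - 1 - v ≤ (3/4) v^2 for |v| ≤ 1
  have h3 : Real.exp v - 1 - v ≤ (3/4) * v^2 := by
    have hb := Real.exp_bound hvabs (n := 3) (by norm_num)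
    have hsum : ∑ m ∈ Finset.range 3, v ^ m / m.factorial = 1 + v + v^2/2 := by
      norm_num [Finset.sum_range_succ, Nat.factorial]
    rw [hsum] at hb
    have hb' : Real.exp v - (1 + v + v^2/2) ≤ |v|^3 * (4 / (6 * 3)) := by
      have h := (abs_le.mp hb).2
      have e : ((3:ℕ).factorial : ℝ) * 3 = 6 * 3 := by norm_num [Nat.factorial]
      calc Real.exp v - (1 + v + v^2/2) ≤ |v|^3 * (↑(Nat.succ 3) / ((3:ℕ).factorial * 3)) := h
        _ = |v|^3 * (4 / (6*3)) := by norm_num [Nat.factorial]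
    have habs3 : |v|^3 ≤ v^2 := by
      have : |v|^3 = |v| * |v|^2 := by ring
      rw [this, sq_abs]
      nlinarith [abs_nonneg v, sq_nonneg v]
    nlinarith
  have hc2 : c^2 ≤ 4 := by nlinarith [sq_abs c, abs_nonneg c]
  have hv2 : v^2 ≤ 4 * l^2 := by
    have h := mul_le_mul_of_nonneg_left hc2 (sq_nonneg l)
    rw [hv]
    nlinarith [h]
  nlinarith
end Prob

section Tail
variable {Ω : Type*} [MeasurableSpace Ω] {μ : Measure Ω} [IsProbabilityMeasure μ] {n : ℕ}


lemma chernoff_sum {ι : Type*} [Fintype ι]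
    (Y : ι → Ω → ℝ) [IsProbabilityMeasure μ]
    (hYindep : iIndepFun Y μ)
    (hYmeas : ∀ i, Measurable (Y i))
    (hYbdd : ∀ i ω, |Y i ω| ≤ 2)
    (B : ι → ℝ) (l t : ℝ) (hl0 : 0 ≤ l)
    (hone : ∀ i, mgf (Y i) μ l ≤ Real.exp (B i)) :
    μ {ω | t ≤ ∑ i, Y i ω} ≤ ENNReal.ofReal (Real.exp ((∑ i, B i) - l * t)) := by
  classical
  have hint : Integrable (fun ω => Real.exp (l * ∑ i, Y i ω)) μ := by
    refine integrable_bdd ?_ (Real.exp (l * (2 * Fintype.card ι))) fun ω => ?_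
    · exact ((Finset.measurable_sum Finset.univ fun i _ => hYmeas i).const_mul l).exp
    · rw [abs_of_nonneg (Real.exp_nonneg _)]
      apply Real.exp_le_exp.mpr
      apply mul_le_mul_of_nonneg_left _ hl0
      calc ∑ i, Y i ω ≤ ∑ _i : ι, (2:ℝ) :=
            Finset.sum_le_sum fun i _ => (abs_le.mp (hYbdd i ω)).2
        _ = 2 * Fintype.card ι := by
            rw [Finset.sum_const, nsmul_eq_mul, Finset.card_univ]; ring
  have hchern := measure_ge_le_exp_mul_mgf (μ := μ) (X := fun ω => ∑ i, Y i ω) t hl0 hint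
  have hmgf : mgf (fun ω => ∑ i, Y i ω) μ l = ∏ i, mgf (Y i) μ l := by
    have hfun : (fun ω => ∑ i, Y i ω) = ∑ i, Y i := by
      ext ω; simp
    rw [hfun]
    exact hYindep.mgf_sum hYmeas Finset.univ
  have hprod : ∏ i, mgf (Y i) μ l ≤ Real.exp (∑ i, B i) := by
    calc ∏ i, mgf (Y i) μ l ≤ ∏ i, Real.exp (B i) :=
          Finset.prod_le_prod (fun i _ => mgf_nonneg) (fun i _ => hone i)
      _ = Real.exp (∑ i, B i) := by rw [Real.exp_sum]
  rw [← ENNReal.ofReal_toReal (measure_ne_top μ {ω | t ≤ ∑ i, Y i ω})]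
  apply ENNReal.ofReal_le_ofReal
  calc (μ {ω | t ≤ ∑ i, Y i ω}).toReal
      ≤ Real.exp (-l * t) * mgf (fun ω => ∑ i, Y i ω) μ l := hchern
    _ ≤ Real.exp (-l * t) * Real.exp (∑ i, B i) := by
        rw [hmgf]
        exact mul_le_mul_of_nonneg_left hprod (Real.exp_nonneg _)
    _ = Real.exp ((∑ i, B i) - l * t) := by
        rw [← Real.exp_add]; congr 1; ring

lemma tail_bound
    (Q : Fin n → Fin n → ℝ) (hQsymm : ∀ i j, Q i j = Q j i)
    (hQmem : ∀ i j, Q i j ∈ Set.Icc (0 : ℝ) 1) (hQdiag : ∀ i, Q i i = 0)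
    (A : Ω → Fin n → Fin n → ℝ)
    (hAmeas : ∀ i j, Measurable (fun ω => A ω i j))
    (hAval : ∀ ω i j, A ω i j = 0 ∨ A ω i j = 1)
    (hAsymm : ∀ ω i j, A ω i j = A ω j i)
    (hAdiag : ∀ ω i, A ω i i = 0)
    (hAindep : iIndepFun
      (fun p : {p : Fin n × Fin n // p.1 < p.2} => fun ω => A ω p.1.1 p.1.2) μ)
    (hAprob : ∀ i j, i < j → μ {ω | A ω i j = 1} = ENNReal.ofReal (Q i j))
    (w : Fin n → Fin n → ℝ) (hw : ∀ x y, |w x y| ≤ 1)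
    (l t : ℝ) (hl0 : 0 ≤ l) (hl : l ≤ 1/2) :
    μ {ω | t ≤ ∑ x, ∑ y, w x y * (A ω x y - Q x y)} ≤
      ENNReal.ofReal (Real.exp ((3/2) * l^2 * (∑ x, ∑ y, Q x y) - l * t)) := by
  classical
  have hsum : ∀ ω, ∑ x, ∑ y, w x y * (A ω x y - Q x y)
      = ∑ q : {p : Fin n × Fin n // p.1 < p.2},
          (w q.1.1 q.1.2 + w q.1.2 q.1.1) * (A ω q.1.1 q.1.2 - Q q.1.1 q.1.2) := by
    intro ω
    exact sum_pairs (fun x y => A ω x y - Q x y)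
      (fun x y => by show A ω x y - Q x y = A ω y x - Q y x; rw [hAsymm ω x y, hQsymm x y])
      (fun x => by show A ω x x - Q x x = 0; rw [hAdiag ω x, hQdiag x]; ring) w
  have hset : {ω | t ≤ ∑ x, ∑ y, w x y * (A ω x y - Q x y)}
      = {ω | t ≤ ∑ q : {p : Fin n × Fin n // p.1 < p.2},
          (w q.1.1 q.1.2 + w q.1.2 q.1.1) * (A ω q.1.1 q.1.2 - Q q.1.1 q.1.2)} := by
    ext ω; simp only [Set.mem_setOf_eq, hsum ω]
  rw [hset]
  have hcoef : ∀ q : {p : Fin n × Fin n // p.1 < p.2},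
      |w q.1.1 q.1.2 + w q.1.2 q.1.1| ≤ 2 := by
    intro q
    have h1 := abs_add_le (w q.1.1 q.1.2) (w q.1.2 q.1.1)
    have h2 := hw q.1.1 q.1.2
    have h3 := hw q.1.2 q.1.1
    linarith
  have hkey := chernoff_sum (μ := μ)
    (fun q : {p : Fin n × Fin n // p.1 < p.2} =>
      fun ω => (w q.1.1 q.1.2 + w q.1.2 q.1.1) * (A ω q.1.1 q.1.2 - Q q.1.1 q.1.2))
    (by
      exact hAindep.comp
        (fun q (v : ℝ) => (w q.1.1 q.1.2 + w q.1.2 q.1.1) * (v - Q q.1.1 q.1.2))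
        (fun q => (measurable_id.sub_const _).const_mul _))
    (fun q => ((hAmeas q.1.1 q.1.2).sub measurable_const).const_mul _)
    (by
      intro q ω
      have h2 : |A ω q.1.1 q.1.2 - Q q.1.1 q.1.2| ≤ 1 := by
        have hQm := hQmem q.1.1 q.1.2
        simp only [Set.mem_Icc] at hQm
        rcases hAval ω q.1.1 q.1.2 with h | h <;> rw [h, abs_le] <;>
          constructor <;> linarith [hQm.1, hQm.2]
      calc |(w q.1.1 q.1.2 + w q.1.2 q.1.1) * (A ω q.1.1 q.1.2 - Q q.1.1 q.1.2)|
          = |w q.1.1 q.1.2 + w q.1.2 q.1.1| * |A ω q.1.1 q.1.2 - Q q.1.1 q.1.2| := abs_mul _ _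
        _ ≤ 2 * 1 := mul_le_mul (hcoef q) h2 (abs_nonneg _) (by norm_num)
        _ = 2 := by norm_num)
    (fun q : {p : Fin n × Fin n // p.1 < p.2} => 3 * l^2 * Q q.1.1 q.1.2) l t hl0
    (by
      intro q
      have hQm := hQmem q.1.1 q.1.2
      simp only [Set.mem_Icc] at hQm
      exact bern_mgf (μ := μ) (hAmeas q.1.1 q.1.2) (fun ω => hAval ω q.1.1 q.1.2)
        hQm.1 hQm.2 (hAprob q.1.1 q.1.2 q.2) (hcoef q) hl0 hl)
  refine hkey.trans (ENNReal.ofReal_le_ofReal (Real.exp_le_exp.mpr ?_))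
  have hQsum : ∑ q : {p : Fin n × Fin n // p.1 < p.2}, Q q.1.1 q.1.2
      = (1/2) * ∑ x, ∑ y, Q x y := by
    have h := sum_pairs Q hQsymm hQdiag (fun _ _ => (1/2 : ℝ))
    have hL : ∑ x, ∑ y, (1/2 : ℝ) * Q x y = (1/2) * ∑ x, ∑ y, Q x y := by
      rw [Finset.mul_sum]
      exact Finset.sum_congr rfl fun x _ => by rw [Finset.mul_sum]
    have hR : ∑ q : {p : Fin n × Fin n // p.1 < p.2}, ((1/2 : ℝ) + 1/2) * Q q.1.1 q.1.2
        = ∑ q : {p : Fin n × Fin n // p.1 < p.2}, Q q.1.1 q.1.2 := by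
      norm_num
    rw [← hR, ← h, hL]
  have : ∑ q : {p : Fin n × Fin n // p.1 < p.2}, 3 * l^2 * Q q.1.1 q.1.2
      = (3/2) * l^2 * (∑ x, ∑ y, Q x y) := by
    rw [← Finset.mul_sum, hQsum]; ring
  rw [this]

end Tail

lemma le_mul_sqrt {a r b : ℝ} (ha : 0 ≤ a) (hr : 0 ≤ r) (h : a^2 ≤ r^2 * b) :
    a ≤ r * Real.sqrt b := by
  rcases le_or_gt b 0 with hb | hb
  · have : a^2 ≤ 0 := h.trans (by nlinarith)
    have ha0 : a = 0 := by nlinarith [sq_nonneg a]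
    rw [ha0]
    positivity
  calc a = Real.sqrt (a^2) := (Real.sqrt_sq ha).symm
    _ ≤ Real.sqrt (r^2 * b) := Real.sqrt_le_sqrt h
    _ = r * Real.sqrt b := by
        rw [Real.sqrt_mul (sq_nonneg r), Real.sqrt_sq hr]

section Main
variable {Ω : Type*} [MeasurableSpace Ω] {μ : Measure Ω} [IsProbabilityMeasure μ] {n k : ℕ}

set_option maxHeartbeats 2000000 in
lemma key_bad
    (hk : 1 ≤ k) (hkn : k ≤ n)
    (Q : Fin n → Fin n → ℝ)
    (hQsymm : ∀ i j, Q i j = Q j i)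
    (hQmem : ∀ i j, Q i j ∈ Set.Icc (0 : ℝ) 1)
    (hQdiag : ∀ i, Q i i = 0)
    (A : Ω → Fin n → Fin n → ℝ)
    (hAmeas : ∀ i j, Measurable (fun ω => A ω i j))
    (hAval : ∀ ω i j, A ω i j = 0 ∨ A ω i j = 1)
    (hAsymm : ∀ ω i j, A ω i j = A ω j i)
    (hAdiag : ∀ ω i, A ω i i = 0)
    (hAindep : iIndepFun
      (fun p : {p : Fin n × Fin n // p.1 < p.2} => fun ω => A ω p.1.1 p.1.2) μ)
    (hAprob : ∀ i j, i < j → μ {ω | A ω i j = 1} = ENNReal.ofReal (Q i j))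
    (hnρ : 1 ≤ (n : ℝ) * matrixDensity n Q) :
    ∃ Bad : Set Ω, MeasurableSet Bad ∧
      μ Bad ≤ ENNReal.ofReal (Real.exp (-(n:ℝ))) ∧
      ∀ ω ∉ Bad, (⨆ p : Fin n → Fin k,
          matrixL1Norm n (fun x y => blockAvg p (A ω) x y - blockAvg p Q x y)) ≤
        8 * Real.sqrt (matrixDensity n Q *
          ((1 + Real.log k) / n + (k : ℝ) ^ 2 / (n : ℝ) ^ 2)) := by
  classical
  haveI : Nonempty (Fin n → Fin k) := ⟨fun _ => ⟨0, hk⟩⟩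
  have hn : 0 < n := lt_of_lt_of_le hk hkn
  have hn' : (0:ℝ) < n := by exact_mod_cast hn
  set ρ := matrixDensity n Q with hρdef
  set c := (1 + Real.log k) / n + (k : ℝ) ^ 2 / (n : ℝ) ^ 2 with hcdef
  have hSQ : ∑ x, ∑ y, Q x y = (n:ℝ)^2 * ρ := by
    rw [hρdef]; unfold matrixDensity; field_simp
  have hρ0 : 0 ≤ ρ := by
    rw [hρdef]; unfold matrixDensity
    have : 0 ≤ ∑ x, ∑ y, Q x y :=
      Finset.sum_nonneg fun x _ => Finset.sum_nonneg fun y _ => (hQmem x y).1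
    positivity
  have hρpos : 0 < ρ := by nlinarith
  clear_value ρ
  have hlogk : 0 ≤ Real.log k := Real.log_nonneg (by exact_mod_cast hk)
  have hcge : 1 / (n:ℝ) ≤ c := by
    rw [hcdef]
    have h1 : 1/(n:ℝ) ≤ (1 + Real.log k)/n := by
      gcongr
      linarith
    have h2 : 0 ≤ (k:ℝ)^2/(n:ℝ)^2 := by positivity
    linarith
  have hcpos : 0 < c := lt_of_lt_of_le (by positivity) hcge
  clear_value c
  have hnc : 1 ≤ (n:ℝ) * c := by
    have := mul_le_mul_of_nonneg_left hcge hn'.le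
    rw [mul_one_div, div_self hn'.ne'] at this
    exact this
  set τ : ℝ := 8 * Real.sqrt (ρ * c) with hτdef
  clear_value τ
  by_cases hcase : ρ ≤ (25/4) * c
  -- CASE A
  · set l : ℝ := 1 / (2 * Real.sqrt (ρ * (n:ℝ))) with hldef
    have hsqrtρn : 1 ≤ Real.sqrt (ρ * n) := by
      rw [show (1:ℝ) = Real.sqrt 1 from (Real.sqrt_one).symm]
      exact Real.sqrt_le_sqrt (by nlinarith)
    have hsqrtρn0 : 0 < Real.sqrt (ρ * n) := lt_of_lt_of_le one_pos hsqrtρn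
    have hl0 : 0 ≤ l := by rw [hldef]; positivity
    have hl : l ≤ 1/2 := by
      rw [hldef, div_le_div_iff₀ (by positivity) (by norm_num)]
      nlinarith
    have htail := tail_bound Q hQsymm hQmem hQdiag A hAmeas hAval hAsymm hAdiag hAindep hAprob
      (fun _ _ => (1:ℝ)) (fun x y => by norm_num) l (3 * Real.sqrt (ρ * c) * (n:ℝ)^2) hl0 hl
    refine ⟨{ω | 3 * Real.sqrt (ρ * c) * (n:ℝ)^2 ≤
        ∑ x, ∑ y, (1:ℝ) * (A ω x y - Q x y)}, ?_, ?_, ?_⟩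
    · apply measurableSet_le measurable_const
      apply Finset.measurable_sum
      intro x _
      apply Finset.measurable_sum
      intro y _
      exact ((hAmeas x y).sub measurable_const).const_mul _
    · refine htail.trans (ENNReal.ofReal_le_ofReal (Real.exp_le_exp.mpr ?_))
      rw [hSQ]
      have hlsq : l^2 = 1 / (4 * (ρ * n)) := by
        rw [hldef, div_pow, mul_pow, Real.sq_sqrt (by positivity)]
        norm_num
      have h1 : (3/2) * l^2 * ((n:ℝ)^2 * ρ) = (3/8) * n := by
        rw [hlsq]; field_simp; ring
      have h2 : (3/2) * (n:ℝ) ≤ l * (3 * Real.sqrt (ρ * c) * (n:ℝ)^2) := by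
        have hkey : Real.sqrt (ρ * n) ≤ n * Real.sqrt (ρ * c) := by
          calc Real.sqrt (ρ * n) ≤ Real.sqrt ((n:ℝ)^2 * (ρ * c)) := by
                apply Real.sqrt_le_sqrt
                nlinarith
            _ = n * Real.sqrt (ρ * c) := by
                rw [Real.sqrt_mul (by positivity), Real.sqrt_sq hn'.le]
        have e : l * (3 * Real.sqrt (ρ * c) * (n:ℝ)^2)
            = (3 * (Real.sqrt (ρ * c) * (n:ℝ)^2)) / (2 * Real.sqrt (ρ * (n:ℝ))) := by
          rw [hldef]; ring
        rw [e, le_div_iff₀ (by positivity)]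
        nlinarith [mul_le_mul_of_nonneg_left hkey (by positivity : (0:ℝ) ≤ 3 * (n:ℝ))]
      linarith
    · intro ω hω
      simp only [Set.mem_setOf_eq, not_le] at hω
      have hsub : ∑ x, ∑ y, (1:ℝ) * (A ω x y - Q x y)
          = (∑ x, ∑ y, A ω x y) - ∑ x, ∑ y, Q x y := by
        simp only [one_mul]
        rw [← Finset.sum_sub_distrib]
        exact Finset.sum_congr rfl fun x _ => Finset.sum_sub_distrib _ _
      rw [hsub, hSQ] at hω
      have hAnn : ∀ u v, 0 ≤ A ω u v := by
        intro u v; rcases hAval ω u v with h | h <;> rw [h] <;> norm_num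
      refine ciSup_le fun p => ?_
      have hdet := l1_le_sums p (A ω) Q hAnn (fun u v => (hQmem u v).1)
      have h2ρ : 2 * ρ ≤ 5 * Real.sqrt (ρ * c) := by
        apply le_mul_sqrt (by positivity) (by norm_num)
        nlinarith [mul_le_mul_of_nonneg_left hcase hρ0]
      calc matrixL1Norm n (fun x y => blockAvg p (A ω) x y - blockAvg p Q x y)
          ≤ (1 / (n:ℝ)^2) * ((∑ x, ∑ y, A ω x y) + ∑ x, ∑ y, Q x y) := hdet
        _ ≤ (1 / (n:ℝ)^2) * ((3 * Real.sqrt (ρ * c) * (n:ℝ)^2 + (n:ℝ)^2 * ρ) + (n:ℝ)^2 * ρ) := by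
            apply mul_le_mul_of_nonneg_left _ (by positivity)
            rw [hSQ]
            linarith
        _ = 3 * Real.sqrt (ρ * c) + 2 * ρ := by field_simp; ring
        _ ≤ τ := by rw [hτdef]; linarith
  -- CASE B
  · push_neg at hcase
    obtain ⟨l, hl0, hl, hexp⟩ : ∃ l : ℝ, 0 ≤ l ∧ l ≤ 1/2 ∧
        (3/2) * l^2 * ((n:ℝ)^2 * ρ) - l * (τ * (n:ℝ)^2) ≤ -((n:ℝ)^2 * c) := by
      by_cases hcc : c ≤ ρ/16
      · refine ⟨2 * Real.sqrt (c/ρ), by positivity, ?_, ?_⟩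
        · have hcr : c/ρ ≤ 1/16 := by rw [div_le_iff₀ hρpos]; linarith
          have h14 : Real.sqrt (c/ρ) ≤ 1/4 := by
            calc Real.sqrt (c/ρ) ≤ Real.sqrt (1/16) := Real.sqrt_le_sqrt hcr
              _ = 1/4 := by
                  rw [show (1/16:ℝ) = (1/4)^2 by norm_num, Real.sqrt_sq (by norm_num)]
          linarith
        · have hlsq : (2 * Real.sqrt (c/ρ))^2 = 4 * (c/ρ) := by
            rw [mul_pow, Real.sq_sqrt (by positivity)]
            norm_num
          have e1 : (3/2) * (2 * Real.sqrt (c/ρ))^2 * ((n:ℝ)^2 * ρ) = 6 * (c * (n:ℝ)^2) := by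
            rw [hlsq]
            field_simp
            ring
          have hsqrtprod : Real.sqrt (c/ρ) * Real.sqrt (ρ*c) = c := by
            rw [← Real.sqrt_mul (by positivity)]
            rw [show (c/ρ)*(ρ*c) = c^2 by field_simp]
            exact Real.sqrt_sq hcpos.le
          have e2 : (2 * Real.sqrt (c/ρ)) * (τ * (n:ℝ)^2) = 16 * (c * (n:ℝ)^2) := by
            rw [hτdef]
            calc (2 * Real.sqrt (c/ρ)) * (8 * Real.sqrt (ρ*c) * (n:ℝ)^2)
                = 16 * (Real.sqrt (c/ρ) * Real.sqrt (ρ*c)) * (n:ℝ)^2 := by ring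
              _ = 16 * (c * (n:ℝ)^2) := by rw [hsqrtprod]; ring
          rw [e1, e2]
          have h0 : 0 ≤ c * (n:ℝ)^2 := by positivity
          nlinarith
      · push_neg at hcc
        refine ⟨1/2, by norm_num, le_refl _, ?_⟩
        have hsq : ρ/4 ≤ Real.sqrt (ρ*c) := by
          have h := le_mul_sqrt (a := ρ/4) (r := 1) (b := ρ*c) (by linarith)
            (by norm_num) (by nlinarith)
          linarith
        rw [hτdef]
        nlinarith [mul_le_mul_of_nonneg_right hsq (sq_nonneg (n:ℝ)),
          mul_lt_mul_of_pos_right hcase (by positivity : (0:ℝ) < (n:ℝ)^2),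
          mul_lt_mul_of_pos_right hcc (by positivity : (0:ℝ) < (n:ℝ)^2)]
    refine ⟨⋃ i : (Fin n → Fin k) × (Fin k → Fin k → Bool),
      {ω | τ * (n:ℝ)^2 ≤ ∑ x, ∑ y,
        (if i.2 (i.1 x) (i.1 y) then (1:ℝ) else -1) * (A ω x y - Q x y)}, ?_, ?_, ?_⟩
    · refine MeasurableSet.iUnion fun i => measurableSet_le measurable_const ?_
      apply Finset.measurable_sum
      intro x _
      apply Finset.measurable_sum
      intro y _
      exact ((hAmeas x y).sub measurable_const).const_mul _
    · have hTail : ∀ i : (Fin n → Fin k) × (Fin k → Fin k → Bool),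
          μ {ω | τ * (n:ℝ)^2 ≤ ∑ x, ∑ y,
            (if i.2 (i.1 x) (i.1 y) then (1:ℝ) else -1) * (A ω x y - Q x y)} ≤
          ENNReal.ofReal (Real.exp ((3/2) * l^2 * ((n:ℝ)^2 * ρ) - l * (τ * (n:ℝ)^2))) := by
        intro i
        have := tail_bound Q hQsymm hQmem hQdiag A hAmeas hAval hAsymm hAdiag hAindep hAprob
          (fun x y => if i.2 (i.1 x) (i.1 y) then (1:ℝ) else -1)
          (fun x y => by split <;> norm_num) l (τ * (n:ℝ)^2) hl0 hl
        rw [hSQ] at this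
        exact this
      calc μ (⋃ i : (Fin n → Fin k) × (Fin k → Fin k → Bool),
            {ω | τ * (n:ℝ)^2 ≤ ∑ x, ∑ y,
              (if i.2 (i.1 x) (i.1 y) then (1:ℝ) else -1) * (A ω x y - Q x y)})
          ≤ ∑' i : (Fin n → Fin k) × (Fin k → Fin k → Bool),
            μ {ω | τ * (n:ℝ)^2 ≤ ∑ x, ∑ y,
              (if i.2 (i.1 x) (i.1 y) then (1:ℝ) else -1) * (A ω x y - Q x y)} :=
            measure_iUnion_le _
        _ = ∑ i : (Fin n → Fin k) × (Fin k → Fin k → Bool),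
            μ {ω | τ * (n:ℝ)^2 ≤ ∑ x, ∑ y,
              (if i.2 (i.1 x) (i.1 y) then (1:ℝ) else -1) * (A ω x y - Q x y)} :=
            tsum_fintype _
        _ ≤ ∑ _i : (Fin n → Fin k) × (Fin k → Fin k → Bool),
            ENNReal.ofReal (Real.exp ((3/2) * l^2 * ((n:ℝ)^2 * ρ) - l * (τ * (n:ℝ)^2))) :=
            Finset.sum_le_sum fun i _ => hTail i
        _ = (Fintype.card ((Fin n → Fin k) × (Fin k → Fin k → Bool)) : ENNReal) *
            ENNReal.ofReal (Real.exp ((3/2) * l^2 * ((n:ℝ)^2 * ρ) - l * (τ * (n:ℝ)^2))) := by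
            rw [Finset.sum_const, Finset.card_univ, nsmul_eq_mul]
        _ ≤ ENNReal.ofReal (Real.exp (-(n:ℝ))) := ?_
      rw [← ENNReal.ofReal_natCast, ← ENNReal.ofReal_mul (by positivity)]
      apply ENNReal.ofReal_le_ofReal
      have hcard : (Fintype.card ((Fin n → Fin k) × (Fin k → Fin k → Bool)) : ℝ)
          = (k:ℝ)^n * (2:ℝ)^(k*k) := by
        rw [Fintype.card_prod, Fintype.card_fun, Fintype.card_fun, Fintype.card_fun,
          Fintype.card_fin, Fintype.card_fin, Fintype.card_bool, ← pow_mul]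
        push_cast
        ring
      rw [hcard]
      have hkR : (0:ℝ) < k := by exact_mod_cast hk
      have e1 : ((k:ℝ))^n = Real.exp (n * Real.log k) := by
        rw [Real.exp_nat_mul, Real.exp_log hkR]
      have e2 : ((2:ℝ))^(k*k) = Real.exp ((k*k : ℕ) * Real.log 2) := by
        rw [Real.exp_nat_mul, Real.exp_log (by norm_num : (0:ℝ) < 2)]
      rw [e1, e2, ← Real.exp_add, ← Real.exp_add]
      apply Real.exp_le_exp.mpr
      have hn2c : (n:ℝ)^2 * c = n * (1 + Real.log k) + (k:ℝ)^2 := by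
        rw [hcdef]
        field_simp
      have hlog2 : Real.log 2 ≤ 1 := by
        have h := Real.log_le_sub_one_of_pos (by norm_num : (0:ℝ) < 2)
        linarith
      have hkk : ((k*k : ℕ) : ℝ) = (k:ℝ)^2 := by push_cast; ring
      have hk2 : (0:ℝ) ≤ (k:ℝ)^2 := by positivity
      have hlogk2 : 0 ≤ Real.log 2 := Real.log_nonneg (by norm_num)
      rw [hkk]
      nlinarith [hexp, hn2c]
    · intro ω hω
      simp only [Set.mem_iUnion, Set.mem_setOf_eq, not_exists, not_le] at hω
      refine ciSup_le fun p => ?_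
      obtain ⟨S, hS⟩ := exists_sign p (A ω) Q
      have hlt : ∑ x, ∑ y, (if S (p x) (p y) then (1:ℝ) else -1) * (A ω x y - Q x y)
          < τ * (n:ℝ)^2 := hω (p, S)
      rw [hS]
      have hn2 : (0:ℝ) < (n:ℝ)^2 := by positivity
      calc (1 / (n:ℝ)^2) * ∑ x, ∑ y,
            (if S (p x) (p y) then (1:ℝ) else -1) * (A ω x y - Q x y)
          ≤ (1 / (n:ℝ)^2) * (τ * (n:ℝ)^2) :=
            mul_le_mul_of_nonneg_left hlt.le (by positivity)
        _ = τ := by field_simp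

end Main

set_option maxHeartbeats 2000000 in
/-- Concentration of block averages for `A = Bern(Q)`:
with `ε = max_{π : [n]→[k]} ‖A_π - Q_π‖₁`, we have
`E[ε] ≤ 9 √(ρ(Q)((1+log k)/n + k²/n²))`, and if `nρ(Q) ≥ 1` then
`ε ≤ 8 √(ρ(Q)((1+log k)/n + k²/n²))` with probability at least `1 - e^{-n}`. -/
theorem blockAvg_concentration
    {Ω : Type*} [MeasurableSpace Ω] (μ : Measure Ω) [IsProbabilityMeasure μ]
    (n k : ℕ) (hk : 1 ≤ k) (hkn : k ≤ n)
    (Q : Fin n → Fin n → ℝ)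
    (hQsymm : ∀ i j, Q i j = Q j i)
    (hQmem : ∀ i j, Q i j ∈ Set.Icc (0 : ℝ) 1)
    (hQdiag : ∀ i, Q i i = 0)
    (A : Ω → Fin n → Fin n → ℝ)
    (hAmeas : ∀ i j, Measurable (fun ω => A ω i j))
    (hAval : ∀ ω i j, A ω i j = 0 ∨ A ω i j = 1)
    (hAsymm : ∀ ω i j, A ω i j = A ω j i)
    (hAdiag : ∀ ω i, A ω i i = 0)
    (hAindep : iIndepFun
      (fun p : {p : Fin n × Fin n // p.1 < p.2} => fun ω => A ω p.1.1 p.1.2) μ)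
    (hAprob : ∀ i j, i < j → μ {ω | A ω i j = 1} = ENNReal.ofReal (Q i j)) :
    (∫ ω, (⨆ p : Fin n → Fin k,
        matrixL1Norm n (fun x y => blockAvg p (A ω) x y - blockAvg p Q x y)) ∂μ ≤
      9 * Real.sqrt (matrixDensity n Q *
        ((1 + Real.log k) / n + (k : ℝ) ^ 2 / (n : ℝ) ^ 2))) ∧
    (1 ≤ (n : ℝ) * matrixDensity n Q →
      ENNReal.ofReal (1 - Real.exp (-(n : ℝ))) ≤
        μ {ω | (⨆ p : Fin n → Fin k,
            matrixL1Norm n (fun x y => blockAvg p (A ω) x y - blockAvg p Q x y)) ≤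
          8 * Real.sqrt (matrixDensity n Q *
            ((1 + Real.log k) / n + (k : ℝ) ^ 2 / (n : ℝ) ^ 2))}) := by
  classical
  haveI : Nonempty (Fin n → Fin k) := ⟨fun _ => ⟨0, hk⟩⟩
  have hn : 0 < n := lt_of_lt_of_le hk hkn
  have hn' : (0:ℝ) < n := by exact_mod_cast hn
  -- Part 2 first (it is used only via key_bad)
  have part2 : 1 ≤ (n : ℝ) * matrixDensity n Q →
      ENNReal.ofReal (1 - Real.exp (-(n : ℝ))) ≤
        μ {ω | (⨆ p : Fin n → Fin k,
            matrixL1Norm n (fun x y => blockAvg p (A ω) x y - blockAvg p Q x y)) ≤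
          8 * Real.sqrt (matrixDensity n Q *
            ((1 + Real.log k) / n + (k : ℝ) ^ 2 / (n : ℝ) ^ 2))} := by
    intro hnρ
    obtain ⟨Bad, hBadm, hBadμ, hgood⟩ := key_bad (μ := μ) hk hkn Q hQsymm hQmem hQdiag
      A hAmeas hAval hAsymm hAdiag hAindep hAprob hnρ
    calc ENNReal.ofReal (1 - Real.exp (-(n:ℝ)))
        = 1 - ENNReal.ofReal (Real.exp (-(n:ℝ))) := by
          rw [ENNReal.ofReal_sub _ (Real.exp_nonneg _), ENNReal.ofReal_one]
      _ ≤ 1 - μ Bad := tsub_le_tsub_left hBadμ 1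
      _ = μ Badᶜ := (prob_compl_eq_one_sub hBadm).symm
      _ ≤ _ := measure_mono (fun ω hω => hgood ω hω)
  refine ⟨?_, part2⟩
  -- preliminaries for part 1
  set ρ := matrixDensity n Q with hρdef
  set c := (1 + Real.log k) / n + (k : ℝ) ^ 2 / (n : ℝ) ^ 2 with hcdef
  have hSQ : ∑ x, ∑ y, Q x y = (n:ℝ)^2 * ρ := by
    rw [hρdef]; unfold matrixDensity; field_simp
  have hρ0 : 0 ≤ ρ := by
    rw [hρdef]; unfold matrixDensity
    have : 0 ≤ ∑ x, ∑ y, Q x y :=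
      Finset.sum_nonneg fun x _ => Finset.sum_nonneg fun y _ => (hQmem x y).1
    positivity
  have hlogk : 0 ≤ Real.log k := Real.log_nonneg (by exact_mod_cast hk)
  have hcge : 1 / (n:ℝ) ≤ c := by
    rw [hcdef]
    have h1 : 1/(n:ℝ) ≤ (1 + Real.log k)/n := by
      gcongr
      linarith
    have h2 : 0 ≤ (k:ℝ)^2/(n:ℝ)^2 := by positivity
    linarith
  have hcpos : 0 < c := lt_of_lt_of_le (by positivity) hcge
  have hQ1 : ∑ x, ∑ y, Q x y ≤ (n:ℝ)^2 := by
    calc ∑ x, ∑ y, Q x y ≤ ∑ _x : Fin n, ∑ _y : Fin n, (1:ℝ) :=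
          Finset.sum_le_sum fun x _ => Finset.sum_le_sum fun y _ => (hQmem x y).2
      _ = (n:ℝ)^2 := by
          simp [Finset.sum_const, Finset.card_univ]
          ring
  have hA1 : ∀ ω, ∑ x, ∑ y, A ω x y ≤ (n:ℝ)^2 := by
    intro ω
    calc ∑ x, ∑ y, A ω x y ≤ ∑ _x : Fin n, ∑ _y : Fin n, (1:ℝ) := by
          refine Finset.sum_le_sum fun x _ => Finset.sum_le_sum fun y _ => ?_
          rcases hAval ω x y with h | h <;> rw [h] <;> norm_num
      _ = (n:ℝ)^2 := by
          simp [Finset.sum_const, Finset.card_univ]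
          ring
  have hAnn : ∀ ω u v, 0 ≤ A ω u v := by
    intro ω u v; rcases hAval ω u v with h | h <;> rw [h] <;> norm_num
  have hA0 : ∀ ω, 0 ≤ ∑ x, ∑ y, A ω x y := fun ω =>
    Finset.sum_nonneg fun x _ => Finset.sum_nonneg fun y _ => hAnn ω x y
  have hdet : ∀ ω, (⨆ p : Fin n → Fin k,
      matrixL1Norm n (fun x y => blockAvg p (A ω) x y - blockAvg p Q x y)) ≤
      (1 / (n:ℝ)^2) * ((∑ x, ∑ y, A ω x y) + ∑ x, ∑ y, Q x y) := by
    intro ω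
    exact ciSup_le fun p => l1_le_sums p (A ω) Q (hAnn ω) (fun u v => (hQmem u v).1)
  have hsup0 : ∀ ω, 0 ≤ (⨆ p : Fin n → Fin k,
      matrixL1Norm n (fun x y => blockAvg p (A ω) x y - blockAvg p Q x y)) := by
    intro ω
    have hp0 : (0:ℝ) ≤ matrixL1Norm n (fun x y =>
        blockAvg (fun _ => (⟨0, hk⟩ : Fin k)) (A ω) x y -
        blockAvg (fun _ => (⟨0, hk⟩ : Fin k)) Q x y) := by
      unfold matrixL1Norm
      have : 0 ≤ ∑ x : Fin n, ∑ y : Fin n, |blockAvg (fun _ => (⟨0, hk⟩ : Fin k)) (A ω) x y -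
          blockAvg (fun _ => (⟨0, hk⟩ : Fin k)) Q x y| :=
        Finset.sum_nonneg fun x _ => Finset.sum_nonneg fun y _ => abs_nonneg _
      positivity
    exact hp0.trans (le_ciSup (f := fun p : Fin n → Fin k => matrixL1Norm n
      (fun x y => blockAvg p (A ω) x y - blockAvg p Q x y))
      (Finite.bddAbove_range _) (fun _ => (⟨0, hk⟩ : Fin k)))
  have hsup2 : ∀ ω, (⨆ p : Fin n → Fin k,
      matrixL1Norm n (fun x y => blockAvg p (A ω) x y - blockAvg p Q x y)) ≤ 2 := by
    intro ω
    refine (hdet ω).trans ?_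
    have := hA1 ω
    have h2 : (1 / (n:ℝ)^2) * ((n:ℝ)^2 + (n:ℝ)^2) = 2 := by field_simp; ring
    calc (1 / (n:ℝ)^2) * ((∑ x, ∑ y, A ω x y) + ∑ x, ∑ y, Q x y)
        ≤ (1 / (n:ℝ)^2) * ((n:ℝ)^2 + (n:ℝ)^2) := by
          apply mul_le_mul_of_nonneg_left _ (by positivity)
          linarith
      _ = 2 := h2
  -- measurability of the sup
  have hblockmeas : ∀ (p : Fin n → Fin k) x y, Measurable (fun ω => blockAvg p (A ω) x y) := by
    intro p x y
    unfold blockAvg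
    by_cases h : (classOf p (p x)).card = 0 ∨ (classOf p (p y)).card = 0
    · simp only [h, if_true]
      exact measurable_const
    · simp only [h, if_false]
      apply Measurable.div _ measurable_const
      apply Finset.measurable_sum
      intro u _
      apply Finset.measurable_sum
      intro v _
      exact hAmeas u v
  have hFmeas : ∀ p : Fin n → Fin k, Measurable (fun ω =>
      matrixL1Norm n (fun x y => blockAvg p (A ω) x y - blockAvg p Q x y)) := by
    intro p
    unfold matrixL1Norm
    apply Measurable.const_mul
    apply Finset.measurable_sum
    intro x _
    apply Finset.measurable_sum
    intro y _
    exact ((hblockmeas p x y).sub measurable_const).abs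
  have hεmeas : Measurable (fun ω => ⨆ p : Fin n → Fin k,
      matrixL1Norm n (fun x y => blockAvg p (A ω) x y - blockAvg p Q x y)) :=
    Measurable.iSup fun p => hFmeas p
  have hεint : Integrable (fun ω => ⨆ p : Fin n → Fin k,
      matrixL1Norm n (fun x y => blockAvg p (A ω) x y - blockAvg p Q x y)) μ :=
    integrable_bdd hεmeas 2 (fun ω => abs_le.mpr ⟨by linarith [hsup0 ω], hsup2 ω⟩)
  by_cases hnρ : 1 ≤ (n : ℝ) * ρ
  · -- use the bad event
    obtain ⟨Bad, hBadm, hBadμ, hgood⟩ := key_bad (μ := μ) hk hkn Q hQsymm hQmem hQdiag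
      A hAmeas hAval hAsymm hAdiag hAindep hAprob hnρ
    have hτ0 : 0 ≤ 8 * Real.sqrt (ρ * c) := by positivity
    have hpt : ∀ ω, (⨆ p : Fin n → Fin k,
        matrixL1Norm n (fun x y => blockAvg p (A ω) x y - blockAvg p Q x y)) ≤
        8 * Real.sqrt (ρ * c) + Bad.indicator (fun _ => (2:ℝ)) ω := by
      intro ω
      by_cases hω : ω ∈ Bad
      · rw [Set.indicator_of_mem hω]
        linarith [hsup2 ω]
      · rw [Set.indicator_of_notMem hω]
        have := hgood ω hω
        rw [← hρdef, ← hcdef] at this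
        linarith
    have hindint : Integrable (Bad.indicator (fun _ => (2:ℝ))) μ :=
      (integrable_const (2:ℝ)).indicator hBadm
    have hrhsint : Integrable (fun ω => 8 * Real.sqrt (ρ * c) +
        Bad.indicator (fun _ => (2:ℝ)) ω) μ :=
      (integrable_const _).add hindint
    have hbadR : (μ Bad).toReal ≤ Real.exp (-(n:ℝ)) :=
      ENNReal.toReal_le_of_le_ofReal (Real.exp_nonneg _) hBadμ
    have h2e : 2 * Real.exp (-(n:ℝ)) ≤ Real.sqrt (ρ * c) := by
      have hρn : 1/(n:ℝ) ≤ ρ := by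
        rw [div_le_iff₀ hn']
        linarith [mul_comm ρ (n:ℝ)]
      have h1 : 1/(n:ℝ) ≤ Real.sqrt (ρ * c) := by
        have := le_mul_sqrt (a := 1/(n:ℝ)) (r := 1) (b := ρ*c) (by positivity)
          (by norm_num)
          (by
            have := mul_le_mul hρn hcge (by positivity) hρ0
            nlinarith)
        linarith
      have hhalf : (1:ℝ) + (n:ℝ)/2 ≤ Real.exp ((n:ℝ)/2) := by
        have := Real.add_one_le_exp ((n:ℝ)/2)
        linarith
      have hexpn : Real.exp ((n:ℝ)) = Real.exp ((n:ℝ)/2) * Real.exp ((n:ℝ)/2) := by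
        rw [← Real.exp_add]
        congr 1
        ring
      have h2n : 2*(n:ℝ) ≤ Real.exp (n:ℝ) := by
        rw [hexpn]
        have hq := mul_le_mul hhalf hhalf (by positivity) (Real.exp_nonneg _)
        nlinarith [hq, sq_nonneg ((n:ℝ)/2 - 1)]
      have h3 : 2 * Real.exp (-(n:ℝ)) ≤ 1/(n:ℝ) := by
        rw [Real.exp_neg, inv_eq_one_div, mul_one_div,
          div_le_div_iff₀ (Real.exp_pos _) hn']
        nlinarith
      linarith
    calc ∫ ω, (⨆ p : Fin n → Fin k,
          matrixL1Norm n (fun x y => blockAvg p (A ω) x y - blockAvg p Q x y)) ∂μ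
        ≤ ∫ ω, (8 * Real.sqrt (ρ * c) + Bad.indicator (fun _ => (2:ℝ)) ω) ∂μ :=
          integral_mono hεint hrhsint hpt
      _ = 8 * Real.sqrt (ρ * c) + (μ Bad).toReal * 2 := by
          rw [integral_add (integrable_const _) hindint, integral_const,
            MeasureTheory.integral_indicator_const (2:ℝ) hBadm]
          simp
          rfl
      _ ≤ 8 * Real.sqrt (ρ * c) + Real.sqrt (ρ * c) := by nlinarith
      _ = 9 * Real.sqrt (ρ * c) := by ring
  · -- trivial expectation bound
    push_neg at hnρ
    have hρc : ρ ≤ c := by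
      have : ρ < 1/(n:ℝ) := by
        rw [lt_div_iff₀ hn']
        linarith [mul_comm ρ (n:ℝ)]
      exact this.le.trans hcge
    have hAint : ∀ x y, Integrable (fun ω => A ω x y) μ := by
      intro x y
      refine integrable_bdd (hAmeas x y) 1 fun ω => ?_
      rcases hAval ω x y with h | h <;> rw [h] <;> norm_num
    have hEA : ∀ x y, ∫ ω, A ω x y ∂μ = Q x y := by
      intro x y
      rcases lt_trichotomy x y with h | h | h
      · exact bern_integral (hAmeas x y) (fun ω => hAval ω x y) (hQmem x y).1 (hAprob x y h)
      · rw [h, hQdiag]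
        simp only [hAdiag]
        exact integral_zero _ _
      · have : (fun ω => A ω x y) = (fun ω => A ω y x) := by
          funext ω
          exact hAsymm ω x y
        rw [this, hQsymm]
        exact bern_integral (hAmeas y x) (fun ω => hAval ω y x) (hQmem y x).1 (hAprob y x h)
    have hESA : ∫ ω, (∑ x, ∑ y, A ω x y) ∂μ = (n:ℝ)^2 * ρ := by
      rw [integral_finset_sum _ (fun x _ => integrable_finset_sum _ (fun y _ => hAint x y))]
      rw [← hSQ]
      refine Finset.sum_congr rfl fun x _ => ?_
      rw [integral_finset_sum _ (fun y _ => hAint x y)]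
      exact Finset.sum_congr rfl fun y _ => hEA x y
    have hSAint : Integrable (fun ω => ∑ x, ∑ y, A ω x y) μ :=
      integrable_finset_sum _ (fun x _ => integrable_finset_sum _ (fun y _ => hAint x y))
    have hgint : Integrable (fun ω => (1 / (n:ℝ)^2) *
        ((∑ x, ∑ y, A ω x y) + ∑ x, ∑ y, Q x y)) μ :=
      (hSAint.add (integrable_const _)).const_mul _
    calc ∫ ω, (⨆ p : Fin n → Fin k,
          matrixL1Norm n (fun x y => blockAvg p (A ω) x y - blockAvg p Q x y)) ∂μ
        ≤ ∫ ω, (1 / (n:ℝ)^2) * ((∑ x, ∑ y, A ω x y) + ∑ x, ∑ y, Q x y) ∂μ :=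
          integral_mono hεint hgint hdet
      _ = (1 / (n:ℝ)^2) * (((n:ℝ)^2 * ρ) + (n:ℝ)^2 * ρ) := by
          rw [integral_const_mul, integral_add hSAint (integrable_const _), integral_const,
            hESA, hSQ]
          simp
      _ = 2 * ρ := by field_simp; ring
      _ ≤ 9 * Real.sqrt (ρ * c) := by
          apply le_mul_sqrt (by positivity) (by norm_num)
          nlinarith [mul_le_mul_of_nonneg_left hρc hρ0]
end

section
/- Let W be a graphon on Λ = [-R,R]^d with the uniform probability measure, satisfying |W(x,y) − W(x',y)| ≤ C|x − x'|_∞^α and ‖W‖₁ = 1, and set D = 1 + 2C(2R)^α. Then for every p ≥ 1 and κ > 0, the oracle error ε^{(p)}_{≥κ}(W) = inf over block models W' with all class probabilities at least κ of δ_p(W, W') satisfies ε^{(p)}_{≥κ}(W) ≤ 4D·κ^{α/d}. -/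
open MeasureTheory Set

private noncomputable def idxFun (R : ℝ) (n : ℕ) (t : ℝ) : ℕ := min ⌊(t + R) / (2 * R / n)⌋₊ (n - 1)

private lemma idxFun_lt {R : ℝ} {n : ℕ} (hn : 0 < n) (t : ℝ) : idxFun R n t < n :=
  lt_of_le_of_lt (min_le_right _ _) (Nat.sub_lt hn one_pos)

private lemma idxFun_bounds {R : ℝ} (hR : 0 < R) {n : ℕ} (hn : 1 ≤ n) {t : ℝ}
    (ht : -R ≤ t) (ht' : t ≤ R) :
    -R + 2 * R / n * (idxFun R n t : ℝ) ≤ t ∧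
      t ≤ -R + 2 * R / n * (idxFun R n t : ℝ) + 2 * R / n := by
  have hn0 : (0 : ℝ) < n := by exact_mod_cast hn
  have hs : (0 : ℝ) < 2 * R / n := by positivity
  have hsn : (n : ℝ) * (2 * R / n) = 2 * R := by field_simp
  have h0 : (0 : ℝ) ≤ (t + R) / (2 * R / n) := div_nonneg (by linarith) hs.le
  by_cases hc : ⌊(t + R) / (2 * R / n)⌋₊ ≤ n - 1
  · have hmin : idxFun R n t = ⌊(t + R) / (2 * R / n)⌋₊ := min_eq_left hc
    have h1 : (⌊(t + R) / (2 * R / n)⌋₊ : ℝ) * (2 * R / n) ≤ t + R :=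
      (le_div_iff₀ hs).mp (Nat.floor_le h0)
    have h2 : t + R < ((⌊(t + R) / (2 * R / n)⌋₊ : ℝ) + 1) * (2 * R / n) :=
      (div_lt_iff₀ hs).mp (Nat.lt_floor_add_one _)
    rw [hmin]
    constructor <;> nlinarith
  · push_neg at hc
    have hm' : n ≤ ⌊(t + R) / (2 * R / n)⌋₊ := by omega
    have hmin : idxFun R n t = n - 1 := min_eq_right (by omega)
    have hle : (n : ℝ) ≤ (t + R) / (2 * R / n) := (Nat.le_floor_iff h0).mp hm'
    have hts : (n : ℝ) * (2 * R / n) ≤ t + R := (le_div_iff₀ hs).mp hle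
    have hns : (n : ℝ) * (2 * R / n) = 2 * R := by field_simp
    have htR : t = R := le_antisymm ht' (by linarith)
    have hcast : ((n - 1 : ℕ) : ℝ) = (n : ℝ) - 1 := by
      push_cast [Nat.cast_sub hn]; ring
    rw [hmin, hcast]
    constructor <;> nlinarith

private lemma idxFun_eq {R : ℝ} (hR : 0 < R) {n : ℕ} (hn : 1 ≤ n) {m : ℕ} (hm : m < n) {t : ℝ}
    (h1 : -R + 2 * R / n * (m : ℝ) ≤ t) (h2 : t < -R + 2 * R / n * ((m : ℝ) + 1)) :
    idxFun R n t = m := by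
  have hn0 : (0 : ℝ) < n := by exact_mod_cast (lt_of_lt_of_le one_pos hn : 0 < n)
  have hs : (0 : ℝ) < 2 * R / n := by positivity
  have hsn : (n : ℝ) * (2 * R / n) = 2 * R := by field_simp
  have h0 : (0 : ℝ) ≤ (t + R) / (2 * R / n) := by
    apply div_nonneg _ hs.le
    nlinarith [mul_nonneg hs.le (Nat.cast_nonneg (α := ℝ) m)]
  have hfl : ⌊(t + R) / (2 * R / n)⌋₊ = m := by
    rw [Nat.floor_eq_iff h0]
    constructor
    · rw [le_div_iff₀ hs]; nlinarith
    · rw [div_lt_iff₀ hs]; nlinarith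
  unfold idxFun
  rw [hfl]
  exact min_eq_left (by omega)

set_option maxHeartbeats 2000000 in
/-- Oracle error for an `α`-Hölder-continuous normalized graphon on the box
`[-R,R]^d` with the uniform measure: there is a block model with all class
probabilities at least `κ` and a coupling realizing `δ_p`-error at most
`4D κ^{α/d}`, where `D = 1 + 2C(2R)^α`. -/
theorem holder_graphon_oracle_error
    (d : ℕ) (hd : 1 ≤ d) (R C α : ℝ)
    (hR : 0 < R) (hα : 0 < α) (hα1 : α ≤ 1) (hC : 0 ≤ C)
    (W : (Fin d → ℝ) → (Fin d → ℝ) → ℝ)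
    (hWmeas : Measurable (fun z : (Fin d → ℝ) × (Fin d → ℝ) => W z.1 z.2))
    (hWsymm : ∀ x y, W x y = W y x) (hWnn : ∀ x y, 0 ≤ W x y)
    (hHolder : ∀ x ∈ Icc (fun _ => -R) (fun _ => R), ∀ x' ∈ Icc (fun _ => -R) (fun _ => R),
      ∀ y ∈ Icc (fun _ => -R) (fun _ => R), |W x y - W x' y| ≤ C * ‖x - x'‖ ^ α)
    -- the uniform probability measure on the box
    (μ : Measure (Fin d → ℝ))
    (hμ : μ = (volume (Icc (fun _ : Fin d => -R) (fun _ => R)))⁻¹ •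
      volume.restrict (Icc (fun _ : Fin d => -R) (fun _ => R)))
    (hWnorm : ∫ z, W z.1 z.2 ∂(μ.prod μ) = 1)
    (p κ : ℝ) (hp : 1 ≤ p) (hκ0 : 0 < κ) (hκ1 : κ ≤ 1) :
    ∃ (k : ℕ) (pv : Fin k → ℝ) (B : Fin k → Fin k → ℝ)
      (ν : Measure ((Fin d → ℝ) × Fin k)),
      0 < k ∧ (∀ i, κ ≤ pv i) ∧ (∑ i, pv i) = 1 ∧
      (∀ i j, B i j = B j i) ∧ (∀ i j, 0 ≤ B i j) ∧
      IsProbabilityMeasure ν ∧ ν.map Prod.fst = μ ∧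
      (∀ i, ν.map Prod.snd {i} = ENNReal.ofReal (pv i)) ∧
      (∫ q, |W q.1.1 q.2.1 - B q.1.2 q.2.2| ^ p ∂(ν.prod ν)) ^ (1/p) ≤
        4 * (1 + 2 * C * (2 * R) ^ α) * κ ^ (α / d) := by
  classical
  have hd0 : (0 : ℝ) < d := by exact_mod_cast hd
  -- the number of subdivisions per coordinate
  set u : ℝ := κ ^ (-(1 : ℝ) / d) with hu_def
  have hu0 : 0 < u := Real.rpow_pos_of_pos hκ0 _
  have hu1 : 1 ≤ u :=
    Real.one_le_rpow_of_pos_of_le_one_of_nonpos hκ0 hκ1 (by rw [div_nonpos_iff]; right; constructor <;> [norm_num; positivity])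
  set n : ℕ := ⌊u⌋₊ with hn_def
  have hn1 : 1 ≤ n := Nat.le_floor (by exact_mod_cast hu1)
  have hn0R : (0 : ℝ) < n := by exact_mod_cast hn1
  have hnu : (n : ℝ) ≤ u := Nat.floor_le hu0.le
  have hun : u ≤ 2 * n := by
    have := Nat.lt_floor_add_one u
    have h1 : (1 : ℝ) ≤ n := by exact_mod_cast hn1
    rw [← hn_def] at this
    linarith
  have hkey : 1 / (2 * (n : ℝ)) ≤ κ ^ ((1 : ℝ) / d) := by
    have h1 : κ ^ ((1 : ℝ) / d) = u⁻¹ := by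
      rw [hu_def, show (-(1 : ℝ) / d) = -((1 : ℝ) / d) by ring, Real.rpow_neg hκ0.le, inv_inv]
    rw [h1, one_div]
    exact inv_anti₀ hu0 hun
  have hκn : κ ≤ ((n : ℝ) ^ d)⁻¹ := by
    have h2 : u ^ d = κ⁻¹ := by
      rw [hu_def, ← Real.rpow_natCast (κ ^ (-(1 : ℝ) / d)) d, ← Real.rpow_mul hκ0.le]
      rw [show (-(1 : ℝ) / d) * d = -1 by field_simp]
      exact Real.rpow_neg_one κ
    have hle : (n : ℝ) ^ d ≤ κ⁻¹ := by
      rw [← h2]; exact pow_le_pow_left₀ (Nat.cast_nonneg n) hnu d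
    have hnd : (0 : ℝ) < (n : ℝ) ^ d := by positivity
    have h3 : κ * ((n : ℝ) ^ d) ≤ 1 := by
      have := mul_le_mul_of_nonneg_left hle hκ0.le
      rwa [mul_inv_cancel₀ hκ0.ne'] at this
    rw [← one_div]
    rw [le_div_iff₀ hnd]
    linarith
  -- the box
  set box : Set (Fin d → ℝ) := Icc (fun _ : Fin d => -R) (fun _ => R) with hbox_def
  have hboxmeas : MeasurableSet box := measurableSet_Icc
  have hvol : volume box = (ENNReal.ofReal (2 * R)) ^ d := by
    rw [hbox_def, Real.volume_Icc_pi]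
    simp only [Finset.prod_const, Finset.card_univ, Fintype.card_fin]
    norm_num
    ring_nf
    rw [ENNReal.ofReal_mul hR.le, mul_pow, ENNReal.ofReal_ofNat]
  have hvol0 : volume box ≠ 0 := by
    rw [hvol]
    exact pow_ne_zero _ (by simp [ENNReal.ofReal_eq_zero]; linarith)
  have hvoltop : volume box ≠ ⊤ := by
    rw [hvol]; exact ENNReal.pow_ne_top ENNReal.ofReal_ne_top
  have hμapp : ∀ s : Set (Fin d → ℝ), MeasurableSet s →
      μ s = (volume box)⁻¹ * volume (s ∩ box) := by
    intro s hs
    rw [hμ, Measure.smul_apply, Measure.restrict_apply hs]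
    rfl
  haveI hμprob : IsProbabilityMeasure μ := by
    constructor
    rw [hμapp univ MeasurableSet.univ, univ_inter]
    exact ENNReal.inv_mul_cancel hvol0 hvoltop
  have hae : ∀ᵐ x ∂μ, x ∈ box := by
    rw [hμ]
    exact Measure.ae_smul_measure (ae_restrict_mem hboxmeas) _
  -- membership in the box, coordinatewise
  have hmem : ∀ x ∈ box, ∀ i, -R ≤ x i ∧ x i ≤ R := by
    intro x hx i
    rw [hbox_def, Set.mem_Icc] at hx
    exact ⟨hx.1 i, hx.2 i⟩
  -- the cube assignment
  set idx : ℝ → Fin n := fun t => ⟨idxFun R n t, idxFun_lt (by omega) t⟩ with hidx_def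
  have hidxFun_meas : Measurable (idxFun R n) := by
    have h1 : Measurable fun t : ℝ => ⌊(t + R) / (2 * R / (n : ℝ))⌋₊ :=
      Nat.measurable_floor.comp ((measurable_id.add_const R).div_const _)
    exact (measurable_of_countable (fun v : ℕ => min v (n - 1))).comp h1
  have hidx : Measurable idx := by
    apply measurable_to_countable'
    intro m
    have : idx ⁻¹' {m} = idxFun R n ⁻¹' {m.val} := by
      ext t; simp [hidx_def, Fin.ext_iff]
    rw [this]
    exact hidxFun_meas (measurableSet_singleton _)
  set f : (Fin d → ℝ) → (Fin d → Fin n) := fun x i => idx (x i) with hf_def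
  set K : ℕ := n ^ d with hK_def
  have hK0 : 0 < K := pow_pos (by omega) d
  set e : (Fin d → Fin n) ≃ Fin K := finFunctionFinEquiv with he_def
  have hefn : Measurable (fun x => e (f x)) := by
    apply measurable_to_countable'
    intro a
    have : (fun x => e (f x)) ⁻¹' {a} =
        ⋂ i, (fun x : Fin d → ℝ => x i) ⁻¹' (idx ⁻¹' {e.symm a i}) := by
      ext x
      simp only [mem_preimage, mem_singleton_iff, mem_iInter, Equiv.apply_eq_iff_eq_symm_apply,
        hf_def, funext_iff]
    rw [this]
    exact MeasurableSet.iInter fun i => (measurable_pi_apply i) (hidx (measurableSet_singleton _))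
  set g : (Fin d → ℝ) → (Fin d → ℝ) × Fin K := fun x => (x, e (f x)) with hg_def
  have hg : Measurable g := measurable_id.prodMk hefn
  set ν : Measure ((Fin d → ℝ) × Fin K) := μ.map g with hν_def
  haveI hνprob : IsProbabilityMeasure ν := Measure.isProbabilityMeasure_map hg.aemeasurable
  have hfst : ν.map Prod.fst = μ := by
    rw [hν_def, Measure.map_map measurable_fst hg]
    have : (Prod.fst ∘ g) = id := rfl
    rw [this, Measure.map_id]
  have hs : (0 : ℝ) < 2 * R / n := by positivity
  have hsn : (n : ℝ) * (2 * R / n) = 2 * R := by field_simp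
  -- measure of each cell
  have hsnd : ∀ a : Fin K, ν.map Prod.snd {a} = ENNReal.ofReal (((n : ℝ) ^ d)⁻¹) := by
    intro a
    rw [hν_def, Measure.map_map measurable_snd hg]
    have hcomp : (Prod.snd ∘ g) = fun x => e (f x) := rfl
    rw [hcomp, Measure.map_apply hefn (measurableSet_singleton a)]
    set j : Fin d → Fin n := e.symm a with hj_def
    set P : Set (Fin d → ℝ) := (fun x => e (f x)) ⁻¹' {a} with hP_def
    have hPbox : P ∩ box = univ.pi (fun i => Icc (-R) R ∩ idx ⁻¹' {j i}) := by
      ext x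
      simp only [hP_def, mem_inter_iff, mem_preimage, mem_singleton_iff,
        Equiv.apply_eq_iff_eq_symm_apply, ← hj_def, funext_iff, hbox_def, Set.mem_Icc,
        Set.mem_pi, mem_univ, forall_true_left, Pi.le_def, hf_def]
      constructor
      · rintro ⟨h1, h2, h3⟩ i
        exact ⟨⟨h2 i, h3 i⟩, h1 i⟩
      · intro h
        exact ⟨fun i => (h i).2, fun i => (h i).1.1, fun i => (h i).1.2⟩
    have hLo : univ.pi (fun i : Fin d => Ico (-R + 2 * R / n * ((j i : ℕ) : ℝ))
        (-R + 2 * R / n * ((j i : ℕ) : ℝ) + 2 * R / n)) ⊆ P ∩ box := by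
      rw [hPbox]
      intro x hx
      rw [Set.mem_pi] at hx ⊢
      intro i hi
      obtain ⟨hx1, hx2⟩ := hx i hi
      have hji : ((j i : ℕ) : ℝ) + 1 ≤ n := by exact_mod_cast (j i).2
      have hidxeq : idxFun R n (x i) = (j i : ℕ) :=
        idxFun_eq hR hn1 (j i).2 hx1 (by nlinarith)
      refine ⟨⟨?_, ?_⟩, ?_⟩
      · nlinarith [mul_nonneg hs.le (Nat.cast_nonneg (α := ℝ) (j i : ℕ))]
      · nlinarith [hsn, mul_le_mul_of_nonneg_right hji hs.le]
      · simp only [mem_preimage, mem_singleton_iff, hidx_def, Fin.ext_iff, hidxeq]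
    have hHi : P ∩ box ⊆ univ.pi (fun i : Fin d => Icc (-R + 2 * R / n * ((j i : ℕ) : ℝ))
        (-R + 2 * R / n * ((j i : ℕ) : ℝ) + 2 * R / n)) := by
      rw [hPbox]
      intro x hx
      rw [Set.mem_pi] at hx ⊢
      intro i hi
      obtain ⟨⟨hx1, hx2⟩, hx3⟩ := hx i hi
      rw [mem_preimage, mem_singleton_iff, hidx_def] at hx3
      have hx3' : idxFun R n (x i) = (j i : ℕ) := by
        rw [← hx3]
      obtain ⟨hb1, hb2⟩ := idxFun_bounds hR hn1 hx1 hx2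
      rw [hx3'] at hb1 hb2
      exact ⟨hb1, hb2⟩
    have hvolpi : ∀ (F : Fin d → Set ℝ), (∀ i, volume (F i) = ENNReal.ofReal (2 * R / n)) →
        volume (univ.pi F) = (ENNReal.ofReal (2 * R / n)) ^ d := by
      intro F hF
      rw [volume_pi_pi]
      simp only [hF, Finset.prod_const, Finset.card_univ, Fintype.card_fin]
    have hvolLo : volume (univ.pi (fun i : Fin d => Ico (-R + 2 * R / n * ((j i : ℕ) : ℝ))
        (-R + 2 * R / n * ((j i : ℕ) : ℝ) + 2 * R / n))) = (ENNReal.ofReal (2 * R / n)) ^ d := by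
      apply hvolpi
      intro i
      rw [Real.volume_Ico]
      ring_nf
    have hvolHi : volume (univ.pi (fun i : Fin d => Icc (-R + 2 * R / n * ((j i : ℕ) : ℝ))
        (-R + 2 * R / n * ((j i : ℕ) : ℝ) + 2 * R / n))) = (ENNReal.ofReal (2 * R / n)) ^ d := by
      apply hvolpi
      intro i
      rw [Real.volume_Icc]
      ring_nf
    have hcellvol : volume (P ∩ box) = (ENNReal.ofReal (2 * R / n)) ^ d := by
      refine le_antisymm ?_ ?_
      · rw [← hvolHi]; exact measure_mono hHi
      · rw [← hvolLo]; exact measure_mono hLo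
    rw [hμapp P (hefn (measurableSet_singleton a)), hcellvol, hvol]
    rw [ENNReal.inv_pow, ← mul_pow, ← ENNReal.ofReal_inv_of_pos (by linarith),
      ← ENNReal.ofReal_mul (by positivity), ← ENNReal.ofReal_pow (by positivity)]
    congr 1
    rw [← inv_pow]
    congr 1
    field_simp
  -- centers of the cells
  set c : (Fin d → Fin n) → (Fin d → ℝ) :=
    fun j i => -R + 2 * R / n * ((j i : ℕ) : ℝ) + 2 * R / n / 2 with hc_def
  have hcbox : ∀ j, c j ∈ box := by
    intro j
    rw [hbox_def, Set.mem_Icc]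
    constructor <;> intro i <;> simp only [hc_def]
    · nlinarith [mul_nonneg hs.le (Nat.cast_nonneg (α := ℝ) (j i : ℕ))]
    · have hji : ((j i : ℕ) : ℝ) + 1 ≤ n := by exact_mod_cast (j i).2
      nlinarith [hsn, mul_le_mul_of_nonneg_right hji hs.le]
  have hdist : ∀ x ∈ box, ‖x - c (f x)‖ ≤ R / n := by
    intro x hx
    have hRn : (0 : ℝ) ≤ R / n := by positivity
    rw [pi_norm_le_iff_of_nonneg hRn]
    intro i
    obtain ⟨h1, h2⟩ := hmem x hx i
    obtain ⟨hb1, hb2⟩ := idxFun_bounds hR hn1 h1 h2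
    have hcfx : c (f x) i = -R + 2 * R / n * ((idxFun R n (x i) : ℕ) : ℝ) + 2 * R / n / 2 := by
      simp [hc_def, hf_def, hidx_def]
    have hhalf : 2 * R / (n : ℝ) / 2 = R / n := by ring
    rw [Pi.sub_apply, Real.norm_eq_abs, hcfx, abs_le]
    constructor <;> linarith
  -- block values
  set B : Fin K → Fin K → ℝ := fun a b => W (c (e.symm a)) (c (e.symm b)) with hB_def
  -- pointwise Holder estimate
  set M : ℝ := 2 * (C * (R / n) ^ α) with hM_def
  have hRnpos : (0 : ℝ) < R / n := by positivity
  have hM0 : 0 ≤ M := by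
    rw [hM_def]
    have := Real.rpow_nonneg hRnpos.le α
    positivity
  have hpt : ∀ x ∈ box, ∀ y ∈ box, |W x y - W (c (f x)) (c (f y))| ≤ M := by
    intro x hx y hy
    have hterm : ∀ z ∈ box, ∀ w ∈ box, |W z w - W (c (f z)) w| ≤ C * (R / n) ^ α := by
      intro z hz w hw
      calc |W z w - W (c (f z)) w| ≤ C * ‖z - c (f z)‖ ^ α :=
            hHolder z hz (c (f z)) (hcbox (f z)) w hw
        _ ≤ C * (R / n) ^ α := by
            apply mul_le_mul_of_nonneg_left _ hC
            exact Real.rpow_le_rpow (norm_nonneg _) (hdist z hz) hα.le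
    calc |W x y - W (c (f x)) (c (f y))|
        ≤ |W x y - W (c (f x)) y| + |W (c (f x)) y - W (c (f x)) (c (f y))| := by
          exact abs_sub_le _ _ _
      _ ≤ C * (R / n) ^ α + C * (R / n) ^ α := by
          apply add_le_add (hterm x hx y hy)
          rw [hWsymm (c (f x)) y, hWsymm (c (f x)) (c (f y))]
          exact hterm y hy (c (f x)) (hcbox (f x))
      _ = M := by rw [hM_def]; ring
  clear he_def
  clear_value M B c ν g e f idx K
  have hp0 : (0 : ℝ) < p := lt_of_lt_of_le one_pos hp
  -- the integral estimate
  have hGmeas : Measurable (Prod.map g g) := hg.prodMap hg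
  have hIntmeas : Measurable (fun q : ((Fin d → ℝ) × Fin K) × ((Fin d → ℝ) × Fin K) =>
      |W q.1.1 q.2.1 - B q.1.2 q.2.2| ^ p) := by
    have hW' : Measurable fun q : ((Fin d → ℝ) × Fin K) × ((Fin d → ℝ) × Fin K) =>
        W q.1.1 q.2.1 :=
      hWmeas.comp ((measurable_fst.comp measurable_fst).prodMk (measurable_fst.comp measurable_snd))
    have hB' : Measurable fun q : ((Fin d → ℝ) × Fin K) × ((Fin d → ℝ) × Fin K) =>
        B q.1.2 q.2.2 :=
      (measurable_of_countable (fun z : Fin K × Fin K => B z.1 z.2)).comp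
        ((measurable_snd.comp measurable_fst).prodMk (measurable_snd.comp measurable_snd))
    exact (Real.continuous_rpow_const hp0.le).measurable.comp (hW'.sub hB').abs
  have hprod : ν.prod ν = (μ.prod μ).map (Prod.map g g) := by
    rw [hν_def]
    exact Measure.map_prod_map μ μ hg hg
  have haeprod : ∀ᵐ z ∂(μ.prod μ), z.1 ∈ box ∧ z.2 ∈ box := by
    have h0 : μ boxᶜ = 0 := ae_iff.mp hae
    rw [ae_iff]
    have hU : μ.prod μ ((boxᶜ ×ˢ (univ : Set (Fin d → ℝ))) ∪
        ((univ : Set (Fin d → ℝ)) ×ˢ boxᶜ)) = 0 := by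
      apply measure_union_null <;> rw [Measure.prod_prod, h0] <;> simp
    refine measure_mono_null ?_ hU
    intro z hz
    simp only [mem_setOf_eq, not_and_or] at hz
    rcases hz with h | h
    · exact Or.inl ⟨h, mem_univ _⟩
    · exact Or.inr ⟨mem_univ _, h⟩
  have hIntLe : (∫ q, |W q.1.1 q.2.1 - B q.1.2 q.2.2| ^ p ∂(ν.prod ν)) ≤ M ^ p := by
    rw [hprod, integral_map hGmeas.aemeasurable hIntmeas.aestronglyMeasurable]
    have hle : (∫ z, |W (Prod.map g g z).1.1 (Prod.map g g z).2.1 -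
          B (Prod.map g g z).1.2 (Prod.map g g z).2.2| ^ p ∂(μ.prod μ)) ≤
        ∫ _, M ^ p ∂(μ.prod μ) := by
      apply integral_mono_of_nonneg
      · exact ae_of_all _ fun z => Real.rpow_nonneg (abs_nonneg _) p
      · exact integrable_const _
      · filter_upwards [haeprod] with z hz
        have hb : |W z.1 z.2 - B (e (f z.1)) (e (f z.2))| ≤ M := by
          have : B (e (f z.1)) (e (f z.2)) = W (c (f z.1)) (c (f z.2)) := by
            simp [hB_def, Equiv.symm_apply_apply]
          rw [this]
          exact hpt z.1 hz.1 z.2 hz.2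
        simp only [hg_def, Prod.map]
        exact Real.rpow_le_rpow (abs_nonneg _) hb hp0.le
    refine le_trans hle ?_
    rw [integral_const]
    simp
  -- conclusion
  refine ⟨K, fun _ => ((n : ℝ) ^ d)⁻¹, B, ν, hK0, fun _ => hκn, ?_, ?_, ?_, hνprob, hfst,
    fun i => hsnd i, ?_⟩
  · rw [Finset.sum_const, Finset.card_univ, Fintype.card_fin, hK_def, nsmul_eq_mul]
    push_cast
    exact mul_inv_cancel₀ (by positivity)
  · intro i j
    simp only [hB_def]
    exact hWsymm _ _
  · intro i j
    simp only [hB_def]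
    exact hWnn _ _
  · have hint_nonneg : 0 ≤ ∫ q, |W q.1.1 q.2.1 - B q.1.2 q.2.2| ^ p ∂(ν.prod ν) :=
      integral_nonneg fun q => Real.rpow_nonneg (abs_nonneg _) _
    have hx : (0 : ℝ) ≤ (2 * R) ^ α := Real.rpow_nonneg (by linarith) α
    have ht : (0 : ℝ) ≤ κ ^ (α / (d : ℝ)) := Real.rpow_nonneg hκ0.le _
    have hstep : (R / (n : ℝ)) ^ α ≤ (2 * R) ^ α * κ ^ (α / (d : ℝ)) := by
      have hsplit : (R / (n : ℝ)) = (2 * R) * (1 / (2 * (n : ℝ))) := by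
        field_simp
      have h2n : (0 : ℝ) ≤ 1 / (2 * (n : ℝ)) := by positivity
      have hb2 : (1 / (2 * (n : ℝ))) ^ α ≤ (κ ^ ((1 : ℝ) / d)) ^ α :=
        Real.rpow_le_rpow h2n hkey hα.le
      have hb3 : (κ ^ ((1 : ℝ) / d)) ^ α = κ ^ (α / (d : ℝ)) := by
        rw [← Real.rpow_mul hκ0.le]
        congr 1
        ring
      rw [hsplit, Real.mul_rpow (by linarith) h2n]
      exact mul_le_mul_of_nonneg_left (hb3 ▸ hb2) hx
    calc (∫ q, |W q.1.1 q.2.1 - B q.1.2 q.2.2| ^ p ∂(ν.prod ν)) ^ (1/p)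
        ≤ (M ^ p) ^ (1/p) := Real.rpow_le_rpow hint_nonneg hIntLe (by positivity)
      _ = M := by
          rw [← Real.rpow_mul hM0, mul_one_div_cancel hp0.ne', Real.rpow_one]
      _ ≤ 4 * (1 + 2 * C * (2 * R) ^ α) * κ ^ (α / d) := by
          rw [hM_def]
          have h5 : C * (R / (n : ℝ)) ^ α ≤ C * ((2 * R) ^ α * κ ^ (α / (d : ℝ))) :=
            mul_le_mul_of_nonneg_left hstep hC
          nlinarith [mul_nonneg (mul_nonneg hC hx) ht]
end

section
/- Let α ∈ (0,1), 1 ≤ p < 1/α, and g(x) = (1−α)(1−x)^{−α} on [0,1). For ε = 1/k with k a positive integer, let g' be the step function obtained by averaging g over the intervals [(i−1)/k, i/k] for i = 1,…,k−1 and setting g' = 0 on [(k−1)/k, 1]. Then ‖g − g'‖_{L^p[0,1]}^p = O(ε^{1−αp}) as ε → 0. -/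
open MeasureTheory Set

lemma aux_rpow_sub (α : ℝ) (hα1 : α ≤ 1) {u v : ℝ} (hu : 0 < u) (huv : u ≤ v) :
    u ^ (-α) - v ^ (-α) ≤ (v - u) * u ^ (-α - 1) := by
  have hv : 0 < v := lt_of_lt_of_le hu huv
  have h1 : u / v ≤ (u / v) ^ α := by
    nth_rewrite 1 [← Real.rpow_one (u / v)]
    exact Real.rpow_le_rpow_of_exponent_ge (div_pos hu hv) (div_le_one_of_le₀ huv hv.le) hα1
  have h2 : v ^ (-α) = u ^ (-α) * (u / v) ^ α := by
    rw [Real.div_rpow hu.le hv.le, ← mul_div_assoc, ← Real.rpow_add hu, neg_add_cancel,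
      Real.rpow_zero, Real.rpow_neg hv.le, one_div]
  have h3 : u ^ (-α) - v ^ (-α) ≤ u ^ (-α) * (1 - u / v) := by
    rw [h2, mul_one_sub]
    gcongr
  have h4 : u ^ (-α) * (1 - u / v) ≤ u ^ (-α) * ((v - u) / u) := by
    have : (1 - u / v) ≤ (v - u) / u := by
      rw [one_sub_div hv.ne', div_le_div_iff₀ hv hu]
      nlinarith
    exact mul_le_mul_of_nonneg_left this (Real.rpow_nonneg hu.le _)
  calc u ^ (-α) - v ^ (-α) ≤ u ^ (-α) * ((v - u) / u) := le_trans h3 h4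
    _ = (v - u) * (u ^ (-α) * u⁻¹) := by ring
    _ = (v - u) * u ^ (-α - 1) := by
        rw [← Real.rpow_neg_one u, ← Real.rpow_add hu]; ring_nf

lemma key_caseA (α p : ℝ) (hα0 : 0 < α) (hα1 : α < 1) (hp : 1 ≤ p) (k : ℕ)
    (x : ℝ) (hfl : ⌊x * (k:ℝ)⌋ + 1 < (k : ℤ)) :
    |(1 - α) * (1 - x) ^ (-α) -
        (k : ℝ) * ∫ t in Ico ((⌊x * (k:ℝ)⌋ : ℝ) / k) (((⌊x * (k:ℝ)⌋ : ℝ) + 1) / k),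
          (1 - α) * (1 - t) ^ (-α)| ^ p
      ≤ ((1 - α) * 2 ^ (α + 1) * (1 / k)) ^ p * (1 - x) ^ ((-α - 1) * p) := by
  have hk : 0 < k := by
    by_contra h
    push_neg at h
    interval_cases k
    simp at hfl
  have hK : (0:ℝ) < k := by exact_mod_cast hk
  set K : ℝ := (k : ℝ) with hKdef
  set i : ℤ := ⌊x * K⌋ with hidef
  set a : ℝ := (i : ℝ) / K with hadef
  set b : ℝ := ((i : ℝ) + 1) / K with hbdef
  set g : ℝ → ℝ := fun t => (1 - α) * (1 - t) ^ (-α) with hgdef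
  have hba : b - a = 1 / K := by rw [hadef, hbdef]; field_simp; ring
  have hax : a ≤ x := by
    rw [hadef, div_le_iff₀ hK]
    exact Int.floor_le _
  have hxb : x < b := by
    rw [hbdef, lt_div_iff₀ hK]
    exact Int.lt_floor_add_one _
  have hab : a < b := lt_of_le_of_lt hax hxb
  have hbc : b ≤ (K - 1) / K := by
    rw [hbdef]
    gcongr
    have h1 : i + 1 ≤ (k : ℤ) - 1 := by omega
    have h2 : ((i : ℝ)) + 1 ≤ ((k:ℤ) : ℝ) - 1 := by exact_mod_cast h1
    push_cast at h2 ⊢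
    linarith
  have h1b : 1 / K ≤ 1 - b := by
    have : (K - 1) / K = 1 - 1 / K := by field_simp
    rw [this] at hbc
    linarith
  have hb : 0 < 1 - b := lt_of_lt_of_le (by positivity) h1b
  have h1x : 0 < 1 - x := by linarith
  have h1a : 0 < 1 - a := by linarith
  -- continuity / integrability of g on [a, b]
  have hcont : ContinuousOn g (Icc a b) := by
    apply ContinuousOn.mul continuousOn_const
    apply ContinuousOn.rpow_const (by fun_prop)
    intro t ht
    left
    have := ht.2
    intro h
    have : t = 1 := by linarith
    linarith [this ▸ ht.2]
  have hIntIcc : IntegrableOn g (Icc a b) := hcont.integrableOn_Icc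
  have hInt : IntegrableOn g (Ico a b) := hIntIcc.mono_set Ico_subset_Icc_self
  -- monotonicity of g
  have hgmono : ∀ s t : ℝ, s ≤ t → 0 < 1 - t → g s ≤ g t := by
    intro s t hst ht
    apply mul_le_mul_of_nonneg_left _ (by linarith : (0:ℝ) ≤ 1 - α)
    exact Real.rpow_le_rpow_of_nonpos ht (by linarith) (by linarith)
  -- bounds on the average
  set m : ℝ := ∫ t in Ico a b, g t with hmdef
  have hconst : ∀ C : ℝ, ∫ _ in Ico a b, C = (b - a) * C := by
    intro C
    rw [setIntegral_const, measureReal_def, Real.volume_Ico, ENNReal.toReal_ofReal (by linarith), smul_eq_mul]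
  have hm_ub : m ≤ (b - a) * g b := by
    rw [← hconst]
    exact setIntegral_mono_on hInt (integrableOn_const (by rw [Real.volume_Ico]; exact ENNReal.ofReal_ne_top)) measurableSet_Ico
      (fun t ht => hgmono t b ht.2.le hb)
  have hm_lb : (b - a) * g a ≤ m := by
    rw [← hconst]
    exact setIntegral_mono_on (integrableOn_const (by rw [Real.volume_Ico]; exact ENNReal.ofReal_ne_top)) hInt measurableSet_Ico
      (fun t ht => hgmono a t ht.1 (by linarith [ht.2] : 0 < 1 - t))
  have hKm_ub : K * m ≤ g b := by
    have := mul_le_mul_of_nonneg_left hm_ub hK.le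
    rw [hba] at this
    calc K * m ≤ K * (1 / K * g b) := this
      _ = g b := by field_simp
  have hKm_lb : g a ≤ K * m := by
    have := mul_le_mul_of_nonneg_left hm_lb hK.le
    rw [hba] at this
    calc g a = K * (1 / K * g a) := by field_simp
      _ ≤ K * m := this
  have hgx_ub : g x ≤ g b := hgmono x b hxb.le hb
  have hgx_lb : g a ≤ g x := hgmono a x hax h1x
  have habs : |g x - K * m| ≤ g b - g a := by
    rw [abs_le]
    constructor <;> linarith
  -- bound g b - g a
  have hdiff : g b - g a ≤ (1 - α) * (1 / K * ((2:ℝ) ^ (α + 1) * (1 - x) ^ (-α - 1))) := by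
    have step1 : g b - g a = (1 - α) * ((1 - b) ^ (-α) - (1 - a) ^ (-α)) := by
      rw [hgdef]; ring
    have step2 : (1 - b) ^ (-α) - (1 - a) ^ (-α) ≤ ((1-a) - (1-b)) * (1 - b) ^ (-α - 1) :=
      aux_rpow_sub α hα1.le hb (by linarith)
    have step3 : (1 - b) ^ (-α - 1) ≤ (2:ℝ) ^ (α + 1) * (1 - x) ^ (-α - 1) := by
      have h2b : (1 - x) / 2 ≤ 1 - b := by linarith
      have e1 : (1 - b) ^ (-α - 1) ≤ ((1 - x) / 2) ^ (-α - 1) :=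
        Real.rpow_le_rpow_of_nonpos (by positivity) h2b (by linarith)
      have e2 : ((1 - x) / 2) ^ (-α - 1) = (2:ℝ) ^ (α + 1) * (1 - x) ^ (-α - 1) := by
        rw [div_eq_mul_inv, Real.mul_rpow h1x.le (by norm_num),
          Real.inv_rpow (by norm_num), ← Real.rpow_neg (by norm_num)]
        ring_nf
      linarith [e1, e2 ▸ e1]
    calc g b - g a = (1 - α) * ((1 - b) ^ (-α) - (1 - a) ^ (-α)) := step1
      _ ≤ (1 - α) * (((1-a) - (1-b)) * (1 - b) ^ (-α - 1)) :=
          mul_le_mul_of_nonneg_left step2 (by linarith)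
      _ = (1 - α) * (1 / K * (1 - b) ^ (-α - 1)) := by
          rw [show (1-a) - (1-b) = b - a by ring, hba]
      _ ≤ (1 - α) * (1 / K * ((2:ℝ) ^ (α + 1) * (1 - x) ^ (-α - 1))) := by
          apply mul_le_mul_of_nonneg_left _ (by linarith)
          exact mul_le_mul_of_nonneg_left step3 (by positivity)
  -- final rpow step
  have hM : |g x - K * m| ≤ (1 - α) * 2 ^ (α + 1) * (1 / K) * (1 - x) ^ (-α - 1) := by
    calc |g x - K * m| ≤ g b - g a := habs
      _ ≤ (1 - α) * (1 / K * ((2:ℝ) ^ (α + 1) * (1 - x) ^ (-α - 1))) := hdiff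
      _ = (1 - α) * 2 ^ (α + 1) * (1 / K) * (1 - x) ^ (-α - 1) := by ring
  have hfin : |g x - K * m| ^ p ≤ ((1 - α) * 2 ^ (α + 1) * (1 / K) * (1 - x) ^ (-α - 1)) ^ p :=
    Real.rpow_le_rpow (abs_nonneg _) hM (by linarith)
  calc |g x - K * m| ^ p ≤ ((1 - α) * 2 ^ (α + 1) * (1 / K) * (1 - x) ^ (-α - 1)) ^ p := hfin
    _ = ((1 - α) * 2 ^ (α + 1) * (1 / K)) ^ p * ((1 - x) ^ (-α - 1)) ^ p := by
        have hnn : (0:ℝ) ≤ 1 - α := by linarith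
        rw [Real.mul_rpow (by positivity) (Real.rpow_nonneg h1x.le _)]
    _ = ((1 - α) * 2 ^ (α + 1) * (1 / K)) ^ p * (1 - x) ^ ((-α - 1) * p) := by
        rw [← Real.rpow_mul h1x.le]

/-- Step-function approximation of `g(x) = (1-α)(1-x)^{-α}`:
averaging over the intervals `[(i-1)/k, i/k]` for `i = 1,…,k-1` and setting the
last interval to `0` gives `‖g - g'‖_p^p = O((1/k)^{1-αp})`. -/
theorem powerlaw_step_approx
    (α p : ℝ) (hα0 : 0 < α) (hα1 : α < 1) (hp : 1 ≤ p) (hpα : p < 1/α) :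
    ∃ C₀ : ℝ, 0 < C₀ ∧ ∀ k : ℕ, 1 ≤ k →
      (∫ x in Icc (0:ℝ) 1,
        |(1 - α) * (1 - x) ^ (-α) -
          (if ⌊x * k⌋ + 1 < (k : ℤ) then
            (k : ℝ) * ∫ t in Ico ((⌊x * k⌋ : ℝ) / k) (((⌊x * k⌋ : ℝ) + 1) / k),
              (1 - α) * (1 - t) ^ (-α)
          else 0)| ^ p) ≤
      C₀ * ((1 : ℝ) / k) ^ (1 - α * p) := by
  have hp0 : 0 < p := lt_of_lt_of_le one_pos hp
  have h1α : (0:ℝ) < 1 - α := by linarith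
  have hαp : α * p < 1 := by
    have h := (lt_div_iff₀ hα0).mp hpα
    nlinarith
  have hβ : 1 < (α + 1) * p := by nlinarith
  have hC1 : 0 < ((1 - α) * 2 ^ (α + 1)) ^ p :=
    Real.rpow_pos_of_pos (mul_pos h1α (Real.rpow_pos_of_pos two_pos _)) _
  have hB : 0 < (1 - α) ^ p := Real.rpow_pos_of_pos h1α _
  refine ⟨((1 - α) * 2 ^ (α + 1)) ^ p / ((α + 1) * p - 1) + (1 - α) ^ p / (1 - α * p),
    add_pos (div_pos hC1 (by linarith)) (div_pos hB (by linarith)), ?_⟩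
  intro k hk
  have hK : (0:ℝ) < k := by exact_mod_cast hk
  have hK1 : (1:ℝ) ≤ k := by exact_mod_cast hk
  set c : ℝ := ((k:ℝ) - 1) / k with hc
  have hc0 : 0 ≤ c := by rw [hc]; exact div_nonneg (by linarith) hK.le
  have hc1 : c < 1 := by rw [hc, div_lt_one hK]; linarith
  have h1c : 1 - c = 1 / k := by rw [hc]; field_simp; ring
  set A : ℝ := ((1 - α) * 2 ^ (α + 1) * (1 / (k:ℝ))) ^ p with hA
  have hA0 : 0 ≤ A := Real.rpow_nonneg (by positivity) _
  set G : ℝ → ℝ := fun x =>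
    if x < c then A * (1 - x) ^ ((-α - 1) * p) else (1 - α) ^ p * (1 - x) ^ (-α * p) with hG
  -- condition iff
  have hiff : ∀ x : ℝ, (⌊x * (k:ℝ)⌋ + 1 < (k:ℤ)) ↔ x < c := by
    intro x
    rw [show (⌊x * (k:ℝ)⌋ + 1 < (k:ℤ)) ↔ ⌊x * (k:ℝ)⌋ < (k:ℤ) - 1 from by omega,
      Int.floor_lt, hc, lt_div_iff₀ hK]
    push_cast
    rfl
  -- pointwise bound
  have hpt : ∀ x ∈ Icc (0:ℝ) 1,
      |(1 - α) * (1 - x) ^ (-α) -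
          (if ⌊x * k⌋ + 1 < (k : ℤ) then
            (k : ℝ) * ∫ t in Ico ((⌊x * k⌋ : ℝ) / k) (((⌊x * k⌋ : ℝ) + 1) / k),
              (1 - α) * (1 - t) ^ (-α)
          else 0)| ^ p ≤ G x := by
    rintro x ⟨hx0, hx1⟩
    by_cases hxc : x < c
    · rw [if_pos ((hiff x).mpr hxc)]
      simp only [hG]
      rw [if_pos hxc]
      exact key_caseA α p hα0 hα1 hp k x ((hiff x).mpr hxc)
    · rw [if_neg (fun h => hxc ((hiff x).mp h))]
      simp only [hG]
      rw [if_neg hxc, sub_zero,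
        abs_of_nonneg (mul_nonneg h1α.le (Real.rpow_nonneg (by linarith) _)),
        Real.mul_rpow h1α.le (Real.rpow_nonneg (by linarith) _),
        ← Real.rpow_mul (by linarith : (0:ℝ) ≤ 1 - x)]
  -- integrability of the two pieces
  have hint1 : IntegrableOn (fun x => A * (1 - x) ^ ((-α - 1) * p)) (Ico 0 c) := by
    apply IntegrableOn.mono_set _ Ico_subset_Icc_self
    apply ContinuousOn.integrableOn_Icc
    apply ContinuousOn.mul continuousOn_const
    apply ContinuousOn.rpow_const (by fun_prop)
    intro t ht
    left
    have := ht.2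
    intro h
    have : t = 1 := by linarith
    linarith [ht.2, hc1]
  have hint2 : IntegrableOn (fun x => (1 - α) ^ p * (1 - x) ^ (-α * p)) (Icc c 1) := by
    have hr : (-1:ℝ) < -α * p := by nlinarith
    have h0 : IntervalIntegrable (fun u : ℝ => u ^ (-α * p)) volume (1 - c) (1 - 1) :=
      intervalIntegral.intervalIntegrable_rpow' hr
    have h1 := h0.comp_sub_left 1
    have h1' : IntervalIntegrable (fun x : ℝ => (1 - x) ^ (-α * p)) volume c 1 := by
      simpa using h1
    have h2 : IntegrableOn (fun x : ℝ => (1 - x) ^ (-α * p)) (Ioc c 1) := by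
      have := h1'.def'
      rwa [uIoc_of_le hc1.le] at this
    have h3 : IntegrableOn (fun x : ℝ => (1 - x) ^ (-α * p)) (Icc c 1) := by
      rwa [integrableOn_Icc_iff_integrableOn_Ioc]
    exact h3.const_mul _
  have hG1 : IntegrableOn G (Ico 0 c) :=
    hint1.congr_fun (fun x hx => by simp only [hG]; rw [if_pos hx.2]) measurableSet_Ico
  have hG2 : IntegrableOn G (Icc c 1) :=
    hint2.congr_fun (fun x hx => by simp only [hG]; rw [if_neg (not_lt.mpr hx.1)]) measurableSet_Icc
  have hsplit : Ico (0:ℝ) c ∪ Icc c 1 = Icc 0 1 := Ico_union_Icc_eq_Icc hc0 hc1.le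
  have hGint : IntegrableOn G (Icc (0:ℝ) 1) := by
    rw [← hsplit]; exact hG1.union hG2
  have hdisj : Disjoint (Ico (0:ℝ) c) (Icc c 1) := by
    rw [Set.disjoint_left]
    rintro x ⟨_, h1⟩ ⟨h2, _⟩
    exact absurd h2 (not_le.mpr h1)
  -- main estimate
  have step1 :
      (∫ x in Icc (0:ℝ) 1,
        |(1 - α) * (1 - x) ^ (-α) -
          (if ⌊x * k⌋ + 1 < (k : ℤ) then
            (k : ℝ) * ∫ t in Ico ((⌊x * k⌋ : ℝ) / k) (((⌊x * k⌋ : ℝ) + 1) / k),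
              (1 - α) * (1 - t) ^ (-α)
          else 0)| ^ p) ≤ ∫ x in Icc (0:ℝ) 1, G x := by
    apply integral_mono_of_nonneg
    · exact Filter.Eventually.of_forall (fun x => Real.rpow_nonneg (abs_nonneg _) _)
    · exact hGint
    · exact (ae_restrict_iff' measurableSet_Icc).mpr (Filter.Eventually.of_forall hpt)
  -- compute/bound ∫ G
  have hsplitInt : ∫ x in Icc (0:ℝ) 1, G x =
      (∫ x in Ico (0:ℝ) c, A * (1 - x) ^ ((-α - 1) * p)) +
      (∫ x in Icc c 1, (1 - α) ^ p * (1 - x) ^ (-α * p)) := by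
    rw [← hsplit, setIntegral_union hdisj measurableSet_Icc hG1 hG2,
      setIntegral_congr_fun measurableSet_Ico (fun x hx => by simp only [hG]; rw [if_pos hx.2]),
      setIntegral_congr_fun measurableSet_Icc
        (fun x hx => by simp only [hG]; rw [if_neg (not_lt.mpr hx.1)])]
  have hval1 : (∫ x in Ico (0:ℝ) c, A * (1 - x) ^ ((-α - 1) * p)) ≤
      ((1 - α) * 2 ^ (α + 1)) ^ p / ((α + 1) * p - 1) * ((1:ℝ) / k) ^ (1 - α * p) := by
    have hr1 : (-α - 1) * p < -1 := by nlinarith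
    have hs0 : (-α - 1) * p + 1 < 0 := by linarith
    have h1cpos : (0:ℝ) < 1 - c := by linarith
    have hcomp : (∫ x in Ico (0:ℝ) c, (1 - x) ^ ((-α - 1) * p)) =
        ((1:ℝ) ^ ((-α - 1) * p + 1) - (1 - c) ^ ((-α - 1) * p + 1)) / ((-α - 1) * p + 1) := by
      rw [setIntegral_congr_set Ico_ae_eq_Ioc, ← intervalIntegral.integral_of_le hc0,
        intervalIntegral.integral_comp_sub_left (fun u : ℝ => u ^ ((-α - 1) * p)) 1,
        integral_rpow (Or.inr ⟨hr1.ne, notMem_uIcc_of_lt h1cpos (by norm_num)⟩)]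
      norm_num
    rw [integral_const_mul, hcomp, Real.one_rpow, h1c]
    have htpos : (0:ℝ) < 1 / (k:ℝ) := by positivity
    have hXY : ((1:ℝ)/k) ^ p * ((1:ℝ)/k) ^ ((-α - 1) * p + 1) = ((1:ℝ)/k) ^ (1 - α * p) := by
      rw [← Real.rpow_add htpos]
      ring_nf
    have hAsplit : A = ((1 - α) * 2 ^ (α + 1)) ^ p * ((1:ℝ)/k) ^ p := by
      rw [hA, Real.mul_rpow (by positivity) htpos.le]
    have hX1 : (0:ℝ) ≤ ((1:ℝ)/k) ^ ((-α - 1) * p + 1) := Real.rpow_nonneg htpos.le _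
    have hC1Y : (0:ℝ) ≤ ((1 - α) * 2 ^ (α + 1)) ^ p * ((1:ℝ)/k) ^ p :=
      mul_nonneg hC1.le (Real.rpow_nonneg htpos.le _)
    calc A * ((1 - ((1:ℝ)/k) ^ ((-α - 1) * p + 1)) / ((-α - 1) * p + 1))
        = ((1 - α) * 2 ^ (α + 1)) ^ p * ((1:ℝ)/k) ^ p *
          (((((1:ℝ)/k) ^ ((-α - 1) * p + 1)) - 1) / (-((-α - 1) * p + 1))) := by
          rw [hAsplit]
          rw [mul_assoc, mul_assoc]
          congr 1
          congr 1
          rw [div_eq_div_iff hs0.ne (by linarith : -((-α - 1) * p + 1) ≠ 0)]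
          ring
      _ ≤ ((1 - α) * 2 ^ (α + 1)) ^ p * ((1:ℝ)/k) ^ p *
          ((((1:ℝ)/k) ^ ((-α - 1) * p + 1)) / (-((-α - 1) * p + 1))) := by
          apply mul_le_mul_of_nonneg_left _ hC1Y
          exact div_le_div_of_nonneg_right (by linarith) (by linarith)
      _ = ((1 - α) * 2 ^ (α + 1)) ^ p / ((α + 1) * p - 1) * ((1:ℝ)/k) ^ (1 - α * p) := by
          rw [← hXY]; ring
  have hval2 : (∫ x in Icc c 1, (1 - α) ^ p * (1 - x) ^ (-α * p)) ≤
      (1 - α) ^ p / (1 - α * p) * ((1:ℝ)/k) ^ (1 - α * p) := by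
    have hr : (-1:ℝ) < -α * p := by nlinarith
    have hcomp : (∫ x in Icc c 1, (1 - x) ^ (-α * p)) =
        ((1 - c) ^ (-α * p + 1) - (1 - 1) ^ (-α * p + 1)) / (-α * p + 1) := by
      rw [integral_Icc_eq_integral_Ioc, ← intervalIntegral.integral_of_le hc1.le,
        intervalIntegral.integral_comp_sub_left (fun u : ℝ => u ^ (-α * p)) 1,
        integral_rpow (Or.inl hr)]
    rw [integral_const_mul, hcomp, h1c]
    rw [show ((1:ℝ) - 1) ^ (-α * p + 1) = 0 from by
      rw [sub_self, Real.zero_rpow (by nlinarith)], sub_zero,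
      show -α * p + 1 = 1 - α * p from by ring]
    exact le_of_eq (by ring)
  refine le_trans step1 ?_
  rw [hsplitInt]
  calc (∫ x in Ico (0:ℝ) c, A * (1 - x) ^ ((-α - 1) * p)) +
        (∫ x in Icc c 1, (1 - α) ^ p * (1 - x) ^ (-α * p))
      ≤ ((1 - α) * 2 ^ (α + 1)) ^ p / ((α + 1) * p - 1) * ((1:ℝ) / k) ^ (1 - α * p) +
        (1 - α) ^ p / (1 - α * p) * ((1:ℝ)/k) ^ (1 - α * p) := add_le_add hval1 hval2
    _ = (((1 - α) * 2 ^ (α + 1)) ^ p / ((α + 1) * p - 1) + (1 - α) ^ p / (1 - α * p)) *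
        ((1:ℝ)/k) ^ (1 - α * p) := by ring
end

section
/- Let α ∈ (0,1), 1 ≤ p < 1/α, and let W(x,y) = (g(x)+g(y))/2 on [0,1]² with g(x) = (1−α)(1−x)^{−α}. Define tail_ρ^{(p)}(W) = ‖W − min{W,1/ρ}‖_p. Then tail_ρ^{(p)}(W) = O(ρ^{(1−pα)/(pα)}) as ρ → 0⁺. -/
open MeasureTheory Set

private lemma half_rpow_le {u v q : ℝ} (hu : 0 ≤ u) (hv : 0 ≤ v) (hq : 1 ≤ q) :
    ((u + v) / 2) ^ q ≤ (u ^ q + v ^ q) / 2 := by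
  have h := Real.rpow_arith_mean_le_arith_mean_rpow (Finset.univ : Finset (Fin 2))
      ![1/2, 1/2] ![u, v] (by intro i _; fin_cases i <;> norm_num)
      (by simp [Fin.sum_univ_succ]; norm_num) (by intro i _; fin_cases i <;> assumption) hq
  have e1 : (2⁻¹:ℝ) * u + 2⁻¹ * v = (u + v) / 2 := by ring
  have e2 : (2⁻¹:ℝ) * u ^ q + 2⁻¹ * v ^ q = (u ^ q + v ^ q) / 2 := by ring
  simp only [Fin.sum_univ_succ] at h; simpa [e1, e2] using h

/-- Tail bound for the power-law graphon `W(x,y) = (g(x)+g(y))/2` with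
`g(x) = (1-α)(1-x)^{-α}`: `tail_ρ^{(p)}(W) = O(ρ^{(1-pα)/(pα)})` as `ρ → 0⁺`. -/
theorem powerlaw_sum_tail_bound
    (α p : ℝ) (hα0 : 0 < α) (hα1 : α < 1) (hp : 1 ≤ p) (hpα : p < 1/α) :
    ∃ C₀ ρ₀ : ℝ, 0 < C₀ ∧ 0 < ρ₀ ∧ ∀ ρ : ℝ, 0 < ρ → ρ ≤ ρ₀ →
      (∫ x in Icc (0:ℝ) 1, ∫ y in Icc (0:ℝ) 1,
        |((1 - α) * (1 - x) ^ (-α) + (1 - α) * (1 - y) ^ (-α)) / 2 -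
          min (((1 - α) * (1 - x) ^ (-α) + (1 - α) * (1 - y) ^ (-α)) / 2) (1/ρ)| ^ p)
        ^ (1/p) ≤
      C₀ * ρ ^ ((1 - p * α) / (p * α)) := by
  have hα : (0:ℝ) < 1 - α := by linarith
  have hp0 : (0:ℝ) < p := lt_of_lt_of_le one_pos hp
  have hpα1 : p * α < 1 := by
    have := (lt_div_iff₀ hα0).mp hpα
    linarith
  have h1pα : (0:ℝ) < 1 - p * α := by linarith
  have hr : (-1:ℝ) < -(p * α) := by linarith
  set K : ℝ := (1 - α) ^ p * (1 - α) ^ ((1 - p * α) / α) / (1 - p * α) with hK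
  have hKpos : 0 < K := by
    apply div_pos (mul_pos (Real.rpow_pos_of_pos hα p) (Real.rpow_pos_of_pos hα _)) h1pα
  refine ⟨K ^ (1/p), 1, Real.rpow_pos_of_pos hKpos _, one_pos, ?_⟩
  intro ρ hρ hρ1
  set M : ℝ := 1 / ρ with hM
  have hM0 : 0 ≤ M := by positivity
  set δ : ℝ := ((1 - α) * ρ) ^ (1 / α) with hδ
  have hδ0 : 0 ≤ δ := Real.rpow_nonneg (by positivity) _
  have hδ1 : δ ≤ 1 := by
    apply Real.rpow_le_one (by positivity) (by nlinarith) (by positivity)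
  set f : ℝ → ℝ := fun t => (1 - α) * (1 - t) ^ (-α) with hf
  set G : ℝ → ℝ := fun t => max (f t - M) 0 with hG
  set fp : ℝ → ℝ := fun t => (1 - α) ^ p * (1 - t) ^ (-(p * α)) with hfp
  have hf_nonneg : ∀ t ∈ Icc (0:ℝ) 1, 0 ≤ f t := fun t ht => by
    have : (0:ℝ) ≤ 1 - t := by linarith [ht.2]
    positivity
  have hG_nonneg : ∀ t, 0 ≤ G t := fun t => le_max_right _ _
  have hfpow : ∀ t ∈ Icc (0:ℝ) 1, f t ^ p = fp t := by
    intro t ht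
    have h1t : (0:ℝ) ≤ 1 - t := by linarith [ht.2]
    have h2 : ((1 - t) ^ (-α)) ^ p = (1 - t) ^ (-(p * α)) := by
      rw [← Real.rpow_mul h1t]
      congr 1
      ring
    simp only [hf, hfp]
    rw [Real.mul_rpow hα.le (Real.rpow_nonneg h1t _), h2]
  -- integrability of fp on Icc 0 1
  have hfp_int : IntegrableOn fp (Icc (0:ℝ) 1) volume := by
    have h1 : IntervalIntegrable (fun x : ℝ => x ^ (-(p * α))) volume 0 1 :=
      intervalIntegral.intervalIntegrable_rpow' hr
    have h2 := h1.comp_sub_left 1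
    simp only [sub_zero, sub_self] at h2
    have h3 : IntervalIntegrable (fun x : ℝ => (1 - x) ^ (-(p * α))) volume 0 1 := h2.symm
    have h4 := (intervalIntegrable_iff_integrableOn_Icc_of_le (by norm_num : (0:ℝ) ≤ 1)).mp h3
    exact h4.const_mul _
  -- measurability of G^p
  have hf_meas : Measurable f := by
    apply Measurable.const_mul
    exact (measurable_const.sub measurable_id).pow measurable_const
  have hGp_meas : Measurable fun t => G t ^ p :=
    ((hf_meas.sub measurable_const).max measurable_const).pow measurable_const
  -- G^p ≤ fp on Icc
  have hGle : ∀ t ∈ Icc (0:ℝ) 1, G t ^ p ≤ fp t := by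
    intro t ht
    have h1 : G t ≤ f t := max_le (by linarith [hf_nonneg t ht]) (hf_nonneg t ht)
    calc G t ^ p ≤ f t ^ p := Real.rpow_le_rpow (hG_nonneg t) h1 hp0.le
    _ = fp t := hfpow t ht
  -- integrability of G^p on Icc 0 1
  have hGp_int : IntegrableOn (fun t => G t ^ p) (Icc (0:ℝ) 1) volume := by
    apply hfp_int.mono' hGp_meas.aestronglyMeasurable
    filter_upwards [self_mem_ae_restrict (measurableSet_Icc : MeasurableSet (Icc (0:ℝ) 1))]
      with t ht
    rw [Real.norm_eq_abs, abs_of_nonneg (Real.rpow_nonneg (hG_nonneg t) _)]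
    exact hGle t ht
  set I : ℝ := ∫ t in Icc (0:ℝ) 1, G t ^ p with hI
  have hI_nonneg : 0 ≤ I :=
    setIntegral_nonneg measurableSet_Icc fun t _ => Real.rpow_nonneg (hG_nonneg t) _
  -- G^p vanishes below 1 - δ, so I ≤ ∫_{[1-δ,1]} fp
  have hGzero : ∀ t ∈ Icc (0:ℝ) 1, t < 1 - δ → G t = 0 := by
    intro t ht htδ
    have h1t : (0:ℝ) ≤ 1 - t := by linarith [ht.2]
    have hδlt : δ < 1 - t := by linarith
    have hpow : δ ^ α < (1 - t) ^ α := Real.rpow_lt_rpow hδ0 hδlt hα0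
    have hδα : δ ^ α = (1 - α) * ρ := by
      rw [hδ, ← Real.rpow_mul (by positivity), one_div, inv_mul_cancel₀ hα0.ne',
        Real.rpow_one]
    have h1tpos : 0 < (1 - t) ^ α := by
      rw [hδα] at hpow
      nlinarith
    have hflt : f t < M := by
      rw [hδα] at hpow
      have hfeq : f t = (1 - α) / (1 - t) ^ α := by
        simp only [hf]
        rw [Real.rpow_neg h1t, div_eq_mul_inv]
      rw [hfeq, hM, div_lt_div_iff₀ h1tpos hρ]
      nlinarith
    simp only [hG]
    exact max_eq_right (by linarith)
  have hindic : ∀ t ∈ Icc (0:ℝ) 1, G t ^ p ≤ (Icc (1 - δ) 1).indicator fp t := by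
    intro t ht
    by_cases hmem : t ∈ Icc (1 - δ) 1
    · rw [indicator_of_mem hmem]
      exact hGle t ht
    · rw [indicator_of_notMem hmem]
      have htlt : t < 1 - δ := by
        rcases lt_or_ge t (1 - δ) with h | h
        · exact h
        · exact absurd ⟨h, ht.2⟩ hmem
      rw [hGzero t ht htlt, Real.zero_rpow hp0.ne']
  have hIbound : I ≤ ∫ t in Icc (1 - δ) 1, fp t := by
    have h1 : I ≤ ∫ t in Icc (0:ℝ) 1, (Icc (1 - δ) 1).indicator fp t := by
      apply setIntegral_mono_on hGp_int (hfp_int.indicator measurableSet_Icc)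
        measurableSet_Icc hindic
    have h2 : ∫ t in Icc (0:ℝ) 1, (Icc (1 - δ) 1).indicator fp t
        = ∫ t in Icc (0:ℝ) 1 ∩ Icc (1 - δ) 1, fp t := by
      rw [setIntegral_indicator measurableSet_Icc]
    have h3 : Icc (0:ℝ) 1 ∩ Icc (1 - δ) 1 = Icc (1 - δ) 1 := by
      apply inter_eq_self_of_subset_right
      intro t htt
      exact ⟨by linarith [htt.1, hδ1], htt.2⟩
    rw [h2, h3] at h1
    exact h1
  -- exact value of ∫_{[1-δ,1]} fp
  have hJ : ∫ t in Icc (1 - δ) 1, fp t = (1 - α) ^ p * (δ ^ (1 - p * α) / (1 - p * α)) := by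
    rw [integral_Icc_eq_integral_Ioc,
      ← intervalIntegral.integral_of_le (by linarith : 1 - δ ≤ (1:ℝ))]
    rw [intervalIntegral.integral_const_mul]
    have h1 : (∫ x in (1 - δ:ℝ)..1, (1 - x) ^ (-(p * α)))
        = ∫ x in (1 - 1 : ℝ)..(1 - (1 - δ)), x ^ (-(p * α)) :=
      intervalIntegral.integral_comp_sub_left (fun x => x ^ (-(p * α))) 1
    rw [h1]
    have h2 : (1 - 1 : ℝ) = 0 := by ring
    have h3 : (1 - (1 - δ) : ℝ) = δ := by ring
    rw [h2, h3, integral_rpow (Or.inl hr)]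
    rw [Real.zero_rpow (by linarith : -(p * α) + 1 ≠ 0)]
    have h4 : -(p * α) + 1 = 1 - p * α := by ring
    rw [h4, sub_zero]
  -- the pointwise bound for the double integral
  have hptwise : ∀ x ∈ Icc (0:ℝ) 1, ∀ y ∈ Icc (0:ℝ) 1,
      |((1 - α) * (1 - x) ^ (-α) + (1 - α) * (1 - y) ^ (-α)) / 2 -
        min (((1 - α) * (1 - x) ^ (-α) + (1 - α) * (1 - y) ^ (-α)) / 2) (1/ρ)| ^ p
      ≤ (G x ^ p + G y ^ p) / 2 := by
    intro x hx y hy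
    set W : ℝ := ((1 - α) * (1 - x) ^ (-α) + (1 - α) * (1 - y) ^ (-α)) / 2 with hW
    have hWf : W = (f x + f y) / 2 := rfl
    have habs : |W - min W (1/ρ)| = max (W - M) 0 := by
      rw [← hM]
      rcases le_total W M with h | h
      · rw [min_eq_left h, sub_self, max_eq_right (by linarith), abs_zero]
      · rw [min_eq_right h, max_eq_left (by linarith), abs_of_nonneg (by linarith)]
    rw [habs]
    have hle : max (W - M) 0 ≤ (G x + G y) / 2 := by
      apply max_le
      · have h1 : f x - M ≤ G x := le_max_left _ _
        have h2 : f y - M ≤ G y := le_max_left _ _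
        rw [hWf]
        have : (f x + f y) / 2 - M = ((f x - M) + (f y - M)) / 2 := by ring
        rw [this]
        linarith
      · have := hG_nonneg x
        have := hG_nonneg y
        linarith
    calc (max (W - M) 0) ^ p ≤ ((G x + G y) / 2) ^ p :=
          Real.rpow_le_rpow (le_max_right _ _) hle hp0.le
      _ ≤ (G x ^ p + G y ^ p) / 2 := half_rpow_le (hG_nonneg x) (hG_nonneg y) hp
  -- inner integral bound
  have hvol : (volume (Icc (0:ℝ) 1)).toReal = 1 := by
    rw [Real.volume_Icc]
    norm_num
  have hinner : ∀ x ∈ Icc (0:ℝ) 1,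
      (∫ y in Icc (0:ℝ) 1,
        |((1 - α) * (1 - x) ^ (-α) + (1 - α) * (1 - y) ^ (-α)) / 2 -
          min (((1 - α) * (1 - x) ^ (-α) + (1 - α) * (1 - y) ^ (-α)) / 2) (1/ρ)| ^ p)
      ≤ (G x ^ p + I) / 2 := by
    intro x hx
    have hgint : Integrable (fun y => (G x ^ p + G y ^ p) / 2)
        (volume.restrict (Icc (0:ℝ) 1)) := by
      exact ((integrable_const _).add hGp_int).div_const 2
    have h1 := integral_mono_of_nonneg
      (f := fun y => |((1 - α) * (1 - x) ^ (-α) + (1 - α) * (1 - y) ^ (-α)) / 2 -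
          min (((1 - α) * (1 - x) ^ (-α) + (1 - α) * (1 - y) ^ (-α)) / 2) (1/ρ)| ^ p)
      (g := fun y => (G x ^ p + G y ^ p) / 2)
      (Filter.Eventually.of_forall fun y => Real.rpow_nonneg (abs_nonneg _) _) hgint ?_
    · refine h1.trans (le_of_eq ?_)
      rw [integral_div, integral_add (integrable_const _) hGp_int, setIntegral_const, measureReal_def, hvol,
        smul_eq_mul, one_mul, ← hI]
    · filter_upwards [self_mem_ae_restrict (measurableSet_Icc : MeasurableSet (Icc (0:ℝ) 1))]
        with y hy
      exact hptwise x hx y hy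
  -- outer integral bound
  have houter : (∫ x in Icc (0:ℝ) 1, ∫ y in Icc (0:ℝ) 1,
        |((1 - α) * (1 - x) ^ (-α) + (1 - α) * (1 - y) ^ (-α)) / 2 -
          min (((1 - α) * (1 - x) ^ (-α) + (1 - α) * (1 - y) ^ (-α)) / 2) (1/ρ)| ^ p)
      ≤ I := by
    have hgint : Integrable (fun x => (G x ^ p + I) / 2)
        (volume.restrict (Icc (0:ℝ) 1)) := (hGp_int.add (integrable_const _)).div_const 2
    have h1 := integral_mono_of_nonneg
      (f := fun x => ∫ y in Icc (0:ℝ) 1,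
        |((1 - α) * (1 - x) ^ (-α) + (1 - α) * (1 - y) ^ (-α)) / 2 -
          min (((1 - α) * (1 - x) ^ (-α) + (1 - α) * (1 - y) ^ (-α)) / 2) (1/ρ)| ^ p)
      (g := fun x => (G x ^ p + I) / 2)
      (Filter.Eventually.of_forall fun x => setIntegral_nonneg measurableSet_Icc
        fun y _ => Real.rpow_nonneg (abs_nonneg _) _) hgint ?_
    · refine h1.trans (le_of_eq ?_)
      rw [integral_div, integral_add hGp_int (integrable_const _), setIntegral_const, measureReal_def, hvol,
        smul_eq_mul, one_mul, ← hI]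
      ring
    · filter_upwards [self_mem_ae_restrict (measurableSet_Icc : MeasurableSet (Icc (0:ℝ) 1))]
        with x hx
      exact hinner x hx
  -- combine
  have hδpow : δ ^ (1 - p * α) = (1 - α) ^ ((1 - p * α) / α) * ρ ^ ((1 - p * α) / α) := by
    rw [hδ, ← Real.rpow_mul (by positivity)]
    have h1 : 1 / α * (1 - p * α) = (1 - p * α) / α := by
      field_simp
    rw [h1, Real.mul_rpow hα.le hρ.le]
  have hfinal : (∫ x in Icc (0:ℝ) 1, ∫ y in Icc (0:ℝ) 1,
        |((1 - α) * (1 - x) ^ (-α) + (1 - α) * (1 - y) ^ (-α)) / 2 -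
          min (((1 - α) * (1 - x) ^ (-α) + (1 - α) * (1 - y) ^ (-α)) / 2) (1/ρ)| ^ p)
      ≤ K * ρ ^ ((1 - p * α) / α) := by
    refine houter.trans (hIbound.trans ?_)
    rw [hJ, hδpow, hK]
    ring_nf
    exact le_refl _
  have hLHS_nonneg : 0 ≤ ∫ x in Icc (0:ℝ) 1, ∫ y in Icc (0:ℝ) 1,
        |((1 - α) * (1 - x) ^ (-α) + (1 - α) * (1 - y) ^ (-α)) / 2 -
          min (((1 - α) * (1 - x) ^ (-α) + (1 - α) * (1 - y) ^ (-α)) / 2) (1/ρ)| ^ p :=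
    setIntegral_nonneg measurableSet_Icc fun x _ =>
      setIntegral_nonneg measurableSet_Icc fun y _ => Real.rpow_nonneg (abs_nonneg _) _
  calc (∫ x in Icc (0:ℝ) 1, ∫ y in Icc (0:ℝ) 1,
        |((1 - α) * (1 - x) ^ (-α) + (1 - α) * (1 - y) ^ (-α)) / 2 -
          min (((1 - α) * (1 - x) ^ (-α) + (1 - α) * (1 - y) ^ (-α)) / 2) (1/ρ)| ^ p) ^ (1/p)
      ≤ (K * ρ ^ ((1 - p * α) / α)) ^ (1/p) :=
        Real.rpow_le_rpow hLHS_nonneg hfinal (by positivity)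
    _ = K ^ (1/p) * ρ ^ ((1 - p * α) / (p * α)) := by
        rw [Real.mul_rpow hKpos.le (Real.rpow_nonneg hρ.le _),
          ← Real.rpow_mul hρ.le]
        congr 1
        rw [div_mul_div_comm, mul_one, mul_comm α p]
end
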